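/- arXiv:1111.5467 — 10 statements merged into one kernel-verified Lean document; each statement's English description precedes it below -/
import Mathlib

section
/- Let W = {w_1, …, w_k} be an independent set with range R of a locally strongly transitive automaton 𝒜 = ⟨Q, A, δ⟩. Then for every subset P of R, the sum over i = 1, …, k of Card(P w_i^{-1} ∩ R) equals k · Card(P). -/
/-- The extension of a transition function `δ : Q → A → Q` to words. -/
def run {Q A : Type*} (δ : Q → A → Q) (q : Q) (u : List A) : Q := u.foldl δ q

/-- `W` is an independent set of words with range `R`. -/
def IsIndependent {Q A : Type*} [DecidableEq Q] (δ : Q → A → Q)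
    (W : Finset (List A)) (R : Finset Q) : Prop :=
  W.card = R.card ∧ ∀ s : Q, W.image (fun w => run δ s w) = R

/-- If `W = {w_1, …, w_k}` is an independent set with range `R`, then for every
subset `P` of `R` one has `∑_{i=1}^{k} Card(P w_i^{-1} ∩ R) = k · Card(P)`. -/
theorem stmt_1 {Q A : Type*} [Fintype Q] [DecidableEq Q] [Fintype A]
    (δ : Q → A → Q) (W : Finset (List A)) (R : Finset Q) (k : ℕ)
    (hW : IsIndependent δ W R) (hk : W.card = k)
    (P : Finset Q) (hP : P ⊆ R) :
    ∑ w ∈ W, (R.filter (fun q => run δ q w ∈ P)).card = k * P.card := by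
  obtain ⟨hcard, himg⟩ := hW
  have key : ∀ q ∈ R, (W.filter (fun w => run δ q w ∈ P)).card = P.card := by
    intro q _
    have hinj : Set.InjOn (fun w => run δ q w) W := by
      apply Finset.injOn_of_card_image_eq
      rw [himg q, hcard]
    have himg2 : (W.filter (fun w => run δ q w ∈ P)).image (fun w => run δ q w) = P := by
      ext x
      simp only [Finset.mem_image, Finset.mem_filter]
      constructor
      · rintro ⟨w, ⟨_, hp⟩, rfl⟩; exact hp
      · intro hx
        have hxR : x ∈ W.image (fun w => run δ q w) := by rw [himg q]; exact hP hx
        obtain ⟨w, hw, rfl⟩ := Finset.mem_image.mp hxR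
        exact ⟨w, ⟨hw, hx⟩, rfl⟩
    calc (W.filter (fun w => run δ q w ∈ P)).card
        = ((W.filter (fun w => run δ q w ∈ P)).image (fun w => run δ q w)).card :=
          (Finset.card_image_of_injOn
            (hinj.mono (Finset.coe_subset.mpr (Finset.filter_subset _ _)))).symm
      _ = P.card := by rw [himg2]
  have hswap : ∑ w ∈ W, (R.filter (fun q => run δ q w ∈ P)).card
      = ∑ q ∈ R, (W.filter (fun w => run δ q w ∈ P)).card := by
    simp_rw [Finset.card_filter]
    exact Finset.sum_comm
  rw [hswap, Finset.sum_congr rfl key, Finset.sum_const, ← hcard, hk, smul_eq_mul]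
end

section
/- Let 𝒜 = ⟨Q, A, δ⟩ be an automaton with an independent set W with range R, and let M be the maximal cardinality of a reducible subset of R. For every non-empty reducible subset K of R, the following four conditions are equivalent: (1) Card(K) = M; (2) for all w ∈ W and all v ∈ A*, Card(K(vw)^{-1} ∩ R) ≤ Card(K); (3) for all w ∈ W and all v ∈ A*, Card(K(vw)^{-1} ∩ R) = Card(K); (4) K is a maximal reducible subset of R, i.e., every reducible subset of R containing K equals K. -/
/-- A set of states `K` is reducible if some word maps it to a singleton. -/
def Reducible {Q A : Type*} [DecidableEq Q] (δ : Q → A → Q) (K : Finset Q) : Prop :=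
  ∃ (v : List A) (q : Q), K.image (fun p => run δ p v) = {q}

section Aux

variable {Q A : Type*} [DecidableEq Q] {δ : Q → A → Q} {W : Finset (List A)} {R : Finset Q}

omit [DecidableEq Q] in
lemma run_append (δ : Q → A → Q) (q : Q) (u v : List A) :
    run δ q (u ++ v) = run δ (run δ q u) v := by
  simp [run, List.foldl_append]

lemma run_mem_range (hW : IsIndependent δ W R) {w : List A} (hw : w ∈ W) (s : Q) :
    run δ s w ∈ R := by
  rw [← hW.2 s]; exact Finset.mem_image_of_mem _ hw

lemma exists_word (hW : IsIndependent δ W R) (s : Q) {r : Q} (hr : r ∈ R) :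
    ∃ w ∈ W, run δ s w = r := by
  rw [← hW.2 s] at hr
  simpa using hr

lemma forall_of_image_singleton {K : Finset Q} {u : List A} {q : Q}
    (h : K.image (fun p => run δ p u) = {q}) : ∀ r ∈ K, run δ r u = q := by
  intro r hr
  have := Finset.mem_image_of_mem (fun p => run δ p u) hr
  rw [h, Finset.mem_singleton] at this
  exact this

lemma reducible_of_forall {S : Finset Q} (hS : S.Nonempty) (z : List A) (t : Q)
    (h : ∀ r ∈ S, run δ r z = t) : Reducible δ S := by
  refine ⟨z, t, ?_⟩
  ext x
  simp only [Finset.mem_image, Finset.mem_singleton]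
  constructor
  · rintro ⟨r, hr, rfl⟩; exact h r hr
  · rintro rfl; obtain ⟨r, hr⟩ := hS; exact ⟨r, hr, h r hr⟩

/-- For every state `s` and every `S ⊆ R`, exactly `S.card` words of `W` send `s` into `S`. -/
lemma count_filter (hW : IsIndependent δ W R) (s : Q) {S : Finset Q} (hSR : S ⊆ R) :
    (W.filter (fun w => run δ s w ∈ S)).card = S.card := by
  have hinj : Set.InjOn (fun w => run δ s w) ↑W := by
    apply Finset.injOn_of_card_image_eq
    rw [hW.2 s, hW.1]
  have himg : (W.filter (fun w => run δ s w ∈ S)).image (fun w => run δ s w) = S := by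
    ext x
    simp only [Finset.mem_image, Finset.mem_filter]
    constructor
    · rintro ⟨w, ⟨hwW, hx⟩, rfl⟩; exact hx
    · intro hx
      obtain ⟨w, hw, hwx⟩ := exists_word hW s (hSR hx)
      exact ⟨w, ⟨hw, hwx ▸ hx⟩, hwx⟩
  calc (W.filter (fun w => run δ s w ∈ S)).card
      = ((W.filter (fun w => run δ s w ∈ S)).image (fun w => run δ s w)).card := by
        rw [Finset.card_image_of_injOn
          (hinj.mono (Finset.coe_subset.mpr (Finset.filter_subset _ _)))]
    _ = S.card := by rw [himg]

/-- Double counting: summed over `w ∈ W`, the cardinalities of the sets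
`K (vw)⁻¹ ∩ R` total `W.card * S.card`. -/
lemma sum_cards (hW : IsIndependent δ W R) (v : List A) {S : Finset Q} (hSR : S ⊆ R) :
    ∑ w ∈ W, (R.filter (fun q => run δ q (v ++ w) ∈ S)).card = W.card * S.card := by
  have h1 : ∀ w ∈ W, (R.filter (fun q => run δ q (v ++ w) ∈ S)).card
      = ∑ r ∈ R, if run δ r (v ++ w) ∈ S then 1 else 0 := fun w _ => Finset.card_filter _ _
  rw [Finset.sum_congr rfl h1, Finset.sum_comm]
  have h2 : ∀ r ∈ R, (∑ w ∈ W, if run δ r (v ++ w) ∈ S then 1 else 0) = S.card := by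
    intro r _
    have : (∑ w ∈ W, if run δ r (v ++ w) ∈ S then 1 else 0)
        = (W.filter (fun w => run δ (run δ r v) w ∈ S)).card := by
      rw [Finset.card_filter]
      exact Finset.sum_congr rfl (fun w _ => by rw [run_append])
    rw [this, count_filter hW _ hSR]
  rw [Finset.sum_congr rfl h2, Finset.sum_const, smul_eq_mul, hW.1]

end Aux

/-- Characterization of maximal reducible subsets of the range `R`:
for a non-empty reducible `K ⊆ R`, the four listed conditions are equivalent. -/
theorem stmt_2 {Q A : Type*} [Fintype Q] [DecidableEq Q] [Fintype A]
    (δ : Q → A → Q) (W : Finset (List A)) (R : Finset Q)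
    (hW : IsIndependent δ W R) (M : ℕ)
    (hMub : ∀ K ⊆ R, Reducible δ K → K.card ≤ M)
    (hMmem : ∃ K ⊆ R, Reducible δ K ∧ K.card = M)
    (K : Finset Q) (hKR : K ⊆ R) (hKne : K.Nonempty) (hKred : Reducible δ K) :
    List.TFAE
      [ K.card = M,
        ∀ w ∈ W, ∀ v : List A,
          (R.filter (fun q => run δ q (v ++ w) ∈ K)).card ≤ K.card,
        ∀ w ∈ W, ∀ v : List A,
          (R.filter (fun q => run δ q (v ++ w) ∈ K)).card = K.card,
        ∀ K' ⊆ R, Reducible δ K' → K ⊆ K' → K' = K ] := by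
  obtain ⟨u₀, q₀, hu₀⟩ := hKred
  have hKu₀ : ∀ r ∈ K, run δ r u₀ = q₀ := forall_of_image_singleton hu₀
  tfae_have 1 → 2 := by
    intro h1 w hw v
    set F := R.filter (fun q => run δ q (v ++ w) ∈ K) with hF
    rcases F.eq_empty_or_nonempty with hFe | hFne
    · simp [hFe]
    · have hred : Reducible δ F := by
        apply reducible_of_forall hFne ((v ++ w) ++ u₀) q₀
        intro r hr
        rw [run_append]
        exact hKu₀ _ (Finset.mem_filter.mp hr).2
      have := hMub F (Finset.filter_subset _ _) hred
      omega
  tfae_have 2 → 3 := by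
    intro h2 w hw v
    by_contra hne
    have hlt : (R.filter (fun q => run δ q (v ++ w) ∈ K)).card < K.card :=
      lt_of_le_of_ne (h2 w hw v) hne
    have hsum := sum_cards hW v hKR
    have hstrict : ∑ w' ∈ W, (R.filter (fun q => run δ q (v ++ w') ∈ K)).card
        < ∑ _w' ∈ W, K.card :=
      Finset.sum_lt_sum (fun i hi => h2 i hi v) ⟨w, hw, hlt⟩
    rw [Finset.sum_const, smul_eq_mul, hsum] at hstrict
    exact lt_irrefl _ hstrict
  tfae_have 3 → 4 := by
    intro h3 K' hK'R hK'red hKK'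
    obtain ⟨u', p, hu'⟩ := hK'red
    have hK'u : ∀ r ∈ K', run δ r u' = p := forall_of_image_singleton hu'
    obtain ⟨k, hk⟩ := id hKne
    obtain ⟨w, hw, hwp⟩ := exists_word hW p (hKR hk)
    have h3' := h3 w hw u'
    have hsub : K' ⊆ R.filter (fun q => run δ q (u' ++ w) ∈ K) := by
      intro r hr
      refine Finset.mem_filter.mpr ⟨hK'R hr, ?_⟩
      rw [run_append, hK'u r hr, hwp]
      exact hk
    refine (Finset.eq_of_subset_of_card_le hKK' ?_).symm
    calc K'.card ≤ (R.filter (fun q => run δ q (u' ++ w) ∈ K)).card := Finset.card_le_card hsub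
      _ = K.card := h3'
  tfae_have 4 → 1 := by
    intro h4
    obtain ⟨KM, hKMR, hKMred, hKMcard⟩ := hMmem
    -- a word w₀ ∈ W
    obtain ⟨k, hk⟩ := id hKne
    have hWne : W.Nonempty := by
      have : (W.image (fun w => run δ k w)).Nonempty := by
        rw [hW.2 k]; exact ⟨k, hKR hk⟩
      exact Finset.Nonempty.of_image this
    obtain ⟨w₀, hw₀⟩ := hWne
    -- normalize K : reduced by u' to p' ∈ R
    set u' : List A := u₀ ++ w₀ with hu'def
    set p' : Q := run δ q₀ w₀ with hp'def
    have hp'R : p' ∈ R := run_mem_range hW hw₀ q₀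
    have hKu' : ∀ r ∈ K, run δ r u' = p' := by
      intro r hr; rw [hu'def, run_append, hKu₀ r hr]
    -- normalize KM : reduced by uM' to pM' ∈ R
    obtain ⟨uM, qM, huM⟩ := hKMred
    have hKMuM : ∀ r ∈ KM, run δ r uM = qM := forall_of_image_singleton huM
    set uM' : List A := uM ++ w₀ with huM'def
    set pM' : Q := run δ qM w₀ with hpM'def
    have hpM'R : pM' ∈ R := run_mem_range hW hw₀ qM
    have hKMu' : ∀ r ∈ KM, run δ r uM' = pM' := by
      intro r hr; rw [huM'def, run_append, hKMuM r hr]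
    have hKMne : KM.Nonempty := by
      rw [← Finset.card_pos, hKMcard]
      have := hMub K hKR ⟨u₀, q₀, hu₀⟩
      have := Finset.card_pos.mpr hKne
      omega
    -- KM is the full fiber of pM' in R
    have hFib : R.filter (fun r => run δ r uM' = pM') = KM := by
      have hsub : KM ⊆ R.filter (fun r => run δ r uM' = pM') := fun r hr =>
        Finset.mem_filter.mpr ⟨hKMR hr, hKMu' r hr⟩
      refine (Finset.eq_of_subset_of_card_le hsub ?_).symm
      have hred : Reducible δ (R.filter (fun r => run δ r uM' = pM')) := by
        apply reducible_of_forall (hKMne.mono hsub) uM' pM'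
        exact fun r hr => (Finset.mem_filter.mp hr).2
      have := hMub _ (Finset.filter_subset _ _) hred
      omega
    -- maximality: K equals every fiber set through p'
    have hC : ∀ y : List A, R.filter (fun r => run δ r (u' ++ y) = run δ p' y) = K := by
      intro y
      have hKC : K ⊆ R.filter (fun r => run δ r (u' ++ y) = run δ p' y) := by
        intro r hr
        exact Finset.mem_filter.mpr ⟨hKR hr, by rw [run_append, hKu' r hr]⟩
      refine h4 _ (Finset.filter_subset _ _) ?_ hKC
      apply reducible_of_forall (hKne.mono hKC) (u' ++ y) (run δ p' y)
      exact fun r hr => (Finset.mem_filter.mp hr).2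
    -- the sets G w
    have hGeq : ∀ w ∈ W, R.filter (fun r => run δ r (u' ++ w) ∈ KM)
        = R.filter (fun r => run δ r ((u' ++ w) ++ uM') = pM') := by
      intro w hw
      ext r
      simp only [Finset.mem_filter]
      constructor
      · rintro ⟨hrR, hrK⟩
        refine ⟨hrR, ?_⟩
        rw [run_append]
        have := Finset.mem_filter.mp (hFib ▸ hrK)
        exact this.2
      · rintro ⟨hrR, hrun⟩
        refine ⟨hrR, ?_⟩
        rw [← hFib]
        refine Finset.mem_filter.mpr ⟨?_, by rw [← run_append]; exact hrun⟩
        rw [run_append]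
        exact run_mem_range hW hw _
    -- each G w has card ≤ M
    have hGle : ∀ w ∈ W, (R.filter (fun r => run δ r (u' ++ w) ∈ KM)).card ≤ M := by
      intro w hw
      rcases (R.filter (fun r => run δ r (u' ++ w) ∈ KM)).eq_empty_or_nonempty with he | hne
      · simp [he]
      · refine hMub _ (Finset.filter_subset _ _) ?_
        rw [hGeq w hw] at hne ⊢
        apply reducible_of_forall hne ((u' ++ w) ++ uM') pM'
        exact fun r hr => (Finset.mem_filter.mp hr).2
    -- sum of cards = W.card * M, hence each = M
    have hGsum : ∑ w ∈ W, (R.filter (fun r => run δ r (u' ++ w) ∈ KM)).card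
        = W.card * M := by
      rw [sum_cards hW u' hKMR, hKMcard]
    have hGeach : ∀ w ∈ W, (R.filter (fun r => run δ r (u' ++ w) ∈ KM)).card = M := by
      intro w hw
      by_contra hne
      have hlt := lt_of_le_of_ne (hGle w hw) hne
      have hstrict : ∑ w' ∈ W, (R.filter (fun r => run δ r (u' ++ w') ∈ KM)).card
          < ∑ _w' ∈ W, M :=
        Finset.sum_lt_sum hGle ⟨w, hw, hlt⟩
      rw [Finset.sum_const, smul_eq_mul, hGsum] at hstrict
      exact lt_irrefl _ hstrict
    -- pick w₁ sending p' into KM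
    obtain ⟨kM, hkM⟩ := hKMne
    obtain ⟨w₁, hw₁, hw₁p⟩ := exists_word hW p' (hKMR hkM)
    have hkey : run δ p' (w₁ ++ uM') = pM' := by
      rw [run_append, hw₁p]
      exact hKMu' kM hkM
    -- conclude
    have hGK : R.filter (fun r => run δ r (u' ++ w₁) ∈ KM) = K := by
      have hassoc : (u' ++ w₁) ++ uM' = u' ++ (w₁ ++ uM') := List.append_assoc _ _ _
      have hCy := hC (w₁ ++ uM')
      rw [hkey] at hCy
      rw [hGeq w₁ hw₁, hassoc, hCy]
    rw [← hGK]
    exact hGeach w₁ hw₁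
  tfae_finish
end

section
/- Let A be a matrix over the rationals with k rows (and finitely many columns). Suppose that no row of A is zero and that every column of A has at most t > 0 non-zero entries. Then rank(A) ≥ k/t. -/
open Submodule Module Matrix

/-- If a rational `k × n` matrix has no zero row and every column has at most
`t > 0` non-zero entries, then its rank is at least `k / t`. -/
theorem stmt_3 {k n : ℕ} (hk : 1 ≤ k) (hn : 1 ≤ n)
    (A : Matrix (Fin k) (Fin n) ℚ) (t : ℕ) (ht : 0 < t)
    (hrow : ∀ i : Fin k, A i ≠ 0)
    (hcol : ∀ j : Fin n, (Finset.univ.filter (fun i : Fin k => A i j ≠ 0)).card ≤ t) :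
    (k : ℚ) / (t : ℚ) ≤ (A.rank : ℚ) := by
  classical
  obtain ⟨b, hbsub, hbspan, hbind⟩ := exists_linearIndependent ℚ (Set.range Aᵀ)
  have hbfin : b.Finite := hbind.setFinite
  haveI : Fintype b := hbfin.fintype
  set s : Finset (Fin k → ℚ) := b.toFinset with hs
  have hcard : finrank ℚ (span ℚ b) = s.card := finrank_span_set_eq_card hbind
  have hrank : A.rank = s.card := by
    rw [Matrix.rank_eq_finrank_span_cols]
    change finrank ℚ (span ℚ (Set.range Aᵀ)) = _
    rw [← hbspan, hcard]
  -- each row index has some vector in b nonzero at that index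
  have hexists : ∀ i : Fin k, ∃ v ∈ s, v i ≠ 0 := by
    intro i
    by_contra h
    push_neg at h
    have hker : span ℚ b ≤ LinearMap.ker (LinearMap.proj (R := ℚ) (φ := fun _ : Fin k => ℚ) i) := by
      rw [Submodule.span_le]
      intro v hv
      exact LinearMap.mem_ker.mpr (h v (Set.mem_toFinset.mpr hv))
    have hzero : ∀ j : Fin n, A i j = 0 := by
      intro j
      have hmem : Aᵀ j ∈ span ℚ b := by
        rw [hbspan]; exact subset_span ⟨j, rfl⟩
      have := hker hmem
      simpa [Matrix.transpose_apply] using this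
    exact hrow i (funext hzero)
  choose f hf hf0 using hexists
  have hcount : (Finset.univ : Finset (Fin k)).card ≤ t * s.card := by
    apply Finset.card_le_mul_card_image_of_maps_to (fun i _ => hf i)
    intro v hv
    obtain ⟨j, hj⟩ : ∃ j, Aᵀ j = v := hbsub (Set.mem_toFinset.mp hv)
    refine le_trans (Finset.card_le_card ?_) (hcol j)
    intro i hi
    simp only [Finset.mem_filter, Finset.mem_univ, true_and] at hi ⊢
    have hvi : v i ≠ 0 := hi ▸ hf0 i
    rw [← hj] at hvi
    exact hvi
  rw [Finset.card_univ, Fintype.card_fin] at hcount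
  rw [div_le_iff₀ (by exact_mod_cast ht), hrank]
  exact_mod_cast hcount.trans_eq (Nat.mul_comm t s.card)
end

section
/- Let 𝒜 = ⟨Q, A, δ⟩ be an automaton with an independent set W = {w_1, …, w_k} with range R, and let K ⊆ R be such that K w_i^{-1} ≠ ∅ and K w_i^{-1} ≠ Q for every i = 1, …, k. Let C be the k × Card(Q) rational matrix whose (i, q)-entry equals 1 − Card(K)/k if δ(q, w_i) ∈ K, and −Card(K)/k otherwise. Then rank(C) ≥ max{ (k − Card(K))/Card(K), Card(K)/(k − Card(K)) }. -/
/-- The family `w 0, …, w (k-1)` is an independent set of words with range `R`: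
the words are pairwise distinct, `R` has `k` (distinct) states, and for every
state `s`, `{δ(s, w i) : i} = R`. -/
def IsIndependentFam {Q A : Type*} [DecidableEq Q] (δ : Q → A → Q) {k : ℕ}
    (w : Fin k → List A) (R : Finset Q) : Prop :=
  Function.Injective w ∧ R.card = k ∧
    ∀ s : Q, Finset.univ.image (fun i => run δ s (w i)) = R

open Finset Submodule Module in
/-- If a family of vectors with supports of size at most `m` jointly covers all
coordinates, then the span of the family has dimension at least `k / m`. -/
lemma cover_bound {k : ℕ} {ι : Type*} [Fintype ι] (u : ι → (Fin k → ℚ)) (m : ℕ)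
    (hsupp : ∀ q, (Finset.univ.filter fun i => u q i ≠ 0).card ≤ m)
    (hcover : ∀ i : Fin k, ∃ q, u q i ≠ 0) :
    k ≤ (Module.finrank ℚ (Submodule.span ℚ (Set.range u))) * m := by
  classical
  obtain ⟨b, hbs, hbspan, hbind⟩ := exists_linearIndependent ℚ (Set.range u)
  have hbfin : b.Finite := (Set.finite_range u).subset hbs
  haveI := hbfin.fintype
  have hcard : b.toFinset.card = Module.finrank ℚ (Submodule.span ℚ (Set.range u)) := by
    rw [← hbspan]
    exact (finrank_span_set_eq_card hbind).symm
  have hcov2 : ∀ i : Fin k, ∃ x ∈ hbfin.toFinset, x i ≠ 0 := by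
    intro i
    by_contra h
    push_neg at h
    obtain ⟨q, hq⟩ := hcover i
    have hmem : u q ∈ Submodule.span ℚ b := by
      rw [hbspan]; exact Submodule.subset_span (Set.mem_range_self q)
    have hle : Submodule.span ℚ b ≤
        LinearMap.ker (LinearMap.proj (R := ℚ) (φ := fun _ : Fin k => ℚ) i) := by
      rw [Submodule.span_le]
      intro x hx
      simpa [LinearMap.mem_ker] using h x (hbfin.mem_toFinset.mpr hx)
    exact hq (hle hmem)
  have hsub : (Finset.univ : Finset (Fin k)) ⊆
      hbfin.toFinset.biUnion (fun x => Finset.univ.filter fun i => x i ≠ 0) := by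
    intro i _
    obtain ⟨x, hx, hxi⟩ := hcov2 i
    exact Finset.mem_biUnion.mpr ⟨x, hx, Finset.mem_filter.mpr ⟨Finset.mem_univ _, hxi⟩⟩
  have hbtf : hbfin.toFinset = b.toFinset := by
    ext x; simp
  calc k = (Finset.univ : Finset (Fin k)).card := by simp
    _ ≤ _ := Finset.card_le_card hsub
    _ ≤ ∑ x ∈ hbfin.toFinset, (Finset.univ.filter fun i => x i ≠ 0).card :=
        Finset.card_biUnion_le
    _ ≤ ∑ _x ∈ hbfin.toFinset, m := by
        refine Finset.sum_le_sum fun x hx => ?_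
        obtain ⟨q, rfl⟩ := hbs (hbfin.mem_toFinset.mp hx)
        exact hsupp q
    _ = hbfin.toFinset.card * m := by rw [Finset.sum_const, smul_eq_mul]
    _ = _ := by rw [hbtf, hcard]

/-- Lower bound on the rank of the matrix `C` of the system (4) of the paper:
`C` is the `k × Card Q` matrix whose `(i, q)` entry is `1 - Card K / k` if
`δ(q, w_i) ∈ K` and `- Card K / k` otherwise. -/
theorem stmt_4 {Q A : Type*} [Fintype Q] [DecidableEq Q] [Fintype A]
    (δ : Q → A → Q) {k : ℕ} (w : Fin k → List A) (R : Finset Q)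
    (hW : IsIndependentFam δ w R)
    (K : Finset Q) (hKR : K ⊆ R)
    (hne : ∀ i : Fin k, ∃ q : Q, run δ q (w i) ∈ K)
    (hnQ : ∀ i : Fin k, ∃ q : Q, run δ q (w i) ∉ K)
    (C : Matrix (Fin k) Q ℚ)
    (hC : ∀ (i : Fin k) (q : Q),
      C i q = if run δ q (w i) ∈ K then 1 - (K.card : ℚ) / (k : ℚ)
              else -((K.card : ℚ) / (k : ℚ))) :
    max (((k : ℚ) - (K.card : ℚ)) / (K.card : ℚ))
        ((K.card : ℚ) / ((k : ℚ) - (K.card : ℚ))) ≤ (C.rank : ℚ) := by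
  classical
  obtain ⟨hwinj, hRcard, himg⟩ := hW
  rcases Nat.eq_zero_or_pos k with hk0 | hkpos
  · subst hk0
    have hR : R = ∅ := Finset.card_eq_zero.mp hRcard
    have hK : K = ∅ := Finset.subset_empty.mp (hR ▸ hKR)
    subst hK
    norm_num
  -- basic cardinality facts
  set m := K.card with hm
  have i0 : Fin k := ⟨0, hkpos⟩
  have hm0 : 0 < m := by
    obtain ⟨q, hq⟩ := hne i0
    exact Finset.card_pos.mpr ⟨_, hq⟩
  have hmk : m < k := by
    obtain ⟨q, hq⟩ := hnQ i0
    have hmem : run δ q (w i0) ∈ R := by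
      rw [← himg q]
      exact Finset.mem_image_of_mem _ (Finset.mem_univ i0)
    have : K ⊂ R := (Finset.ssubset_iff_of_subset hKR).mpr ⟨_, hmem, hq⟩
    calc m < R.card := Finset.card_lt_card this
      _ = k := hRcard
  have hinj : ∀ q : Q, Set.InjOn (fun i => run δ q (w i))
      ↑(Finset.univ : Finset (Fin k)) := by
    intro q
    apply Finset.injOn_of_card_image_eq
    rw [himg q, hRcard, Finset.card_univ, Fintype.card_fin]
  have hTcard : ∀ q : Q,
      (Finset.univ.filter fun i => run δ q (w i) ∈ K).card = m := by
    intro q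
    have h1 : ((Finset.univ.filter fun i => run δ q (w i) ∈ K).image
        (fun i => run δ q (w i))).card
        = (Finset.univ.filter fun i => run δ q (w i) ∈ K).card :=
      Finset.card_image_of_injOn ((hinj q).mono (by
        exact_mod_cast Finset.coe_subset.mpr (Finset.filter_subset _ _)))
    have h2 : (Finset.univ.filter fun i => run δ q (w i) ∈ K).image
        (fun i => run δ q (w i)) = K := by
      rw [← Finset.filter_image (f := fun i => run δ q (w i)) (p := (· ∈ K)), himg q, Finset.filter_mem_eq_inter,
        Finset.inter_eq_right.mpr hKR]
    rw [← h1, h2]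
  have hTccard : ∀ q : Q,
      (Finset.univ.filter fun i => ¬ (run δ q (w i) ∈ K)).card = k - m := by
    intro q
    have := Finset.card_filter_add_card_filter_not
      (s := (Finset.univ : Finset (Fin k))) (p := fun i => run δ q (w i) ∈ K)
    rw [hTcard q, Finset.card_univ, Fintype.card_fin] at this
    omega
  -- the ambient submodule: column space of `C` together with the all-ones vector
  set S : Submodule ℚ (Fin k → ℚ) :=
    LinearMap.range C.mulVecLin ⊔ Submodule.span ℚ {(1 : Fin k → ℚ)} with hSdef
  have hSrank : Module.finrank ℚ S ≤ C.rank + 1 := by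
    have h1 : Module.finrank ℚ (Submodule.span ℚ ({(1 : Fin k → ℚ)} : Set _)) ≤ 1 := by
      refine (finrank_span_le_card _).trans ?_
      simp
    calc Module.finrank ℚ S
        ≤ Module.finrank ℚ (LinearMap.range C.mulVecLin)
          + Module.finrank ℚ (Submodule.span ℚ ({(1 : Fin k → ℚ)} : Set _)) :=
          Submodule.finrank_add_le_finrank_add_finrank _ _
      _ ≤ C.rank + 1 := by
          rw [Matrix.rank]
          omega
  have h1S : (1 : Fin k → ℚ) ∈ S := Submodule.mem_sup_right (Submodule.subset_span rfl)
  have hcolS : ∀ q : Q, C.mulVec (Pi.single q 1) ∈ S := fun q =>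
    Submodule.mem_sup_left (LinearMap.mem_range.mpr ⟨Pi.single q 1, Matrix.mulVecLin_apply _ _⟩)
  -- the indicator vectors and their complements
  set v : Q → (Fin k → ℚ) :=
    fun q i => if run δ q (w i) ∈ K then 1 else 0 with hv
  have hvS : ∀ q : Q, v q ∈ S := by
    intro q
    have hveq : v q = C.mulVec (Pi.single q 1) + ((m : ℚ) / (k : ℚ)) • 1 := by
      funext i
      simp only [hv, Matrix.mulVec_single, op_smul_eq_mul, Matrix.col_apply, Pi.add_apply, Pi.smul_apply, Pi.one_apply,
        smul_eq_mul, mul_one, hC i q]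
      split_ifs <;> ring
    rw [hveq]
    exact add_mem (hcolS q) (Submodule.smul_mem _ _ h1S)
  have hvS' : ∀ q : Q, (1 : Fin k → ℚ) - v q ∈ S := fun q => sub_mem h1S (hvS q)
  -- the two covering bounds
  have key : ∀ u : Q → (Fin k → ℚ), (∀ q, u q ∈ S) →
      Module.finrank ℚ (Submodule.span ℚ (Set.range u)) ≤ C.rank + 1 := by
    intro u hu
    have hle : Submodule.span ℚ (Set.range u) ≤ S := by
      rw [Submodule.span_le]
      rintro x ⟨q, rfl⟩
      exact hu q
    exact (Submodule.finrank_mono hle).trans hSrank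
  have bound1 : k ≤ (C.rank + 1) * m := by
    have := cover_bound v m (fun q => by
      have : (Finset.univ.filter fun i => v q i ≠ 0)
          = Finset.univ.filter fun i => run δ q (w i) ∈ K := by
        apply Finset.filter_congr
        intro i _
        by_cases h : run δ q (w i) ∈ K <;> simp [hv, h]
      rw [this, hTcard q])
      (fun i => by
        obtain ⟨q, hq⟩ := hne i
        exact ⟨q, by simp [hv, hq]⟩)
    exact this.trans (Nat.mul_le_mul_right m (key v hvS))
  have bound2 : k ≤ (C.rank + 1) * (k - m) := by
    have := cover_bound (fun q => (1 : Fin k → ℚ) - v q) (k - m) (fun q => by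
      have : (Finset.univ.filter fun i => ((1 : Fin k → ℚ) - v q) i ≠ 0)
          = Finset.univ.filter fun i => ¬ (run δ q (w i) ∈ K) := by
        apply Finset.filter_congr
        intro i _
        by_cases h : run δ q (w i) ∈ K <;> simp [hv, h]
      rw [this, hTccard q])
      (fun i => by
        obtain ⟨q, hq⟩ := hnQ i
        exact ⟨q, by simp [hv, hq]⟩)
    exact this.trans (Nat.mul_le_mul_right (k - m) (key _ hvS'))
  -- conclude by arithmetic
  have hq1 : (k : ℚ) ≤ ((C.rank : ℚ) + 1) * (m : ℚ) := by exact_mod_cast bound1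
  have hq2 : (k : ℚ) ≤ ((C.rank : ℚ) + 1) * ((k : ℚ) - (m : ℚ)) := by
    have : ((k - m : ℕ) : ℚ) = (k : ℚ) - (m : ℚ) := by
      rw [Nat.cast_sub hmk.le]
    rw [← this]
    exact_mod_cast bound2
  have hmq : (0 : ℚ) < (m : ℚ) := by exact_mod_cast hm0
  have hkmq : (0 : ℚ) < (k : ℚ) - (m : ℚ) := by
    have : (m : ℚ) < (k : ℚ) := by exact_mod_cast hmk
    linarith
  apply max_le
  · rw [div_le_iff₀ hmq]
    nlinarith [hq1]
  · rw [div_le_iff₀ hkmq]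
    nlinarith [hq2]
end

section
/- Let 𝒜 = ⟨Q, A, δ⟩ be an n-state automaton with an independent set W = {w_1, …, w_k} with range R, and let M be the maximal cardinality of a reducible subset of R. Let K be a non-empty reducible subset of R with Card(K) ≠ M. Then there exist a word v ∈ A* and an index i with 1 ≤ i ≤ k such that Card(K (v w_i)^{-1} ∩ R) > Card(K) and |v| ≤ n − max{ (k − Card(K))/Card(K), Card(K)/(k − Card(K)) }. -/
open Finset Module Submodule

set_option linter.unusedSectionVars false

namespace Stmt5Aux

variable {Q A : Type*} [Fintype Q] [DecidableEq Q]

lemma run_append (δ : Q → A → Q) (q : Q) (z z' : List A) :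
    run δ q (z ++ z') = run δ (run δ q z) z' :=
  List.foldl_append

/-- Pullback of a function along the action of the word `z`. -/
def pull (δ : Q → A → Q) (z : List A) : (Q → ℝ) →ₗ[ℝ] (Q → ℝ) :=
  LinearMap.funLeft ℝ ℝ (fun q => run δ q z)

lemma pull_apply (δ : Q → A → Q) (z : List A) (f : Q → ℝ) (q : Q) :
    pull δ z f q = f (run δ q z) := rfl

lemma pull_nil (δ : Q → A → Q) (f : Q → ℝ) : pull δ [] f = f := rfl

lemma pull_cons (δ : Q → A → Q) (a : A) (z : List A) (f : Q → ℝ) :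
    pull δ (a :: z) f = pull δ [a] (pull δ z f) := rfl

variable {k : ℕ}

def SS (δ : Q → A → Q) (y : Fin k → (Q → ℝ)) (ℓ : ℕ) : Set (Q → ℝ) :=
  { g | ∃ z : List A, ∃ i : Fin k, z.length ≤ ℓ ∧ g = pull δ z (y i) }

def UU (δ : Q → A → Q) (y : Fin k → (Q → ℝ)) (ℓ : ℕ) : Submodule ℝ (Q → ℝ) :=
  Submodule.span ℝ (SS δ y ℓ)

lemma SS_mono (δ : Q → A → Q) (y : Fin k → (Q → ℝ)) {ℓ ℓ' : ℕ} (h : ℓ ≤ ℓ') :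
    SS δ y ℓ ⊆ SS δ y ℓ' := by
  rintro g ⟨z, i, hz, rfl⟩
  exact ⟨z, i, hz.trans h, rfl⟩

lemma UU_mono (δ : Q → A → Q) (y : Fin k → (Q → ℝ)) {ℓ ℓ' : ℕ} (h : ℓ ≤ ℓ') :
    UU δ y ℓ ≤ UU δ y ℓ' :=
  Submodule.span_mono (SS_mono δ y h)

lemma SS_zero (δ : Q → A → Q) (y : Fin k → (Q → ℝ)) : SS δ y 0 = Set.range y := by
  ext g
  constructor
  · rintro ⟨z, i, hz, rfl⟩
    have : z = [] := List.length_eq_zero_iff.1 (Nat.le_zero.1 hz)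
    subst this
    exact ⟨i, (pull_nil δ (y i)).symm⟩
  · rintro ⟨i, rfl⟩
    exact ⟨[], i, le_refl 0, (pull_nil δ (y i)).symm⟩

lemma UU_step (δ : Q → A → Q) (y : Fin k → (Q → ℝ)) (ℓ : ℕ)
    (h : UU δ y ℓ = UU δ y (ℓ + 1)) : UU δ y (ℓ + 1) = UU δ y (ℓ + 2) := by
  refine le_antisymm (UU_mono δ y (Nat.le_succ _)) ?_
  rw [UU]
  apply Submodule.span_le.2
  rintro g ⟨z, i, hz, rfl⟩
  by_cases hz1 : z.length ≤ ℓ + 1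
  · exact Submodule.subset_span ⟨z, i, hz1, rfl⟩
  · match z, hz, hz1 with
    | [], _, hz1 => exact absurd (by simp) hz1
    | a :: z', hz, hz1 =>
      have hz' : z'.length ≤ ℓ + 1 := by
        have := hz
        simp only [List.length_cons] at this
        omega
      have h1 : pull δ z' (y i) ∈ UU δ y ℓ := by
        rw [h]; exact Submodule.subset_span ⟨z', i, hz', rfl⟩
      have h4 : Submodule.map (pull δ [a]) (UU δ y ℓ) ≤ UU δ y (ℓ + 1) := by
        rw [UU, Submodule.map_span]
        apply Submodule.span_le.2
        rintro g' ⟨g'', ⟨z'', i'', hz'', rfl⟩, rfl⟩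
        apply Submodule.subset_span
        exact ⟨a :: z'', i'', by simp [Nat.succ_le_succ hz''], (pull_cons δ a z'' (y i'')).symm⟩
      rw [pull_cons]
      exact h4 (Submodule.mem_map_of_mem h1)

lemma UU_stab (δ : Q → A → Q) (y : Fin k → (Q → ℝ)) (ℓ : ℕ)
    (h : UU δ y ℓ = UU δ y (ℓ + 1)) : ∀ j, UU δ y (ℓ + j) = UU δ y ℓ := by
  have key : ∀ j, UU δ y (ℓ + j) = UU δ y (ℓ + j + 1) := by
    intro j
    induction j with
    | zero => exact h
    | succ j ih => exact UU_step δ y (ℓ + j) ih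
  intro j
  induction j with
  | zero => rfl
  | succ j ih => rw [← ih]; exact (key j).symm

/-- Claim A: if a family of vectors covers `R` by their supports, with supports of trace
at most `c` on `R`, then `Card R ≤ c · dim span`. -/
lemma card_le_mul_finrank {c : ℕ} (R : Finset Q) {k : ℕ} (x : Fin k → (Q → ℝ))
    (hcov : ∀ q ∈ R, ∃ i, x i q ≠ 0)
    (hcard : ∀ i, (R.filter fun q => x i q ≠ 0).card ≤ c) :
    R.card ≤ c * finrank ℝ (span ℝ (Set.range x)) := by
  classical
  obtain ⟨b, hbsub, hbspan, hbind⟩ := exists_linearIndependent ℝ (Set.range x)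
  have hbfin : b.Finite := hbind.setFinite
  letI := hbfin.fintype
  have hDX : finrank ℝ (span ℝ (Set.range x)) = b.toFinset.card := by
    rw [← hbspan]; exact finrank_span_set_eq_card hbind
  have hcover : R ⊆ b.toFinset.biUnion (fun g => R.filter fun q => g q ≠ 0) := by
    intro q hq
    obtain ⟨i, hxi⟩ := hcov q hq
    have hmem : x i ∈ span ℝ b := by
      rw [hbspan]; exact Submodule.subset_span (Set.mem_range_self i)
    by_contra hq'
    simp only [Finset.mem_biUnion, Finset.mem_filter, Set.mem_toFinset, not_exists, not_and] at hq'
    have hker : span ℝ b ≤ LinearMap.ker (LinearMap.proj (R := ℝ) (φ := fun _ : Q => ℝ) q) := by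
      apply Submodule.span_le.2
      intro g hg
      simp only [SetLike.mem_coe, LinearMap.mem_ker, LinearMap.proj_apply]
      by_contra hne
      exact (hq' g hg hq) hne
    have := hker hmem
    simp only [LinearMap.mem_ker, LinearMap.proj_apply] at this
    exact hxi this
  calc R.card ≤ (b.toFinset.biUnion (fun g => R.filter fun q => g q ≠ 0)).card :=
        Finset.card_le_card hcover
    _ ≤ ∑ g ∈ b.toFinset, (R.filter fun q => g q ≠ 0).card := Finset.card_biUnion_le
    _ ≤ ∑ _g ∈ b.toFinset, c := by
        apply Finset.sum_le_sum
        intro g hg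
        obtain ⟨i, rfl⟩ := hbsub (Set.mem_toFinset.1 hg)
        exact hcard i
    _ = b.toFinset.card * c := by rw [Finset.sum_const, smul_eq_mul]
    _ = c * finrank ℝ (span ℝ (Set.range x)) := by rw [hDX, Nat.mul_comm]

end Stmt5Aux

/-- If `K` is a non-empty reducible subset of `R` of non-maximal cardinality, then
there are a word `v` and an index `i` with
`Card(K (v w_i)^{-1} ∩ R) > Card K` and
`|v| ≤ n − max{(k − Card K)/Card K, Card K/(k − Card K)}`. -/
theorem stmt_5 {Q A : Type*} [Fintype Q] [DecidableEq Q] [Fintype A]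
    (δ : Q → A → Q) {k : ℕ} (w : Fin k → List A) (R : Finset Q)
    (hW : IsIndependentFam δ w R) (M : ℕ)
    (hMub : ∀ K ⊆ R, Reducible δ K → K.card ≤ M)
    (hMmem : ∃ K ⊆ R, Reducible δ K ∧ K.card = M)
    (K : Finset Q) (hKR : K ⊆ R) (hKne : K.Nonempty) (hKred : Reducible δ K)
    (hKM : K.card ≠ M) :
    ∃ (v : List A) (i : Fin k),
      K.card < (R.filter (fun q => run δ q (v ++ w i) ∈ K)).card ∧
      (v.length : ℝ) ≤ (Fintype.card Q : ℝ) -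
        max (((k : ℝ) - (K.card : ℝ)) / (K.card : ℝ))
            ((K.card : ℝ) / ((k : ℝ) - (K.card : ℝ))) := by
  classical
  obtain ⟨-, hRk, himg⟩ := hW
  set n := Fintype.card Q with hn
  set c := K.card with hc
  have hkn : k ≤ n := hRk ▸ Finset.card_le_univ R
  have hmemR : ∀ (s : Q) (i : Fin k), run δ s (w i) ∈ R := fun s i => by
    rw [← himg s]; exact Finset.mem_image_of_mem _ (Finset.mem_univ i)
  have hinj : ∀ s : Q, Set.InjOn (fun i : Fin k => run δ s (w i))
      ↑(Finset.univ : Finset (Fin k)) := by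
    intro s
    rw [← Finset.card_image_iff, himg s, hRk, Finset.card_univ, Fintype.card_fin]
  have hhit : ∀ (s t : Q), t ∈ R → ∃ i : Fin k, run δ s (w i) = t := by
    intro s t ht
    rw [← himg s] at ht
    obtain ⟨i, -, hi⟩ := Finset.mem_image.1 ht
    exact ⟨i, hi⟩
  have hcount : ∀ (s : Q) (T : Finset Q), T ⊆ R →
      (Finset.univ.filter fun i : Fin k => run δ s (w i) ∈ T).card = T.card := by
    intro s T hT
    have him : (Finset.univ.filter fun i : Fin k => run δ s (w i) ∈ T).image
        (fun i => run δ s (w i)) = T := by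
      ext t
      simp only [Finset.mem_image, Finset.mem_filter, Finset.mem_univ, true_and]
      constructor
      · rintro ⟨i, hi, rfl⟩; exact hi
      · intro ht
        obtain ⟨i, hi⟩ := hhit s t (hT ht)
        exact ⟨i, by rw [hi]; exact ht, hi⟩
    calc (Finset.univ.filter fun i : Fin k => run δ s (w i) ∈ T).card
        = ((Finset.univ.filter fun i : Fin k => run δ s (w i) ∈ T).image
            (fun i => run δ s (w i))).card :=
          (Finset.card_image_of_injOn
            ((hinj s).mono (Finset.coe_subset.2 (Finset.filter_subset _ _)))).symm
      _ = T.card := by rw [him]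
  have hc1 : 1 ≤ c := Finset.card_pos.2 hKne
  have hcM : c < M := lt_of_le_of_ne (hMub K hKR hKred) hKM
  have hMk : M ≤ k := by
    obtain ⟨K₀, hK₀R, -, hK₀c⟩ := hMmem
    rw [← hK₀c, ← hRk]
    exact Finset.card_le_card hK₀R
  have hck : c < k := lt_of_lt_of_le hcM hMk
  -- a "good" word exists
  have hPex : ∃ ℓ : ℕ, ∃ v : List A, v.length = ℓ ∧ ∃ i : Fin k,
      c < (R.filter fun q => run δ q (v ++ w i) ∈ K).card := by
    obtain ⟨K₀, hK₀R, ⟨u, p, hup⟩, hK₀c⟩ := hMmem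
    obtain ⟨t, htK⟩ := hKne
    obtain ⟨i, hi⟩ := hhit p t (hKR htK)
    refine ⟨u.length, u, rfl, i, ?_⟩
    have hsub : K₀ ⊆ R.filter fun q => run δ q (u ++ w i) ∈ K := by
      intro q hq
      refine Finset.mem_filter.2 ⟨hK₀R hq, ?_⟩
      have hqu : run δ q u = p := by
        have h1 : run δ q u ∈ K₀.image (fun p' => run δ p' u) :=
          Finset.mem_image_of_mem _ hq
        rw [hup] at h1
        exact Finset.mem_singleton.1 h1
      rw [Stmt5Aux.run_append, hqu, hi]
      exact htK
    calc c < M := hcM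
      _ = K₀.card := hK₀c.symm
      _ ≤ _ := Finset.card_le_card hsub
  obtain ⟨v₀, hv₀len, i₀, hv₀good⟩ := Nat.find_spec hPex
  have hmin : ∀ z : List A, z.length < v₀.length → ∀ i : Fin k,
      (R.filter fun q => run δ q (z ++ w i) ∈ K).card ≤ c := by
    intro z hz i
    by_contra hlt
    push_neg at hlt
    exact Nat.find_min hPex (hv₀len ▸ hz) ⟨z, rfl, i, hlt⟩
  refine ⟨v₀, i₀, hv₀good, ?_⟩
  -- trivial bounds on the max
  have hkcR : (0:ℝ) < (k:ℝ) - c := by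
    have : (c:ℝ) < k := by exact_mod_cast hck
    linarith
  have hcR : (0:ℝ) < (c:ℝ) := by exact_mod_cast hc1
  rcases Nat.eq_zero_or_pos v₀.length with hm0 | hmpos
  · -- the empty word case: the bound is trivial
    rw [hm0]
    have h1 : ((k:ℝ) - c) / c ≤ (n:ℝ) := by
      have h2 : ((k:ℝ) - c) / c ≤ (k:ℝ) - c := div_le_self (le_of_lt hkcR) (by exact_mod_cast hc1)
      have h3 : (k:ℝ) ≤ n := by exact_mod_cast hkn
      have h4 : (0:ℝ) ≤ c := le_of_lt hcR
      linarith
    have h2 : (c:ℝ) / ((k:ℝ) - c) ≤ (n:ℝ) := by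
      have h5 : (1:ℝ) ≤ (k:ℝ) - c := by
        have : (c:ℝ) + 1 ≤ k := by exact_mod_cast hck
        linarith
      have h2' : (c:ℝ) / ((k:ℝ) - c) ≤ (c:ℝ) := div_le_self (le_of_lt hcR) h5
      have h3 : (c:ℝ) ≤ k := by exact_mod_cast hck.le
      have h4 : (k:ℝ) ≤ n := by exact_mod_cast hkn
      linarith
    have := max_le h1 h2
    push_cast
    linarith
  -- main case : the shortest good word is non-empty
  set y : Fin k → (Q → ℝ) :=
    fun i q => (if run δ q (w i) ∈ K then (1:ℝ) else 0) - (c:ℝ)/(k:ℝ) with hy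
  set φ : (Q → ℝ) →ₗ[ℝ] ℝ := ∑ q ∈ R, LinearMap.proj q with hφ
  have hφ_apply : ∀ g : Q → ℝ, φ g = ∑ q ∈ R, g q := by
    intro g
    rw [hφ]
    simp [LinearMap.sum_apply, LinearMap.proj_apply]
  have hknR : (k:ℝ) ≠ 0 := by
    have : 0 < k := lt_of_le_of_lt (Nat.zero_le c) hck
    exact_mod_cast this.ne'
  have hφpull : ∀ (z : List A) (i : Fin k),
      φ (Stmt5Aux.pull δ z (y i)) =
        ((R.filter fun q => run δ q (z ++ w i) ∈ K).card : ℝ) - c := by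
    intro z i
    rw [hφ_apply]
    have hpt : ∀ q, Stmt5Aux.pull δ z (y i) q
        = (if run δ q (z ++ w i) ∈ K then (1:ℝ) else 0) - (c:ℝ)/(k:ℝ) := by
      intro q
      rw [Stmt5Aux.pull_apply, hy]
      simp only [Stmt5Aux.run_append]
    simp_rw [hpt]
    rw [Finset.sum_sub_distrib, Finset.sum_boole, Finset.sum_const, hRk, nsmul_eq_mul]
    congr 1
    field_simp
  have hsum : ∀ z : List A,
      ∑ i : Fin k, (R.filter fun q => run δ q (z ++ w i) ∈ K).card = k * c := by
    intro z
    have h1 : ∀ i : Fin k, (R.filter fun q => run δ q (z ++ w i) ∈ K).card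
        = ∑ q ∈ R, if run δ q (z ++ w i) ∈ K then 1 else 0 :=
      fun i => Finset.card_filter _ _
    simp_rw [h1]
    rw [Finset.sum_comm]
    have h2 : ∀ q ∈ R, (∑ i : Fin k, if run δ q (z ++ w i) ∈ K then 1 else 0) = c := by
      intro q _
      have h3 := hcount (run δ q z) K hKR
      rw [← hc] at h3
      rw [← h3, Finset.card_filter]
      simp_rw [Stmt5Aux.run_append]
    rw [Finset.sum_congr rfl h2, Finset.sum_const, smul_eq_mul, hRk]
  have hbal : ∀ z : List A, z.length < v₀.length → ∀ i : Fin k,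
      (R.filter fun q => run δ q (z ++ w i) ∈ K).card = c := by
    intro z hz i
    by_contra hne
    have hlt : (R.filter fun q => run δ q (z ++ w i) ∈ K).card < c :=
      lt_of_le_of_ne (hmin z hz i) hne
    have h1 : ∑ i' : Fin k, (R.filter fun q => run δ q (z ++ w i') ∈ K).card < k * c := by
      calc ∑ i' : Fin k, (R.filter fun q => run δ q (z ++ w i') ∈ K).card
          < ∑ _i' : Fin k, c :=
            Finset.sum_lt_sum (fun i' _ => hmin z hz i') ⟨i, Finset.mem_univ i, hlt⟩
        _ = k * c := by simp [Finset.sum_const, Finset.card_univ]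
    rw [hsum z] at h1
    exact lt_irrefl _ h1
  have hbal0 : ∀ i : Fin k, (R.filter fun q => run δ q (w i) ∈ K).card = c := by
    intro i
    have := hbal [] hmpos i
    simpa using this
  obtain ⟨m', hL⟩ : ∃ m', v₀.length = m' + 1 :=
    ⟨v₀.length - 1, (Nat.succ_pred_eq_of_pos hmpos).symm⟩
  have hUW : Stmt5Aux.UU δ y m' ≤ LinearMap.ker φ := by
    rw [Stmt5Aux.UU]
    apply Submodule.span_le.2
    rintro g ⟨z, i, hz, rfl⟩
    simp only [SetLike.mem_coe, LinearMap.mem_ker]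
    rw [hφpull, hbal z (by omega) i]
    ring
  have hv₀mem : Stmt5Aux.pull δ v₀ (y i₀) ∈ Stmt5Aux.UU δ y v₀.length :=
    Submodule.subset_span ⟨v₀, i₀, le_refl _, rfl⟩
  have hφv₀ : φ (Stmt5Aux.pull δ v₀ (y i₀)) ≠ 0 := by
    rw [hφpull]
    have : (c:ℝ) < ((R.filter fun q => run δ q (v₀ ++ w i₀) ∈ K).card : ℝ) := by
      exact_mod_cast hv₀good
    linarith
  have hstrict : ∀ ℓ, ℓ < v₀.length → Stmt5Aux.UU δ y ℓ < Stmt5Aux.UU δ y (ℓ + 1) := by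
    intro ℓ hℓ
    refine lt_of_le_of_ne (Stmt5Aux.UU_mono δ y (Nat.le_succ ℓ)) ?_
    intro heq
    have hstab := Stmt5Aux.UU_stab δ y ℓ heq (v₀.length - ℓ)
    rw [Nat.add_sub_cancel' hℓ.le] at hstab
    have hker : Stmt5Aux.pull δ v₀ (y i₀) ∈ LinearMap.ker φ := by
      apply hUW
      apply Stmt5Aux.UU_mono δ y (show ℓ ≤ m' by omega)
      rw [← hstab]
      exact hv₀mem
    exact hφv₀ (LinearMap.mem_ker.1 hker)
  have hgrow : ∀ ℓ, ℓ < v₀.length →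
      finrank ℝ (Stmt5Aux.UU δ y 0) + ℓ ≤ finrank ℝ (Stmt5Aux.UU δ y ℓ) := by
    intro ℓ
    induction ℓ with
    | zero => intro _; simp
    | succ ℓ ih =>
      intro h
      have h1 := ih (Nat.lt_of_succ_lt h)
      have h2 := Submodule.finrank_lt_finrank_of_lt (hstrict ℓ (Nat.lt_of_succ_lt h))
      omega
  have hWlt : LinearMap.ker φ < ⊤ := by
    rw [lt_top_iff_ne_top]
    intro htop
    have hmem : (fun _ : Q => (1:ℝ)) ∈ LinearMap.ker φ := by rw [htop]; trivial
    have h0 : φ (fun _ : Q => (1:ℝ)) = 0 := LinearMap.mem_ker.1 hmem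
    rw [hφ_apply] at h0
    simp only [Finset.sum_const, nsmul_eq_mul, mul_one, hRk] at h0
    exact hknR h0
  set d := finrank ℝ (Stmt5Aux.UU δ y 0) with hd
  have hmd : v₀.length + d ≤ n := by
    have h1 : d + m' ≤ finrank ℝ (Stmt5Aux.UU δ y m') := hgrow m' (by omega)
    have h2 : finrank ℝ (Stmt5Aux.UU δ y m') ≤ finrank ℝ (LinearMap.ker φ) :=
      Submodule.finrank_mono hUW
    have h3 : finrank ℝ (LinearMap.ker φ) < finrank ℝ (Q → ℝ) := Submodule.finrank_lt hWlt.ne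
    have h4 : finrank ℝ (Q → ℝ) = n := by
      rw [Module.finrank_fintype_fun_eq_card, hn]
    omega
  -- Claim A, applied to K and to R \ K
  have hone : (fun _ : Q => (1:ℝ)) ∈ Submodule.span ℝ ({fun _ : Q => (1:ℝ)} : Set (Q → ℝ)) :=
    Submodule.mem_span_singleton_self _
  have hsupfr : ∀ (x : Fin k → (Q → ℝ)),
      Submodule.span ℝ (Set.range x) ≤
        Stmt5Aux.UU δ y 0 ⊔ Submodule.span ℝ ({fun _ : Q => (1:ℝ)} : Set (Q → ℝ)) →
      finrank ℝ (Submodule.span ℝ (Set.range x)) ≤ d + 1 := by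
    intro x hxle
    have e1 : finrank ℝ (Submodule.span ℝ (Set.range x)) ≤
        finrank ℝ ↥(Stmt5Aux.UU δ y 0 ⊔
          Submodule.span ℝ ({fun _ : Q => (1:ℝ)} : Set (Q → ℝ))) :=
      Submodule.finrank_mono hxle
    have e2 := Submodule.finrank_sup_add_finrank_inf_eq (Stmt5Aux.UU δ y 0)
      (Submodule.span ℝ ({fun _ : Q => (1:ℝ)} : Set (Q → ℝ)))
    have e3 : finrank ℝ (Submodule.span ℝ ({fun _ : Q => (1:ℝ)} : Set (Q → ℝ))) ≤ 1 := by
      simpa using finrank_span_le_card ({fun _ : Q => (1:ℝ)} : Set (Q → ℝ))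
    omega
  have hymem : ∀ i : Fin k, y i ∈ Stmt5Aux.UU δ y 0 := by
    intro i
    apply Submodule.subset_span
    rw [Stmt5Aux.SS_zero]
    exact Set.mem_range_self i
  have hA : k ≤ c * (d + 1) := by
    set x : Fin k → (Q → ℝ) := fun i q => if run δ q (w i) ∈ K then (1:ℝ) else 0 with hx
    have hxle : Submodule.span ℝ (Set.range x) ≤
        Stmt5Aux.UU δ y 0 ⊔ Submodule.span ℝ ({fun _ : Q => (1:ℝ)} : Set (Q → ℝ)) := by
      apply Submodule.span_le.2
      rintro g ⟨i, rfl⟩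
      have hxi : x i = y i + ((c:ℝ)/(k:ℝ)) • (fun _ : Q => (1:ℝ)) := by
        funext q
        simp only [hx, hy, Pi.add_apply, Pi.smul_apply, smul_eq_mul, mul_one]
        ring
      rw [hxi]
      exact Submodule.add_mem _ (Submodule.mem_sup_left (hymem i))
        (Submodule.mem_sup_right (Submodule.smul_mem _ _ hone))
    have hcov : ∀ q ∈ R, ∃ i, x i q ≠ 0 := by
      intro q _
      obtain ⟨t, ht⟩ := hKne
      obtain ⟨i, hi⟩ := hhit q t (hKR ht)
      refine ⟨i, ?_⟩
      simp only [hx, hi, if_pos ht]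
      norm_num
    have hcard : ∀ i, (R.filter fun q => x i q ≠ 0).card ≤ c := by
      intro i
      have heq : (R.filter fun q => x i q ≠ 0) = R.filter fun q => run δ q (w i) ∈ K := by
        apply Finset.filter_congr
        intro q _
        by_cases hqK : run δ q (w i) ∈ K <;> simp [hx, hqK]
      rw [heq, hbal0 i]
    have h1 := Stmt5Aux.card_le_mul_finrank R x hcov hcard
    have h2 := hsupfr x hxle
    calc k = R.card := hRk.symm
      _ ≤ c * finrank ℝ (Submodule.span ℝ (Set.range x)) := h1
      _ ≤ c * (d + 1) := Nat.mul_le_mul_left c h2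
  have hB : k ≤ (k - c) * (d + 1) := by
    set x : Fin k → (Q → ℝ) := fun i q => if run δ q (w i) ∈ R \ K then (1:ℝ) else 0 with hx
    have hxle : Submodule.span ℝ (Set.range x) ≤
        Stmt5Aux.UU δ y 0 ⊔ Submodule.span ℝ ({fun _ : Q => (1:ℝ)} : Set (Q → ℝ)) := by
      apply Submodule.span_le.2
      rintro g ⟨i, rfl⟩
      have hxi : x i = (((k:ℝ) - c)/(k:ℝ)) • (fun _ : Q => (1:ℝ)) - y i := by
        funext q
        simp only [hx, hy, Pi.sub_apply, Pi.smul_apply, smul_eq_mul, mul_one]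
        by_cases hqK : run δ q (w i) ∈ K
        · rw [if_neg (by simp [Finset.mem_sdiff, hqK]), if_pos hqK]
          field_simp
          ring
        · rw [if_pos (Finset.mem_sdiff.2 ⟨hmemR q i, hqK⟩), if_neg hqK]
          field_simp
          ring
      rw [hxi]
      exact Submodule.sub_mem _
        (Submodule.mem_sup_right (Submodule.smul_mem _ _ hone))
        (Submodule.mem_sup_left (hymem i))
    have hcov : ∀ q ∈ R, ∃ i, x i q ≠ 0 := by
      intro q _
      have hne : (R \ K).Nonempty := by
        rw [← Finset.card_pos, Finset.card_sdiff_of_subset hKR, hRk]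
        omega
      obtain ⟨t, ht⟩ := hne
      obtain ⟨i, hi⟩ := hhit q t (Finset.mem_sdiff.1 ht).1
      refine ⟨i, ?_⟩
      simp only [hx, hi, if_pos ht]
      norm_num
    have hcard : ∀ i, (R.filter fun q => x i q ≠ 0).card ≤ k - c := by
      intro i
      have heq : (R.filter fun q => x i q ≠ 0) = R.filter fun q => ¬ (run δ q (w i) ∈ K) := by
        apply Finset.filter_congr
        intro q _
        by_cases hqK : run δ q (w i) ∈ K
        · simp [hx, Finset.mem_sdiff, hqK]
        · simp [hx, Finset.mem_sdiff, hqK, hmemR q i]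
      have hsplit := Finset.card_filter_add_card_filter_not
        (s := R) (p := fun q => run δ q (w i) ∈ K)
      rw [hbal0 i, hRk] at hsplit
      rw [heq]
      omega
    have h1 := Stmt5Aux.card_le_mul_finrank R x hcov hcard
    have h2 := hsupfr x hxle
    calc k = R.card := hRk.symm
      _ ≤ (k - c) * finrank ℝ (Submodule.span ℝ (Set.range x)) := h1
      _ ≤ (k - c) * (d + 1) := Nat.mul_le_mul_left (k - c) h2
  -- numeric endgame
  have hd1 : ((k:ℝ) - c) / c ≤ (d:ℝ) := by
    rw [div_le_iff₀ hcR]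
    have hAr : (k:ℝ) ≤ (c:ℝ) * ((d:ℝ) + 1) := by exact_mod_cast hA
    nlinarith
  have hd2 : (c:ℝ) / ((k:ℝ) - c) ≤ (d:ℝ) := by
    rw [div_le_iff₀ hkcR]
    have hBr : (k:ℝ) ≤ ((k:ℝ) - c) * ((d:ℝ) + 1) := by
      have h := hB
      have hle : c ≤ k := hck.le
      have : ((k - c : ℕ) : ℝ) = (k:ℝ) - c := by
        rw [Nat.cast_sub hle]
      calc (k:ℝ) = ((k:ℕ):ℝ) := rfl
        _ ≤ (((k - c) * (d + 1) : ℕ) : ℝ) := by exact_mod_cast h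
        _ = ((k:ℝ) - c) * ((d:ℝ) + 1) := by push_cast [Nat.cast_sub hle]; ring
    nlinarith
  have hmdr : (v₀.length : ℝ) + (d:ℝ) ≤ (n:ℝ) := by exact_mod_cast hmd
  have hmax := max_le hd1 hd2
  linarith
end

section
/- Let 𝒜 = ⟨Q, A, δ⟩ be an n-state automaton with an independent set W of k words with range R, let L_W be the maximal length of the words of W, and let M be the maximal cardinality of a reducible subset of R. Then for every state q ∈ R there exist a subset K ⊆ R and a word v which is either the empty word or of the form v'w with v' ∈ A* and w ∈ W, such that Card(K) = M, |v| ≤ (M − 1)(L_W + n + 1) − k·ln(M), and δ(K, v) = {q}. -/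
set_option linter.unusedSectionVars false
set_option linter.unusedVariables false
set_option maxHeartbeats 1000000

open Module Submodule

noncomputable section

namespace Stmt6Aux

/- ## Generic algebra: the Gram dimension bound -/

lemma swap4 {ι κ : Type*} (s t : Finset ι) (u v : Finset κ) (f : ι → ι → κ → κ → ℝ) :
    ∑ w ∈ s, ∑ w' ∈ t, ∑ i ∈ u, ∑ j ∈ v, f w w' i j
      = ∑ i ∈ u, ∑ j ∈ v, ∑ w ∈ s, ∑ w' ∈ t, f w w' i j :=
  calc ∑ w ∈ s, ∑ w' ∈ t, ∑ i ∈ u, ∑ j ∈ v, f w w' i j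
      = ∑ w ∈ s, ∑ i ∈ u, ∑ w' ∈ t, ∑ j ∈ v, f w w' i j :=
        Finset.sum_congr rfl (fun w _ => Finset.sum_comm)
    _ = ∑ i ∈ u, ∑ w ∈ s, ∑ w' ∈ t, ∑ j ∈ v, f w w' i j := Finset.sum_comm
    _ = ∑ i ∈ u, ∑ w ∈ s, ∑ j ∈ v, ∑ w' ∈ t, f w w' i j :=
        Finset.sum_congr rfl (fun i _ => Finset.sum_congr rfl (fun w _ => Finset.sum_comm))
    _ = ∑ i ∈ u, ∑ j ∈ v, ∑ w ∈ s, ∑ w' ∈ t, f w w' i j :=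
        Finset.sum_congr rfl (fun i _ => Finset.sum_comm)

lemma expand_sq {α : Type*} (J : Finset α) (f : α → ℝ) :
    (∑ i ∈ J, f i)^2 = ∑ i ∈ J, ∑ j ∈ J, f i * f j := by
  rw [sq, Finset.sum_mul_sum]

lemma key_alg {ι κ : Type*} (s : Finset ι) (I : Finset κ) (a : ι → κ → ℝ) :
    (∑ w ∈ s, ∑ i ∈ I, (a w i)^2)^2
      ≤ I.card * ∑ w ∈ s, ∑ w' ∈ s, (∑ i ∈ I, a w i * a w' i)^2 := by
  have identity : ∑ w ∈ s, ∑ w' ∈ s, (∑ i ∈ I, a w i * a w' i)^2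
      = ∑ i ∈ I, ∑ j ∈ I, (∑ w ∈ s, a w i * a w j)^2 := by
    simp_rw [expand_sq]
    rw [swap4]
    apply Finset.sum_congr rfl; intro i _
    apply Finset.sum_congr rfl; intro j _
    apply Finset.sum_congr rfl; intro w _
    apply Finset.sum_congr rfl; intro w' _
    ring
  rw [identity]
  set q : κ → ℝ := fun i => ∑ w ∈ s, (a w i)^2 with hq
  have hswap : ∑ w ∈ s, ∑ i ∈ I, (a w i)^2 = ∑ i ∈ I, q i := Finset.sum_comm
  rw [hswap]
  have cs : (∑ i ∈ I, q i)^2 ≤ (I.card : ℝ) * ∑ i ∈ I, (q i)^2 := by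
    have := Finset.sum_mul_sq_le_sq_mul_sq I (fun _ => (1:ℝ)) q
    simpa using this
  have diag : ∑ i ∈ I, (q i)^2 ≤ ∑ i ∈ I, ∑ j ∈ I, (∑ w ∈ s, a w i * a w j)^2 := by
    apply Finset.sum_le_sum
    intro i hi
    have h1 : (q i)^2 = (∑ w ∈ s, a w i * a w i)^2 := by simp [hq, sq]
    rw [h1]
    exact Finset.single_le_sum (f := fun j => (∑ w ∈ s, a w i * a w j)^2)
      (fun j _ => sq_nonneg _) hi
  calc (∑ i ∈ I, q i)^2 ≤ (I.card : ℝ) * ∑ i ∈ I, (q i)^2 := cs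
    _ ≤ (I.card : ℝ) * ∑ i ∈ I, ∑ j ∈ I, (∑ w ∈ s, a w i * a w j)^2 := by
        apply mul_le_mul_of_nonneg_left diag (by positivity)

lemma gram_dim_bound {E : Type*} [NormedAddCommGroup E] [InnerProductSpace ℝ E]
    [FiniteDimensional ℝ E] {ι : Type*} (s : Finset ι) (v : ι → E) :
    (∑ w ∈ s, (inner ℝ (v w) (v w) : ℝ))^2
      ≤ (finrank ℝ (span ℝ (v '' ↑s))) * ∑ w ∈ s, ∑ w' ∈ s, (inner ℝ (v w) (v w') : ℝ)^2 := by
  classical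
  set K := span ℝ (v '' (↑s : Set ι)) with hK
  have hmem : ∀ w ∈ s, v w ∈ K := fun w hw =>
    subset_span (Set.mem_image_of_mem v hw)
  set vK : ι → K := fun w => if h : w ∈ s then (⟨v w, hmem w h⟩ : K) else 0 with hvK
  set b := stdOrthonormalBasis ℝ K with hb
  set a : ι → Fin (finrank ℝ K) → ℝ := fun w i => b.repr (vK w) i with ha
  have hinner : ∀ w ∈ s, ∀ w' ∈ s, (inner ℝ (v w) (v w') : ℝ) = ∑ i, a w i * a w' i := by
    intro w hw w' hw'
    have h1 : (inner ℝ (v w) (v w') : ℝ) = inner ℝ (vK w) (vK w') := by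
      simp only [hvK, dif_pos hw, dif_pos hw']
      rfl
    rw [h1, ← LinearIsometryEquiv.inner_map_map b.repr]
    rw [PiLp.inner_apply]
    simp [RCLike.inner_apply, starRingEnd_apply, a]
    exact Finset.sum_congr rfl (fun i _ => mul_comm _ _)
  calc (∑ w ∈ s, (inner ℝ (v w) (v w) : ℝ))^2
      = (∑ w ∈ s, ∑ i, (a w i)^2)^2 := by
        congr 1
        apply Finset.sum_congr rfl
        intro w hw
        rw [hinner w hw w hw]
        simp [sq]
    _ ≤ (Finset.univ (α := Fin (finrank ℝ K))).card
          * ∑ w ∈ s, ∑ w' ∈ s, (∑ i, a w i * a w' i)^2 :=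
        key_alg s Finset.univ a
    _ = (finrank ℝ K) * ∑ w ∈ s, ∑ w' ∈ s, (inner ℝ (v w) (v w') : ℝ)^2 := by
        rw [Finset.card_univ, Fintype.card_fin]
        congr 1
        apply Finset.sum_congr rfl; intro w hw
        apply Finset.sum_congr rfl; intro w' hw'
        rw [hinner w hw w' hw']

/- ## Automaton counting -/

variable {Q A : Type*} [Fintype Q] [DecidableEq Q] [Fintype A]

lemma run_append (δ : Q → A → Q) (s : Q) (u v : List A) :
    run δ s (u ++ v) = run δ (run δ s u) v := List.foldl_append

variable {δ : Q → A → Q} {W : Finset (List A)} {R : Finset Q}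

lemma exists_word_to (hW : IsIndependent δ W R) (p r : Q) (hr : r ∈ R) :
    ∃ w ∈ W, run δ p w = r := by
  have := (hW.2 p) ▸ hr
  simpa using Finset.mem_image.1 this

lemma count_words (hW : IsIndependent δ W R) (p : Q) (T : Finset Q) (hT : T ⊆ R) :
    (W.filter fun w => run δ p w ∈ T).card = T.card := by
  have hinj : Set.InjOn (fun w => run δ p w) ↑W := by
    rw [← Finset.card_image_iff, hW.2 p, hW.1]
  apply Finset.card_bij (fun w _ => run δ p w)
  · intro w hw
    exact (Finset.mem_filter.1 hw).2
  · intro w₁ h₁ w₂ h₂ h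
    exact hinj (Finset.mem_filter.1 h₁).1 (Finset.mem_filter.1 h₂).1 h
  · intro t ht
    obtain ⟨w, hw, hrun⟩ := exists_word_to hW p t (hT ht)
    exact ⟨w, Finset.mem_filter.2 ⟨hw, hrun ▸ ht⟩, hrun⟩

lemma sum_yvec (hW : IsIndependent δ W R) (p : Q) (S : Finset Q) (hS : S ⊆ R) :
    ∑ w ∈ W, (if run δ p w ∈ S then (1:ℝ) else 0) = (S.card : ℝ) := by
  have h := count_words hW p S hS
  rw [Finset.card_filter] at h
  exact_mod_cast congrArg (Nat.cast : ℕ → ℝ) h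

end Stmt6Aux


namespace Stmt6Aux

variable {Q A : Type*} [Fintype Q] [DecidableEq Q] [Fintype A]
variable {δ : Q → A → Q} {W : Finset (List A)} {R : Finset Q}

section Defs
variable (δ : Q → A → Q) (R : Finset Q) (S : Finset Q)

def rho (u : List A) : Q → ℝ := fun p => ∑ s ∈ R, if run δ s u = p then 1 else 0

def yv (w : List A) : Q → ℝ := fun p => if run δ p w ∈ S then 1 else 0

def NN (u : List A) : ℕ := (R.filter fun s => run δ s u ∈ S).card

lemma rho_pair (u : List A) (f : Q → ℝ) :
    ∑ p, rho δ R u p * f p = ∑ s ∈ R, f (run δ s u) := by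
  unfold rho
  simp_rw [Finset.sum_mul, ite_mul, one_mul, zero_mul]
  rw [Finset.sum_comm]
  apply Finset.sum_congr rfl
  intro s _
  simp

lemma rho_total (u : List A) : ∑ p, rho δ R u p = (R.card : ℝ) := by
  have := rho_pair δ R u (fun _ => 1)
  simpa using this

lemma NN_real (u : List A) :
    ((NN δ R S u : ℕ) : ℝ) = ∑ s ∈ R, if run δ s u ∈ S then (1:ℝ) else 0 := by
  unfold NN
  rw [Finset.card_filter]
  push_cast
  rfl

lemma rho_pair_y (u w : List A) :
    ∑ p, rho δ R u p * yv δ S w p = ((NN δ R S (u ++ w) : ℕ) : ℝ) := by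
  rw [rho_pair, NN_real]
  apply Finset.sum_congr rfl
  intro s _
  simp only [yv, run_append]

def Pa (a : A) : (Q → ℝ) →ₗ[ℝ] (Q → ℝ) where
  toFun g := fun p => ∑ p', if δ p' a = p then g p' else 0
  map_add' g h := by
    funext p
    show (∑ p', if δ p' a = p then (g + h) p' else 0)
      = (∑ p', if δ p' a = p then g p' else 0) + (∑ p', if δ p' a = p then h p' else 0)
    rw [← Finset.sum_add_distrib]
    apply Finset.sum_congr rfl
    intro p' _
    by_cases hc : δ p' a = p <;> simp [hc]
  map_smul' c g := by
    funext p
    show (∑ p', if δ p' a = p then (c • g) p' else 0)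
      = c * (∑ p', if δ p' a = p then g p' else 0)
    rw [Finset.mul_sum]
    apply Finset.sum_congr rfl
    intro p' _
    by_cases hc : δ p' a = p <;> simp [hc]

lemma rho_concat (u : List A) (a : A) :
    rho δ R (u ++ [a]) = Pa δ a (rho δ R u) := by
  funext p
  show _ = ∑ p', if δ p' a = p then rho δ R u p' else 0
  unfold rho
  have hrc : ∀ s : Q, run δ s (u ++ [a]) = δ (run δ s u) a := fun s => by
    simp [run, List.foldl_append]
  simp_rw [hrc]
  have h2 : ∀ p' : Q, (if δ p' a = p then ∑ s ∈ R, (if run δ s u = p' then (1:ℝ) else 0) else 0)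
      = ∑ s ∈ R, (if run δ s u = p' then (if δ p' a = p then (1:ℝ) else 0) else 0) := by
    intro p'
    by_cases hc : δ p' a = p
    · simp only [hc, if_true]
    · simp [hc]
  simp_rw [h2]
  rw [Finset.sum_comm]
  apply Finset.sum_congr rfl
  intro s _
  simp

def Wsp (j : ℕ) : Submodule ℝ (Q → ℝ) :=
  Submodule.span ℝ {g | ∃ u : List A, u.length ≤ j ∧ rho δ R u = g}

lemma wsp_mono {i j : ℕ} (h : i ≤ j) : Wsp δ R i ≤ Wsp δ R j :=
  Submodule.span_mono (fun g ⟨u, hu, he⟩ => ⟨u, hu.trans h, he⟩)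

lemma rho_mem {u : List A} {j : ℕ} (h : u.length ≤ j) : rho δ R u ∈ Wsp δ R j :=
  Submodule.subset_span ⟨u, h, rfl⟩

lemma map_Pa_le (a : A) (j : ℕ) : (Wsp δ R j).map (Pa δ a) ≤ Wsp δ R (j+1) := by
  rw [Submodule.map_le_iff_le_comap]
  apply Submodule.span_le.2
  rintro g ⟨u, hu, rfl⟩
  simp only [SetLike.mem_coe, Submodule.mem_comap]
  rw [← rho_concat]
  exact rho_mem δ R (by simp only [List.length_append, List.length_cons, List.length_nil]; omega)

lemma wsp_step (j : ℕ) : Wsp δ R (j+1) ≤ Wsp δ R j ⊔ ⨆ a, (Wsp δ R j).map (Pa δ a) := by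
  apply Submodule.span_le.2
  rintro g ⟨u, hu, rfl⟩
  rcases List.eq_nil_or_concat u with rfl | ⟨u', a, rfl⟩
  all_goals try simp only [List.concat_eq_append] at *
  · exact Submodule.mem_sup_left (rho_mem δ R (Nat.zero_le j))
  · apply Submodule.mem_sup_right
    have hu' : u'.length ≤ j := by simpa using hu
    have : rho δ R (u' ++ [a]) ∈ (Wsp δ R j).map (Pa δ a) :=
      ⟨rho δ R u', rho_mem δ R hu', (rho_concat δ R u' a).symm⟩
    exact Submodule.mem_iSup_of_mem a this

lemma wsp_stab {j : ℕ} (h : Wsp δ R (j+1) = Wsp δ R j) : ∀ i, Wsp δ R (j+i) = Wsp δ R j := by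
  intro i
  induction i with
  | zero => rfl
  | succ i ih =>
    apply le_antisymm
    · have := wsp_step δ R (j+i)
      rw [ih] at this
      refine le_trans this (sup_le le_rfl (iSup_le fun a => ?_))
      exact le_trans (map_Pa_le δ R a j) h.le
    · exact wsp_mono δ R (Nat.le_add_right j (i+1))

lemma rho_mem_stab {j : ℕ} (h : Wsp δ R (j+1) = Wsp δ R j) (u : List A) :
    rho δ R u ∈ Wsp δ R j := by
  have := wsp_stab δ R h u.length
  exact this ▸ rho_mem δ R (Nat.le_add_left _ _)

lemma wsp_growth (hR : R.Nonempty) (t : ℕ) (h : ∀ j < t, Wsp δ R (j+1) ≠ Wsp δ R j) :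
    t + 1 ≤ Module.finrank ℝ (Wsp δ R t) := by
  induction t with
  | zero =>
    have hne : rho δ R [] ≠ 0 := by
      intro h0
      obtain ⟨s0, hs0⟩ := hR
      have h1 : rho δ R [] s0 = 0 := congrFun h0 s0
      rw [show rho δ R [] s0 = 1 from by show (∑ s ∈ R, if s = s0 then (1:ℝ) else 0) = 1; simp [Finset.sum_ite_eq', hs0]] at h1
      norm_num at h1
    have : Wsp δ R 0 ≠ ⊥ := by
      intro hbot
      exact hne (by simpa [hbot] using rho_mem δ R (u := []) (j := 0) le_rfl)
    simpa using Submodule.one_le_finrank_iff.2 this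
  | succ t ih =>
    have hlt : Wsp δ R t < Wsp δ R (t+1) :=
      lt_of_le_of_ne (wsp_mono δ R (Nat.le_succ t)) (Ne.symm (h t (Nat.lt_succ_self t)))
    have := Submodule.finrank_lt_finrank_of_lt hlt
    have iht := ih (fun j hj => h j (hj.trans (Nat.lt_succ_self t)))
    omega

end Defs

/- ## The extension lemma -/

lemma F1 (hW : IsIndependent δ W R) {S : Finset Q} (hS : S ⊆ R) (v' : List A) :
    ∑ w ∈ W, ((NN δ R S (v' ++ w) : ℕ) : ℝ) = (W.card : ℝ) * (S.card : ℝ) := by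
  simp_rw [NN_real, run_append]
  rw [Finset.sum_comm]
  have : ∀ s ∈ R, ∑ w ∈ W, (if run δ (run δ s v') w ∈ S then (1:ℝ) else 0) = (S.card:ℝ) :=
    fun s _ => sum_yvec hW _ S hS
  rw [Finset.sum_congr rfl this]
  rw [Finset.sum_const, nsmul_eq_mul, hW.1]

lemma all_eq (hW : IsIndependent δ W R) {S : Finset Q} (hS : S ⊆ R) (v' : List A)
    (hle : ∀ w ∈ W, NN δ R S (v' ++ w) ≤ S.card) :
    ∀ w ∈ W, NN δ R S (v' ++ w) = S.card := by
  by_contra hcon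
  push_neg at hcon
  obtain ⟨w0, hw0, hne⟩ := hcon
  have hlt : NN δ R S (v' ++ w0) < S.card := lt_of_le_of_ne (hle w0 hw0) hne
  have hstrict : ∑ w ∈ W, ((NN δ R S (v' ++ w) : ℕ) : ℝ) < ∑ w ∈ W, (S.card : ℝ) := by
    apply Finset.sum_lt_sum (fun w hw => by exact_mod_cast hle w hw)
    exact ⟨w0, hw0, by exact_mod_cast hlt⟩
  rw [F1 hW hS, Finset.sum_const, nsmul_eq_mul] at hstrict
  exact lt_irrefl _ hstrict

def resR (R : Finset Q) : (Q → ℝ) →ₗ[ℝ] (Q → ℝ) where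
  toFun g := fun p => if p ∈ R then g p else 0
  map_add' g h := by
    funext p
    show (if p ∈ R then (g + h) p else 0) = (if p ∈ R then g p else 0) + (if p ∈ R then h p else 0)
    by_cases hc : p ∈ R <;> simp [hc]
  map_smul' c g := by
    funext p
    show (if p ∈ R then (c • g) p else 0) = c * (if p ∈ R then g p else 0)
    by_cases hc : p ∈ R <;> simp [hc]

lemma extension (hW : IsIndependent δ W R)
    (S : Finset Q) (hS : S ⊆ R) (hS1 : 1 ≤ S.card)
    (K0 : Finset Q) (hK0R : K0 ⊆ R) (hK0red : Reducible δ K0) (hbig : S.card < K0.card) :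
    ∃ v' w, w ∈ W ∧
      ((v'.length : ℝ) ≤ (Fintype.card Q : ℝ) + 1 - (W.card : ℝ)/(S.card : ℝ)) ∧
      S.card + 1 ≤ NN δ R S (v' ++ w) := by
  classical
  by_contra hcon
  push_neg at hcon
  -- notation
  have hkR : W.card = R.card := hW.1
  have hk1 : 1 ≤ W.card := by
    have := Finset.card_le_card hS
    omega
  have hm0 : (0:ℝ) < (S.card : ℝ) := by exact_mod_cast hS1
  have hk0 : (0:ℝ) < (W.card : ℝ) := by exact_mod_cast hk1
  have hkn : W.card ≤ Fintype.card Q := by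
    rw [hkR]; exact Finset.card_le_univ R
  have hdivk : (W.card : ℝ)/(S.card : ℝ) ≤ (W.card : ℝ) := by
    apply div_le_self (le_of_lt hk0)
    exact_mod_cast hS1
  have hzero_ok : (0:ℝ) ≤ (Fintype.card Q : ℝ) + 1 - (W.card : ℝ)/(S.card : ℝ) := by
    have : (W.card : ℝ) ≤ (Fintype.card Q : ℝ) := by exact_mod_cast hkn
    linarith
  have hle_of_len : ∀ (v' : List A), (v'.length : ℝ) ≤ (Fintype.card Q : ℝ) + 1
        - (W.card : ℝ)/(S.card : ℝ) → ∀ w ∈ W, NN δ R S (v' ++ w) = S.card := by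
    intro v' hlen
    apply all_eq hW hS
    intro w hw
    have := hcon v' w hw hlen
    omega
  -- the vectors
  set yvW : {x // x ∈ W} → (Q → ℝ) := fun w => yv δ S (w : List A) with hyvW
  set cvW : {x // x ∈ W} → (Q → ℝ) := fun w => resR R (yvW w) with hcvW
  set equivE : (Q → ℝ) ≃ₗ[ℝ] EuclideanSpace ℝ Q :=
    (WithLp.linearEquiv 2 ℝ (Q → ℝ)).symm with hequivE
  set cvE : {x // x ∈ W} → EuclideanSpace ℝ Q := fun w => equivE (cvW w) with hcvE
  have happ : ∀ (g : Q → ℝ) (p : Q), (equivE g) p = g p := fun g p => rfl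
  have hinner : ∀ w w' : {x // x ∈ W},
      (inner ℝ (cvE w) (cvE w') : ℝ) = ∑ s ∈ R, yvW w s * yvW w' s := by
    intro w w'
    rw [PiLp.inner_apply]
    simp only [RCLike.inner_apply, starRingEnd_apply, star_trivial]
    have : ∀ p : Q, (cvE w) p * (cvE w') p
        = if p ∈ R then yvW w p * yvW w' p else 0 := by
      intro p
      show (if p ∈ R then yvW w p else 0) * (if p ∈ R then yvW w' p else 0) = _
      by_cases hc : p ∈ R <;> simp [hc]
    rw [Finset.sum_congr rfl (fun p _ => mul_comm ((cvE w') p) ((cvE w) p))]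
    rw [Finset.sum_congr rfl (fun p _ => this p)]
    rw [Finset.sum_ite_mem]
    simp
  have hNw : ∀ w ∈ W, NN δ R S w = S.card := by
    intro w hw
    have := hle_of_len [] (by simpa using hzero_ok) w hw
    simpa using this
  have hyy : ∀ w : {x // x ∈ W}, ∑ s ∈ R, yvW w s * yvW w s = (S.card : ℝ) := by
    intro w
    have h1 : ∀ s : Q, yvW w s * yvW w s = if run δ s (w:List A) ∈ S then (1:ℝ) else 0 := by
      intro s
      show (if run δ s (w:List A) ∈ S then (1:ℝ) else 0) * _ = _
      by_cases hc : run δ s (w:List A) ∈ S <;> simp [hyvW, yv, hc]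
    rw [Finset.sum_congr rfl (fun s _ => h1 s), ← NN_real, hNw w w.2]
  have hrowsum : ∀ w : {x // x ∈ W},
      ∑ w' ∈ W, ∑ s ∈ R, yvW w s * yv δ S w' s = (S.card : ℝ) * (S.card : ℝ) := by
    intro w
    rw [Finset.sum_comm]
    have h1 : ∀ s ∈ R, ∑ w' ∈ W, yvW w s * yv δ S w' s = yvW w s * (S.card : ℝ) := by
      intro s _
      rw [← Finset.mul_sum]
      congr 1
      exact sum_yvec hW s S hS
    rw [Finset.sum_congr rfl h1, ← Finset.sum_mul]
    simp only [hyvW, yv]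
    rw [← NN_real, hNw w w.2]
  have hgle : ∀ (w w' : {x // x ∈ W}), ∑ s ∈ R, yvW w s * yvW w' s ≤ (S.card : ℝ) := by
    intro w w'
    have h1 : ∀ s ∈ R, yvW w s * yvW w' s ≤ (if run δ s (w':List A) ∈ S then (1:ℝ) else 0) := by
      intro s _
      show (if run δ s (w:List A) ∈ S then (1:ℝ) else 0) * (if run δ s (w':List A) ∈ S then (1:ℝ) else 0) ≤ _
      by_cases h1 : run δ s (w:List A) ∈ S <;> by_cases h2 : run δ s (w':List A) ∈ S <;> simp [h1, h2]
    calc ∑ s ∈ R, yvW w s * yvW w' s ≤ ∑ s ∈ R, (if run δ s (w':List A) ∈ S then (1:ℝ) else 0) :=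
          Finset.sum_le_sum h1
      _ = (S.card : ℝ) := by rw [← NN_real, hNw _ w'.2]
  have hgpos : ∀ (w w' : {x // x ∈ W}), (0:ℝ) ≤ ∑ s ∈ R, yvW w s * yvW w' s := by
    intro w w'
    apply Finset.sum_nonneg
    intro s _
    show (0:ℝ) ≤ (if run δ s (w:List A) ∈ S then (1:ℝ) else 0) * (if run δ s (w':List A) ∈ S then (1:ℝ) else 0)
    by_cases h1 : run δ s (w:List A) ∈ S <;> by_cases h2 : run δ s (w':List A) ∈ S <;> simp [h1, h2]
  -- Gram bound
  set c : ℕ := finrank ℝ (span ℝ (cvE '' (↑(Finset.univ : Finset {x // x ∈ W}) : Set {x // x ∈ W}))) with hc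
  have gram := gram_dim_bound (Finset.univ : Finset {x // x ∈ W}) cvE
  rw [← hc] at gram
  have hL : ∑ w : {x // x ∈ W}, (inner ℝ (cvE w) (cvE w) : ℝ) = (W.card : ℝ) * (S.card : ℝ) := by
    rw [Finset.sum_congr rfl (fun w _ => (hinner w w).trans (hyy w))]
    simp [mul_comm]
  have hRHS : ∑ w : {x // x ∈ W}, ∑ w' : {x // x ∈ W}, (inner ℝ (cvE w) (cvE w') : ℝ)^2
      ≤ (W.card : ℝ) * ((S.card : ℝ))^3 := by
    have hsub : ∀ w : {x // x ∈ W}, ∑ w' : {x // x ∈ W}, (inner ℝ (cvE w) (cvE w') : ℝ)^2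
        ≤ ((S.card : ℝ))^3 := by
      intro w
      have h1 : ∀ w' : {x // x ∈ W}, (inner ℝ (cvE w) (cvE w') : ℝ)^2
          ≤ (S.card : ℝ) * (inner ℝ (cvE w) (cvE w') : ℝ) := by
        intro w'
        rw [hinner]
        have := hgle w w'
        have := hgpos w w'
        nlinarith [hgle w w', hgpos w w']
      calc ∑ w' : {x // x ∈ W}, (inner ℝ (cvE w) (cvE w') : ℝ)^2
          ≤ ∑ w' : {x // x ∈ W}, (S.card : ℝ) * (inner ℝ (cvE w) (cvE w') : ℝ) :=
            Finset.sum_le_sum (fun w' _ => h1 w')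
        _ = (S.card : ℝ) * ∑ w' : {x // x ∈ W}, (inner ℝ (cvE w) (cvE w') : ℝ) := by
            rw [Finset.mul_sum]
        _ = (S.card : ℝ) * ((S.card : ℝ) * (S.card : ℝ)) := by
            congr 1
            rw [Finset.sum_congr rfl (fun w' _ => hinner w w')]
            have h5 := hrowsum w
            rw [← h5]
            try exact Finset.sum_coe_sort W (fun w' => ∑ s ∈ R, yvW w s * yv δ S w' s)
        _ = ((S.card : ℝ))^3 := by ring
    calc ∑ w : {x // x ∈ W}, ∑ w' : {x // x ∈ W}, (inner ℝ (cvE w) (cvE w') : ℝ)^2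
        ≤ ∑ _w : {x // x ∈ W}, ((S.card : ℝ))^3 := Finset.sum_le_sum (fun w _ => hsub w)
      _ = (W.card : ℝ) * ((S.card : ℝ))^3 := by
          rw [Finset.sum_const]
          simp [mul_comm]
  have hckm : (W.card : ℝ) ≤ (c : ℝ) * (S.card : ℝ) := by
    rw [hL] at gram
    have h2 : ((W.card : ℝ) * (S.card : ℝ))^2 ≤ (c:ℝ) * ((W.card : ℝ) * ((S.card : ℝ))^3) := by
      calc ((W.card : ℝ) * (S.card : ℝ))^2
          ≤ (c:ℝ) * ∑ w : {x // x ∈ W}, ∑ w' : {x // x ∈ W}, (inner ℝ (cvE w) (cvE w') : ℝ)^2 := gram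
        _ ≤ (c:ℝ) * ((W.card : ℝ) * ((S.card : ℝ))^3) := by
            apply mul_le_mul_of_nonneg_left hRHS (by positivity)
    by_contra hlt
    push_neg at hlt
    have h3 : (c:ℝ)*(S.card:ℝ) * ((W.card:ℝ) * ((S.card:ℝ))^2) < (W.card:ℝ) * ((W.card:ℝ)*((S.card:ℝ))^2) :=
      mul_lt_mul_of_pos_right hlt (by positivity)
    nlinarith [h2, h3]
  have hc1 : 1 ≤ c := by
    by_contra hcc
    have : c = 0 := by omega
    rw [this] at hckm
    simp only [Nat.cast_zero, zero_mul] at hckm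
    linarith [hckm, hk0]
  have hcQ : c ≤ Fintype.card Q := by
    have h1 := Submodule.finrank_le (span ℝ (cvE '' (↑(Finset.univ : Finset {x // x ∈ W}) : Set {x // x ∈ W})))
    rw [← hc] at h1
    rwa [finrank_euclideanSpace] at h1
  -- threshold
  set t : ℕ := Fintype.card Q + 1 - c with ht
  have ht_real : (t : ℝ) ≤ (Fintype.card Q : ℝ) + 1 - (W.card : ℝ)/(S.card : ℝ) := by
    have h1 : (t : ℝ) = (Fintype.card Q : ℝ) + 1 - (c : ℝ) := by
      rw [ht]
      have : c ≤ Fintype.card Q + 1 := by omega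
      push_cast [Nat.cast_sub this]
      ring
    rw [h1]
    have h2 : (W.card : ℝ)/(S.card : ℝ) ≤ (c : ℝ) := by
      rw [div_le_iff₀ hm0]
      exact hckm
    linarith
  have HC : ∀ v' : List A, v'.length ≤ t → ∀ w ∈ W, NN δ R S (v' ++ w) = S.card := by
    intro v' hlen
    apply hle_of_len
    calc ((v'.length : ℕ) : ℝ) ≤ (t : ℝ) := by exact_mod_cast hlen
      _ ≤ _ := ht_real
  -- the functional matrix
  set Mt : Matrix {x // x ∈ W} Q ℝ :=
    fun w p => yvW w p - (S.card : ℝ)/(W.card : ℝ) with hMt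
  set Φ : (Q → ℝ) →ₗ[ℝ] ({x // x ∈ W} → ℝ) := Mt.mulVecLin with hPhi
  have phi_rho : ∀ (u : List A) (w : {x // x ∈ W}),
      Φ (rho δ R u) w = ((NN δ R S (u ++ (w : List A)) : ℕ) : ℝ) - (S.card : ℝ) := by
    intro u w
    have h1 : Φ (rho δ R u) w = ∑ p, Mt w p * rho δ R u p := by
      rw [hPhi, Matrix.mulVecLin_apply]
      rfl
    rw [h1]
    have h2 : ∀ p : Q, Mt w p * rho δ R u p
        = rho δ R u p * yv δ S (w : List A) p - (S.card : ℝ)/(W.card : ℝ) * rho δ R u p := by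
      intro p
      show (yvW w p - (S.card : ℝ)/(W.card : ℝ)) * rho δ R u p = _
      simp only [hyvW]; ring
    rw [Finset.sum_congr rfl (fun p _ => h2 p), Finset.sum_sub_distrib, ← Finset.mul_sum,
      rho_pair_y, rho_total, ← hkR]
    congr 1
    field_simp
  have hker : Wsp δ R t ≤ LinearMap.ker Φ := by
    apply Submodule.span_le.2
    rintro g ⟨u, hu, rfl⟩
    simp only [SetLike.mem_coe, LinearMap.mem_ker]
    funext w
    rw [phi_rho u w, HC u hu (w : List A) w.2]
    simp
  -- rank bound
  have hrank : c ≤ finrank ℝ (LinearMap.range Φ) + 1 := by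
    have hrk0 : finrank ℝ (LinearMap.range Φ) = Mt.rank := rfl
    have hrk1 : Mt.rank = Mt.transpose.rank := (Matrix.rank_transpose Mt).symm
    have hrk2 : Mt.transpose.rank = finrank ℝ (span ℝ (Set.range Mt)) := by
      rw [Matrix.rank, Matrix.range_mulVecLin]; rfl
    -- c = finrank span cvW
    have e1 : span ℝ (cvE '' (↑(Finset.univ : Finset {x // x ∈ W}) : Set {x // x ∈ W}))
        = Submodule.map (equivE : (Q → ℝ) →ₗ[ℝ] EuclideanSpace ℝ Q) (span ℝ (Set.range cvW)) := by
      rw [Submodule.map_span]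
      congr 1
      rw [Finset.coe_univ, Set.image_univ, ← Set.range_comp]
      rfl
    have e2 : c = finrank ℝ (span ℝ (Set.range cvW)) := by
      rw [hc, e1]
      exact LinearEquiv.finrank_map_eq equivE _
    -- span cvW = map resR (span yvW)
    have e3 : span ℝ (Set.range cvW) = Submodule.map (resR R) (span ℝ (Set.range yvW)) := by
      rw [Submodule.map_span]
      congr 1
      rw [← Set.range_comp]
      rfl
    have e4 : finrank ℝ (span ℝ (Set.range cvW)) ≤ finrank ℝ (span ℝ (Set.range yvW)) := by
      rw [e3]
      exact Submodule.finrank_map_le (resR R) _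
    -- span yvW ≤ span rows ⊔ span 1
    have e5 : span ℝ (Set.range yvW) ≤ span ℝ (Set.range Mt) ⊔ span ℝ {(fun _ => (1:ℝ) : Q → ℝ)} := by
      apply Submodule.span_le.2
      rintro g ⟨w, rfl⟩
      have hdecomp : yvW w = Mt w + ((S.card : ℝ)/(W.card : ℝ)) • (fun _ => (1:ℝ) : Q → ℝ) := by
        funext p
        show yvW w p = (yvW w p - (S.card : ℝ)/(W.card : ℝ)) + (S.card : ℝ)/(W.card : ℝ) * 1
        ring
      rw [hdecomp]
      exact Submodule.add_mem _
        (Submodule.mem_sup_left (Submodule.subset_span ⟨w, rfl⟩))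
        (Submodule.mem_sup_right (Submodule.smul_mem _ _ (Submodule.subset_span rfl)))
    have e6 : finrank ℝ (span ℝ (Set.range yvW))
        ≤ finrank ℝ (span ℝ (Set.range Mt)) + 1 := by
      have h1 := Submodule.finrank_mono (M := Q → ℝ) e5
      have h2 := Submodule.finrank_sup_add_finrank_inf_eq
        (span ℝ (Set.range Mt)) (span ℝ {(fun _ => (1:ℝ) : Q → ℝ)})
      have h3 : finrank ℝ (span ℝ {(fun _ => (1:ℝ) : Q → ℝ)}) ≤ 1 := by
        apply le_trans (finrank_span_le_card _)
        simp
      omega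
    rw [hrk0, hrk1, hrk2]
    omega
  have hkerle : finrank ℝ (LinearMap.ker Φ) ≤ t := by
    have h1 := LinearMap.finrank_range_add_finrank_ker Φ
    rw [Module.finrank_pi ℝ] at h1
    omega
  -- contradiction
  have hRne : R.Nonempty := by
    rw [← Finset.card_pos, ← hkR]
    omega
  by_cases hstab : ∀ j < t, Wsp δ R (j+1) ≠ Wsp δ R j
  · have hg := wsp_growth δ R hRne t hstab
    have hle := Submodule.finrank_mono (M := Q → ℝ) hker
    omega
  · push_neg at hstab
    obtain ⟨j, hj, heq⟩ := hstab
    obtain ⟨z, p0, himg⟩ := hK0red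
    obtain ⟨s0, hs0⟩ := Finset.card_pos.1 hS1
    obtain ⟨w1, hw1, hw1run⟩ := exists_word_to hW p0 s0 (hS hs0)
    have hmem : rho δ R z ∈ Wsp δ R t :=
      wsp_mono δ R (le_of_lt hj) (rho_mem_stab δ R heq z)
    have hzker : Φ (rho δ R z) = 0 := LinearMap.mem_ker.1 (hker hmem)
    have h0 : Φ (rho δ R z) ⟨w1, hw1⟩ = 0 := by rw [hzker]; rfl
    rw [phi_rho] at h0
    have hNz : NN δ R S (z ++ w1) = S.card := by
      have := sub_eq_zero.1 h0
      exact_mod_cast this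
    have hKsub : K0 ⊆ R.filter (fun s => run δ s (z ++ w1) ∈ S) := by
      intro s hsK
      refine Finset.mem_filter.2 ⟨hK0R hsK, ?_⟩
      have hrz : run δ s z = p0 := by
        have hmem2 : run δ s z ∈ K0.image (fun p => run δ p z) := Finset.mem_image_of_mem _ hsK
        rw [himg] at hmem2
        simpa using hmem2
      rw [run_append, hrz, hw1run]
      exact hs0
    have hcard := Finset.card_le_card hKsub
    have hNz' : (R.filter (fun s => run δ s (z ++ w1) ∈ S)).card = S.card := hNz
    omega

/- ## The potential function and the main construction -/

def FF (L M k n m : ℕ) : ℝ :=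
  ((M:ℝ) - m) * ((L:ℝ) + (n:ℝ) + 1) - (k:ℝ) * (Real.log M - Real.log m)

lemma FF_self (L M k n : ℕ) : FF L M k n M = 0 := by unfold FF; ring

lemma step_ineq (L M k n : ℕ) (hk1 : 1 ≤ k) (hkn : k ≤ n) {m m' : ℕ}
    (hm : 1 ≤ m) (hmm : m < m') :
    ((L:ℝ) + n + 1 - (k:ℝ)/(m:ℝ)) + FF L M k n m' ≤ FF L M k n m := by
  unfold FF
  have hm0 : (0:ℝ) < m := by exact_mod_cast hm
  have hm'0 : (0:ℝ) < m' := by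
    have : (m:ℝ) < m' := by exact_mod_cast hmm
    linarith
  have hlog : Real.log (m':ℝ) - Real.log (m:ℝ) ≤ ((m':ℝ) - m)/m := by
    rw [← Real.log_div (ne_of_gt hm'0) (ne_of_gt hm0)]
    have h := Real.log_le_sub_one_of_pos (div_pos hm'0 hm0)
    calc Real.log ((m':ℝ)/m) ≤ (m':ℝ)/m - 1 := h
      _ = ((m':ℝ) - m)/m := by field_simp
  have h1 : (k:ℝ) * (Real.log m' - Real.log m) ≤ (k:ℝ)/m * ((m':ℝ) - m) := by
    have := mul_le_mul_of_nonneg_left hlog (by positivity : (0:ℝ) ≤ (k:ℝ))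
    calc (k:ℝ) * (Real.log m' - Real.log m) ≤ (k:ℝ) * (((m':ℝ) - m)/m) := this
      _ = (k:ℝ)/m * ((m':ℝ) - m) := by ring
  have h3 : (k:ℝ)/m ≤ (L:ℝ) + n + 1 := by
    have ha : (k:ℝ)/m ≤ (k:ℝ) := div_le_self (by positivity) (by exact_mod_cast hm)
    have hb : (k:ℝ) ≤ (n:ℝ) := by exact_mod_cast hkn
    linarith
  have h4 : (1:ℝ) ≤ (m':ℝ) - m := by
    have : (m:ℝ) + 1 ≤ m' := by exact_mod_cast hmm
    linarith
  have h5 : ((m':ℝ) - m - 1) * ((k:ℝ)/m) ≤ ((m':ℝ) - m - 1) * ((L:ℝ)+n+1) :=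
    mul_le_mul_of_nonneg_left h3 (by linarith)
  nlinarith [h1, h5]

lemma build (hW : IsIndependent δ W R)
    (L M : ℕ)
    (hL : ∀ w ∈ W, w.length ≤ L)
    (hMub : ∀ K ⊆ R, Reducible δ K → K.card ≤ M)
    (K0 : Finset Q) (hK0R : K0 ⊆ R) (hK0red : Reducible δ K0) (hK0card : K0.card = M)
    (q : Q) (hq : q ∈ R) :
    ∀ d (S : Finset Q) (y : List A), M - S.card ≤ d → S ⊆ R → S.Nonempty →
      (y = [] ∨ ∃ (v' w : List A), w ∈ W ∧ y = v' ++ w) →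
      S.image (fun p => run δ p y) = {q} →
      ∃ (K : Finset Q) (v : List A), K ⊆ R ∧
        (v = [] ∨ ∃ (v' w : List A), w ∈ W ∧ v = v' ++ w) ∧
        K.card = M ∧
        ((v.length : ℝ) ≤ (y.length : ℝ) + FF L M W.card (Fintype.card Q) S.card) ∧
        K.image (fun p => run δ p v) = {q} := by
  have hk1 : 1 ≤ W.card := by
    rw [hW.1]
    exact Finset.card_pos.2 ⟨q, hq⟩
  have hkn : W.card ≤ Fintype.card Q := by
    rw [hW.1]; exact Finset.card_le_univ R
  intro d
  induction d with
  | zero =>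
    intro S y hd hSR hSne hform himg
    have hle : S.card ≤ M := hMub S hSR ⟨y, q, himg⟩
    have hEq : S.card = M := by omega
    refine ⟨S, y, hSR, hform, hEq, ?_, himg⟩
    rw [hEq, FF_self]
    simp
  | succ d ih =>
    intro S y hd hSR hSne hform himg
    have hle : S.card ≤ M := hMub S hSR ⟨y, q, himg⟩
    by_cases hEq : S.card = M
    · refine ⟨S, y, hSR, hform, hEq, ?_, himg⟩
      rw [hEq, FF_self]
      simp
    · have hlt : S.card < M := lt_of_le_of_ne hle hEq
      have hbig : S.card < K0.card := by omega
      obtain ⟨v', w, hw, hlen, hNext⟩ :=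
        extension hW S hSR hSne.card_pos K0 hK0R hK0red hbig
      set S' := R.filter (fun s => run δ s (v' ++ w) ∈ S) with hS'def
      have hS'R : S' ⊆ R := Finset.filter_subset _ _
      have hS'card : S.card + 1 ≤ S'.card := hNext
      have hS'ne : S'.Nonempty := Finset.card_pos.1 (by omega)
      set y' := (v' ++ w) ++ y with hy'def
      have himg' : S'.image (fun p => run δ p y') = {q} := by
        apply Finset.Subset.antisymm
        · intro x hx
          obtain ⟨s, hs, rfl⟩ := Finset.mem_image.1 hx
          have h1 : run δ s (v' ++ w) ∈ S := (Finset.mem_filter.1 hs).2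
          have h2 : run δ s y' = run δ (run δ s (v' ++ w)) y := run_append δ s _ y
          have h3 : run δ (run δ s (v' ++ w)) y ∈ S.image (fun p => run δ p y) :=
            Finset.mem_image_of_mem _ h1
          rw [himg] at h3
          rw [Finset.mem_singleton]
          rw [h2]
          exact Finset.mem_singleton.1 h3
        · obtain ⟨s, hs⟩ := hS'ne
          intro x hx
          rw [Finset.mem_singleton] at hx
          subst hx
          have h1 : run δ s (v' ++ w) ∈ S := (Finset.mem_filter.1 hs).2
          have h3 : run δ (run δ s (v' ++ w)) y ∈ S.image (fun p => run δ p y) :=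
            Finset.mem_image_of_mem _ h1
          rw [himg, Finset.mem_singleton] at h3
          apply Finset.mem_image.2
          exact ⟨s, hs, by rw [run_append δ s _ y, h3]⟩
      have hform' : y' = [] ∨ ∃ (v'' w'' : List A), w'' ∈ W ∧ y' = v'' ++ w'' := by
        right
        rcases hform with rfl | ⟨v0, w0, hw0, rfl⟩
        · exact ⟨v', w, hw, by simp [hy'def]⟩
        · exact ⟨v' ++ w ++ v0, w0, hw0, by simp [hy'def, List.append_assoc]⟩
      have hd' : M - S'.card ≤ d := by omega
      obtain ⟨K, v, hKR, hformv, hKcard, hlenv, himgv⟩ := ih S' y' hd' hS'R hS'ne hform' himg'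
      refine ⟨K, v, hKR, hformv, hKcard, ?_, himgv⟩
      have hwlen : (w.length : ℝ) ≤ (L : ℝ) := by exact_mod_cast hL w hw
      have hstep := step_ineq L M W.card (Fintype.card Q) hk1 hkn
        (Finset.card_pos.2 hSne) (show S.card < S'.card by omega)
      have hy'len : (y'.length : ℝ) = (v'.length : ℝ) + (w.length : ℝ) + (y.length : ℝ) := by
        rw [hy'def]
        push_cast [List.length_append]
        ring
      calc (v.length : ℝ) ≤ (y'.length : ℝ) + FF L M W.card (Fintype.card Q) S'.card := hlenv
        _ = (v'.length : ℝ) + (w.length : ℝ) + (y.length : ℝ)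
              + FF L M W.card (Fintype.card Q) S'.card := by rw [hy'len]
        _ ≤ (y.length : ℝ) + FF L M W.card (Fintype.card Q) S.card := by
            have := hlen
            linarith [hstep, hwlen, hlen]

end Stmt6Aux

/-- For every `q ∈ R` there exist `K ⊆ R` and a word `v ∈ A*W ∪ {ε}` such that
`Card K = M`, `|v| ≤ (M − 1)(L_W + n + 1) − k·ln M` and `δ(K, v) = {q}`. -/
theorem stmt_6 {Q A : Type*} [Fintype Q] [DecidableEq Q] [Fintype A]
    (δ : Q → A → Q) (W : Finset (List A)) (R : Finset Q) (k : ℕ)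
    (hW : IsIndependent δ W R) (hk : W.card = k)
    (L : ℕ) (hLub : ∀ w ∈ W, w.length ≤ L) (hLmem : ∃ w ∈ W, w.length = L)
    (M : ℕ)
    (hMub : ∀ K ⊆ R, Reducible δ K → K.card ≤ M)
    (hMmem : ∃ K ⊆ R, Reducible δ K ∧ K.card = M)
    (q : Q) (hq : q ∈ R) :
    ∃ (K : Finset Q) (v : List A), K ⊆ R ∧
      (v = [] ∨ ∃ (v' : List A) (w : List A), w ∈ W ∧ v = v' ++ w) ∧
      K.card = M ∧
      (v.length : ℝ) ≤ ((M : ℝ) - 1) * ((L : ℝ) + (Fintype.card Q : ℝ) + 1)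
        - (k : ℝ) * Real.log (M : ℝ) ∧
      K.image (fun p => run δ p v) = {q} := by
  classical
  obtain ⟨K0, hK0R, hK0red, hK0card⟩ := hMmem
  have hqR : ({q} : Finset Q) ⊆ R := by simpa using hq
  have hqred : Reducible δ ({q} : Finset Q) := ⟨[], q, by simp [run]⟩
  have hbuild := Stmt6Aux.build hW L M hLub hMub K0 hK0R hK0red hK0card q hq M {q} []
    (by simpa using Nat.sub_le M 1) hqR ⟨q, Finset.mem_singleton_self q⟩
    (Or.inl rfl) (by simp [run])
  obtain ⟨K, v, hKR, hform, hKcard, hlen, himg⟩ := hbuild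
  refine ⟨K, v, hKR, hform, hKcard, ?_, himg⟩
  have hFF : Stmt6Aux.FF L M W.card (Fintype.card Q) ({q} : Finset Q).card
      = ((M:ℝ) - 1) * ((L:ℝ) + (Fintype.card Q : ℝ) + 1) - (k:ℝ) * Real.log (M : ℝ) := by
    rw [Finset.card_singleton, hk]
    unfold Stmt6Aux.FF
    push_cast
    rw [Real.log_one]
    ring
  rw [hFF] at hlen
  simpa using hlen
end
end

section
/- Let 𝒜 = ⟨Q, A, δ⟩ be an automaton with an independent set W with range R, and let K be a reducible subset of R of maximal cardinality among reducible subsets of R. Then there is no stable pair (p, q) with p ∈ K and q ∈ R \ K. -/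
/-- The pair `(p, q)` is stable if, for every word `u`, the set `{δ(p,u), δ(q,u)}`
is reducible, i.e. some word `v` takes `δ(p,u)` and `δ(q,u)` to the same state. -/
def StablePair {Q A : Type*} (δ : Q → A → Q) (p q : Q) : Prop :=
  ∀ u : List A, ∃ v : List A, run δ (run δ p u) v = run δ (run δ q u) v

/-- If `K` is a reducible subset of `R` of maximal cardinality among the reducible
subsets of `R`, then there is no stable pair in `K × (R \ K)`. -/
theorem stmt_7 {Q A : Type*} [Fintype Q] [DecidableEq Q] [Fintype A]
    (δ : Q → A → Q) (W : Finset (List A)) (R : Finset Q)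
    (hW : IsIndependent δ W R)
    (K : Finset Q) (hKR : K ⊆ R) (hKred : Reducible δ K)
    (hKmax : ∀ K' ⊆ R, Reducible δ K' → K'.card ≤ K.card) :
    ∀ p ∈ K, ∀ q ∈ R \ K, ¬ StablePair δ p q := by
  intro p hp q hq hstab
  obtain ⟨v, c, hv⟩ := hKred
  have hKc : ∀ k ∈ K, run δ k v = c := by
    intro k hk
    have : run δ k v ∈ K.image (fun p => run δ p v) := Finset.mem_image_of_mem _ hk
    rw [hv] at this
    simpa using this
  obtain ⟨v', hv'⟩ := hstab v
  have hqK : q ∉ K := (Finset.mem_sdiff.mp hq).2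
  have hqR : q ∈ R := (Finset.mem_sdiff.mp hq).1
  have happ : ∀ x : Q, run δ x (v ++ v') = run δ (run δ x v) v' := by
    intro x; simp [run, List.foldl_append]
  have hred : Reducible δ (insert q K) := by
    refine ⟨v ++ v', run δ c v', ?_⟩
    ext x
    simp only [Finset.mem_image, Finset.mem_insert, Finset.mem_singleton]
    constructor
    · rintro ⟨y, hy | hy, rfl⟩
      · rw [hy, happ, ← hv', hKc p hp]
      · rw [happ, hKc y hy]
    · intro hx
      exact ⟨q, Or.inl rfl, by rw [happ, ← hv', hKc p hp, hx]⟩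
  have := hKmax (insert q K) (Finset.insert_subset hqR hKR) hred
  rw [Finset.card_insert_of_notMem hqK] at this
  omega
end

section
/- Any synchronizing n-state automaton possessing an independent set W of k words has a reset word of length not larger than (k − 1)(n + L_W + 1) − 2k·ln((k+1)/2) + ℓ_W, where L_W and ℓ_W are the maximal and minimal lengths of the words of W. -/
namespace Stmt9
set_option linter.unusedSectionVars false

open Finset Submodule Module

variable {Q A : Type*} [Fintype Q] [DecidableEq Q]

lemma run_append (δ : Q → A → Q) (q : Q) (u v : List A) :
    run δ q (u ++ v) = run δ (run δ q u) v := List.foldl_append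

lemma run_concat (δ : Q → A → Q) (q : Q) (u : List A) (a : A) :
    run δ q (u ++ [a]) = δ (run δ q u) a := by
  rw [run_append]; rfl

/-- number of tokens from `R` that land in `S` after reading `y`. -/
def hitc (δ : Q → A → Q) (R S : Finset Q) (y : List A) : ℕ :=
  (R.filter (fun r => run δ r y ∈ S)).card

/-- token-count vector after reading `y`. -/
noncomputable def tok (δ : Q → A → Q) (R : Finset Q) (y : List A) : Q → ℝ :=
  ∑ r ∈ R, Pi.single (run δ r y) (1:ℝ)

/-- the "hit matrix" linear map. -/
noncomputable def lam (δ : Q → A → Q) (W : Finset (List A)) (S : Finset Q) :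
    (Q → ℝ) →ₗ[ℝ] (↥W → ℝ) :=
  Matrix.mulVecLin (fun (w : ↥W) (b : Q) => if run δ b w.1 ∈ S then (1:ℝ) else 0)

/-- push-forward by letter `a`. -/
noncomputable def push (δ : Q → A → Q) (a : A) : (Q → ℝ) →ₗ[ℝ] (Q → ℝ) :=
  Matrix.mulVecLin (fun (p b : Q) => if δ b a = p then (1:ℝ) else 0)

lemma lam_single (δ : Q → A → Q) (W : Finset (List A)) (S : Finset Q) (b : Q) :
    lam δ W S (Pi.single b 1) = fun w : ↥W => if run δ b w.1 ∈ S then (1:ℝ) else 0 := by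
  ext w
  rw [lam]; erw [Matrix.mulVecLin_apply, Matrix.mulVec_single_one]; rfl

lemma push_single (δ : Q → A → Q) (a : A) (b : Q) :
    push δ a (Pi.single b 1) = Pi.single (δ b a) (1:ℝ) := by
  ext p
  rw [push]; erw [Matrix.mulVecLin_apply, Matrix.mulVec_single_one]; simp [Pi.single_apply, eq_comm]; rfl

lemma tok_push (δ : Q → A → Q) (R : Finset Q) (y : List A) (a : A) :
    push δ a (tok δ R y) = tok δ R (y ++ [a]) := by
  rw [tok, map_sum]
  refine Finset.sum_congr rfl fun r _ => ?_
  rw [push_single, run_concat]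

lemma lam_tok (δ : Q → A → Q) (W : Finset (List A)) (R S : Finset Q) (y : List A) (w : ↥W) :
    lam δ W S (tok δ R y) w = (hitc δ R S (y ++ w.1) : ℝ) := by
  rw [tok, map_sum]
  have : ∀ r ∈ R, (lam δ W S (Pi.single (run δ r y) 1)) w
      = if run δ r (y ++ w.1) ∈ S then (1:ℝ) else 0 := by
    intro r _
    rw [lam_single, run_append]
  rw [Finset.sum_apply]
  rw [Finset.sum_congr rfl this, Finset.sum_boole]
  rfl



/-- counting via the bijection `w ↦ run δ b w` from `W` to `R`. -/
lemma count_filter (δ : Q → A → Q) {W : Finset (List A)} {R : Finset Q}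
    (hW : IsIndependent δ W R) (b : Q) (S : Finset Q) :
    (W.filter (fun w => run δ b w ∈ S)).card = (S ∩ R).card := by
  have hinj : Set.InjOn (fun w => run δ b w) ↑W := by
    rw [← Finset.card_image_iff]
    rw [hW.2 b, hW.1]
  rw [Finset.inter_comm]
  apply Finset.card_bij (fun w _ => run δ b w)
  · intro w hw
    simp only [Finset.mem_filter] at hw
    rw [Finset.mem_inter]
    refine ⟨?_, hw.2⟩
    rw [← hW.2 b]
    exact Finset.mem_image_of_mem _ hw.1
  · intro w1 h1 w2 h2 h
    exact hinj (Finset.mem_coe.2 (Finset.mem_filter.1 h1).1)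
      (Finset.mem_coe.2 (Finset.mem_filter.1 h2).1) h
  · intro r hr
    rw [Finset.mem_inter, ← hW.2 b] at hr
    obtain ⟨w, hw, hwr⟩ := Finset.mem_image.1 hr.1
    exact ⟨w, Finset.mem_filter.2 ⟨hw, by rw [hwr]; exact hr.2⟩, hwr⟩

lemma run_mem_R (δ : Q → A → Q) {W : Finset (List A)} {R : Finset Q}
    (hW : IsIndependent δ W R) {w : List A} (hw : w ∈ W) (b : Q) :
    run δ b w ∈ R := by
  rw [← hW.2 b]; exact Finset.mem_image_of_mem _ hw

/-- sum over `W` of hit counts. -/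
lemma sum_hitc (δ : Q → A → Q) {W : Finset (List A)} {R : Finset Q}
    (hW : IsIndependent δ W R) (S : Finset Q) (y : List A) :
    ∑ w ∈ W, hitc δ R S (y ++ w) = R.card * (S ∩ R).card := by
  have : ∀ w ∈ W, hitc δ R S (y ++ w) = ∑ r ∈ R, if run δ (run δ r y) w ∈ S then 1 else 0 := by
    intro w _
    rw [hitc, Finset.card_filter]
    exact Finset.sum_congr rfl fun r _ => by rw [run_append]
  rw [Finset.sum_congr rfl this, Finset.sum_comm]
  have : ∀ r ∈ R, (∑ w ∈ W, if run δ (run δ r y) w ∈ S then 1 else 0) = (S ∩ R).card := by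
    intro r _
    rw [← Finset.card_filter]
    exact count_filter δ hW (run δ r y) S
  rw [Finset.sum_congr rfl this, Finset.sum_const, smul_eq_mul]

/-- if all values are `≤ m` and they sum to `card * m`, all are equal to `m`. -/
lemma all_eq_of_sum {α : Type*} (t : Finset α) (f : α → ℕ) (m : ℕ)
    (hle : ∀ a ∈ t, f a ≤ m) (hsum : ∑ a ∈ t, f a = t.card * m) :
    ∀ a ∈ t, f a = m := by
  by_contra h
  push_neg at h
  obtain ⟨a, ha, hne⟩ := h
  have : ∑ a ∈ t, f a < ∑ _a ∈ t, m :=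
    Finset.sum_lt_sum hle ⟨a, ha, lt_of_le_of_ne (hle a ha) hne⟩
  rw [Finset.sum_const, smul_eq_mul] at this
  omega



/-- covering rank bound: a set of vectors with supports of size `≤ m` whose supports
cover all coordinates spans a space of rank at least `card ι / m`. -/
lemma cover_rank {ι : Type*} [Fintype ι] (G : Set (ι → ℝ)) (m : ℕ)
    (hsupp : ∀ v ∈ G, (Finset.univ.filter (fun i => v i ≠ 0)).card ≤ m)
    (hcov : ∀ i : ι, ∃ v ∈ G, v i ≠ 0) :
    Fintype.card ι ≤ m * finrank ℝ (span ℝ G) := by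
  classical
  obtain ⟨b, hbG, hspan, hli⟩ := exists_linearIndependent ℝ G
  have hfin : b.Finite := hli.setFinite
  haveI : Fintype ↑b := hfin.fintype
  have hcard : finrank ℝ (span ℝ b) = b.toFinset.card := finrank_span_set_eq_card hli
  have hsub : Finset.univ ⊆ b.toFinset.biUnion (fun v => Finset.univ.filter (fun i => v i ≠ 0)) := by
    intro i _
    obtain ⟨v, hvG, hvi⟩ := hcov i
    by_contra h
    simp only [Finset.mem_biUnion, Finset.mem_filter, Finset.mem_univ, true_and, not_exists,
      not_and, not_not, Set.mem_toFinset] at h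
    have hker : span ℝ b ≤ LinearMap.ker (LinearMap.proj (R := ℝ) (φ := fun _ : ι => ℝ) i) := by
      rw [span_le]
      intro u hu
      simp only [SetLike.mem_coe, LinearMap.mem_ker, LinearMap.proj_apply]
      exact h u hu
    have hv : v ∈ span ℝ b := by
      rw [hspan]; exact subset_span hvG
    have := hker hv
    simp only [LinearMap.mem_ker, LinearMap.proj_apply] at this
    exact hvi this
  have hle : Fintype.card ι ≤ ∑ v ∈ b.toFinset, (Finset.univ.filter (fun i => v i ≠ 0)).card := by
    calc Fintype.card ι = Finset.univ.card := rfl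
    _ ≤ (b.toFinset.biUnion (fun v => Finset.univ.filter (fun i => v i ≠ 0))).card :=
        Finset.card_le_card hsub
    _ ≤ _ := Finset.card_biUnion_le
  have hbd : ∑ v ∈ b.toFinset, (Finset.univ.filter (fun i => v i ≠ 0)).card ≤ b.toFinset.card * m := by
    calc _ ≤ ∑ _v ∈ b.toFinset, m :=
          Finset.sum_le_sum (fun v hv => hsupp v (hbG (Set.mem_toFinset.1 hv)))
    _ = b.toFinset.card * m := by rw [Finset.sum_const, smul_eq_mul]
  rw [← hspan, hcard, Nat.mul_comm]
  exact le_trans hle hbd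



noncomputable def Dspace (δ : Q → A → Q) (R : Finset Q) (s : ℕ) : Submodule ℝ (Q → ℝ) :=
  span ℝ ((fun y => tok δ R y - tok δ R []) '' {y : List A | y.length ≤ s})

lemma Dspace_mono (δ : Q → A → Q) (R : Finset Q) {s t : ℕ} (h : s ≤ t) :
    Dspace δ R s ≤ Dspace δ R t :=
  span_mono (Set.image_mono (fun y hy => le_trans hy h))

lemma mem_Dspace (δ : Q → A → Q) (R : Finset Q) {s : ℕ} {y : List A} (h : y.length ≤ s) :
    tok δ R y - tok δ R [] ∈ Dspace δ R s :=
  subset_span ⟨y, h, rfl⟩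

lemma Dspace_push (δ : Q → A → Q) (R : Finset Q) {s : ℕ} (a : A)
    (hstab : Dspace δ R (s+1) ≤ Dspace δ R s) :
    ∀ v ∈ Dspace δ R s, push δ a v ∈ Dspace δ R s := by
  intro v hv
  have hmap : Submodule.map (push δ a) (Dspace δ R s) ≤ Dspace δ R s := by
    rw [Dspace, Submodule.map_span, span_le]
    rintro u ⟨u', ⟨y, hy, rfl⟩, rfl⟩
    simp only [SetLike.mem_coe]
    have h1 : push δ a (tok δ R y - tok δ R []) = (tok δ R (y ++ [a]) - tok δ R [])
        - (tok δ R ([] ++ [a]) - tok δ R []) := by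
      rw [map_sub, tok_push, tok_push]; abel
    rw [h1]
    exact hstab (sub_mem (mem_Dspace δ R (by simpa using Nat.add_le_add_right hy 1))
      (mem_Dspace δ R (by simp)))
  exact hmap ⟨v, hv, rfl⟩

lemma Dspace_all (δ : Q → A → Q) (R : Finset Q) {s : ℕ}
    (hstab : Dspace δ R (s+1) ≤ Dspace δ R s) :
    ∀ y : List A, tok δ R y - tok δ R [] ∈ Dspace δ R s := by
  intro y
  induction y using List.reverseRecOn with
  | nil => simpa using zero_mem _
  | append_singleton ys a ih =>
      have h1 : tok δ R (ys ++ [a]) - tok δ R [] =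
          push δ a (tok δ R ys - tok δ R []) + (tok δ R ([] ++ [a]) - tok δ R []) := by
        rw [map_sub, tok_push, tok_push]; abel
      rw [h1]
      exact add_mem (Dspace_push δ R a hstab _ ih)
        (hstab (mem_Dspace δ R (by simp)))



lemma filter_subtype_card {β : Type*} (W : Finset β) (p : β → Prop) [DecidablePred p] :
    (Finset.univ.filter (fun x : ↥W => p x.1)).card = (W.filter p).card := by
  rw [Finset.univ_eq_attach, Finset.filter_attach, Finset.card_map, Finset.card_attach]

lemma step (δ : Q → A → Q) {W : Finset (List A)} {R : Finset Q} (hW : IsIndependent δ W R)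
    {k : ℕ} (hk : W.card = k) (S : Finset Q) {m : ℕ} (hm : (S ∩ R).card = m)
    (hm1 : 1 ≤ m) (hmk : m < k)
    {L : ℕ} (hL : ∀ w ∈ W, w.length ≤ L)
    {ystar : List A} {qs : Q} (hstar : ∀ r ∈ R, run δ r ystar = qs) :
    ∃ x : List A, m < hitc δ R S x ∧
      (x.length : ℝ) ≤ (Fintype.card Q : ℝ) + L + 1
        - k * max (1/(m:ℝ)) (1/((k:ℝ)-(m:ℝ))) := by
  have hRk : R.card = k := by rw [← hW.1, hk]
  have hkn : k ≤ Fintype.card Q := by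
    rw [← hRk, ← Finset.card_univ]; exact Finset.card_le_univ R
  have hmr : (1:ℝ) ≤ (m:ℝ) := by exact_mod_cast hm1
  have hkmr : (1:ℝ) ≤ (k:ℝ) - (m:ℝ) := by
    have : (m:ℝ) + 1 ≤ (k:ℝ) := by exact_mod_cast hmk
    linarith
  have hmax1 : max (1/(m:ℝ)) (1/((k:ℝ)-(m:ℝ))) ≤ 1 := by
    apply max_le
    · rw [div_le_one (by linarith)]; linarith
    · rw [div_le_one (by linarith)]; linarith
  have hgk : (k:ℝ) * max (1/(m:ℝ)) (1/((k:ℝ)-(m:ℝ))) ≤ (k:ℝ) := by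
    nlinarith [Nat.cast_nonneg (α := ℝ) k]
  by_cases hc : ∃ w ∈ W, m < hitc δ R S w
  · obtain ⟨w, hwW, hwm⟩ := hc
    refine ⟨w, hwm, ?_⟩
    have h1 : (w.length : ℝ) ≤ (L:ℝ) := by exact_mod_cast hL w hwW
    have h2 : (k:ℝ) ≤ (Fintype.card Q : ℝ) := by exact_mod_cast hkn
    linarith
  · push_neg at hc
    have htight0 : ∀ w ∈ W, hitc δ R S w = m := by
      have := sum_hitc δ hW S []
      simp only [List.nil_append] at this
      exact all_eq_of_sum W _ m hc (by rw [this, hRk, hm, hk])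
    set Λ := lam δ W S with hΛ
    set ρ := finrank ℝ (LinearMap.range Λ) with hρ
    -- the basic indicator vectors
    have hvmem : ∀ b : Q, (fun w : ↥W => if run δ b w.1 ∈ S then (1:ℝ) else 0)
        ∈ LinearMap.range Λ := by
      intro b
      exact ⟨Pi.single b 1, lam_single δ W S b⟩
    have hone : (fun _ : ↥W => (1:ℝ)) ∈ LinearMap.range Λ := by
      refine ⟨(1/(m:ℝ)) • tok δ R [], ?_⟩
      funext w
      rw [map_smul]
      have := lam_tok δ W R S [] w
      simp only [List.nil_append] at this
      rw [Pi.smul_apply, this, htight0 w.1 w.2, smul_eq_mul]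
      field_simp
    -- rank bound 1
    have hk1 : k ≤ m * ρ := by
      have hcr := cover_rank ((fun r : Q => (fun w : ↥W => if run δ r w.1 ∈ S then (1:ℝ) else 0)) '' ↑R) m
        ?_ ?_
      · have hspan : span ℝ ((fun r : Q => (fun w : ↥W => if run δ r w.1 ∈ S then (1:ℝ) else 0)) '' ↑R)
            ≤ LinearMap.range Λ := by
          rw [span_le]
          rintro v ⟨r, hr, rfl⟩
          exact hvmem r
        have := Submodule.finrank_mono hspan
        calc k = Fintype.card ↥W := by rw [Fintype.card_coe, hk]
          _ ≤ _ := hcr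
          _ ≤ m * ρ := Nat.mul_le_mul_left m this
      · rintro v ⟨r, hr, rfl⟩
        have h1 : (Finset.univ.filter (fun w : ↥W => ¬ ((if run δ r w.1 ∈ S then (1:ℝ) else 0) = 0)))
            = Finset.univ.filter (fun w : ↥W => run δ r w.1 ∈ S) := by
          apply Finset.filter_congr
          intro w _
          by_cases h : run δ r w.1 ∈ S <;> simp [h]
        rw [h1, filter_subtype_card W (fun w => run δ r w ∈ S), count_filter δ hW r S, hm]
      · intro w
        have h1 : (R.filter (fun r => run δ r w.1 ∈ S)).Nonempty := by
          rw [← Finset.card_pos, ← hitc, htight0 w.1 w.2]; omega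
        obtain ⟨r, hr⟩ := h1
        rw [Finset.mem_filter] at hr
        exact ⟨_, ⟨r, hr.1, rfl⟩, by simp [hr.2]⟩
    -- rank bound 2
    have hk2 : k ≤ (k - m) * ρ := by
      have hcr := cover_rank ((fun r : Q => (fun w : ↥W => 1 - (if run δ r w.1 ∈ S then (1:ℝ) else 0))) '' ↑R) (k - m)
        ?_ ?_
      · have hspan : span ℝ ((fun r : Q => (fun w : ↥W => 1 - (if run δ r w.1 ∈ S then (1:ℝ) else 0))) '' ↑R)
            ≤ LinearMap.range Λ := by
          rw [span_le]
          rintro v ⟨r, hr, rfl⟩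
          exact sub_mem hone (hvmem r)
        have := Submodule.finrank_mono hspan
        calc k = Fintype.card ↥W := by rw [Fintype.card_coe, hk]
          _ ≤ _ := hcr
          _ ≤ (k - m) * ρ := Nat.mul_le_mul_left (k - m) this
      · rintro v ⟨r, hr, rfl⟩
        have h1 : (Finset.univ.filter (fun w : ↥W => ¬ ((1 - (if run δ r w.1 ∈ S then (1:ℝ) else 0)) = 0)))
            = Finset.univ.filter (fun w : ↥W => run δ r w.1 ∉ S) := by
          apply Finset.filter_congr
          intro w _
          by_cases h : run δ r w.1 ∈ S <;> simp [h]
        rw [h1, filter_subtype_card W (fun w => run δ r w ∉ S)]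
        have h2 := Finset.card_filter_add_card_filter_not (s := W)
          (p := fun w => run δ r w ∈ S)
        have h3 : (W.filter (fun w => run δ r w ∈ S)).card = m := by
          rw [count_filter δ hW r S, hm]
        omega
      · intro w
        have h1 : (R.filter (fun r => run δ r w.1 ∉ S)).Nonempty := by
          rw [← Finset.card_pos]
          have h2 := Finset.card_filter_add_card_filter_not (s := R)
            (p := fun r => run δ r w.1 ∈ S)
          have h3 : (R.filter (fun r => run δ r w.1 ∈ S)).card = m := by
            rw [← hitc, htight0 w.1 w.2]
          omega
        obtain ⟨r, hr⟩ := h1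
        rw [Finset.mem_filter] at hr
        exact ⟨_, ⟨r, hr.1, rfl⟩, by simp [hr.2]⟩
    -- rank nullity
    have hrn : ρ + finrank ℝ (LinearMap.ker Λ) = Fintype.card Q := by
      rw [hρ, LinearMap.finrank_range_add_finrank_ker Λ, finrank_fintype_fun_eq_card]
    have hρn : ρ ≤ Fintype.card Q := by omega
    have hρ1 : 1 ≤ ρ := by
      rcases Nat.eq_zero_or_pos ρ with h | h
      · rw [h, Nat.mul_zero] at hk1; omega
      · exact h
    -- real comparison
    have hgρ : (k:ℝ) * max (1/(m:ℝ)) (1/((k:ℝ)-(m:ℝ))) ≤ (ρ:ℝ) := by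
      have c1 : (k:ℝ) ≤ (m:ℝ) * (ρ:ℝ) := by exact_mod_cast hk1
      have c2 : (k:ℝ) ≤ ((k:ℝ) - (m:ℝ)) * (ρ:ℝ) := by
        have : ((k - m : ℕ) : ℝ) = (k:ℝ) - (m:ℝ) := by
          rw [Nat.cast_sub (le_of_lt hmk)]
        rw [← this]; exact_mod_cast hk2
      rw [mul_max_of_nonneg _ _ (Nat.cast_nonneg k)]
      apply max_le
      · rw [mul_one_div, div_le_iff₀ (by linarith)]; linarith [c1]
      · rw [mul_one_div, div_le_iff₀ (by linarith)]; linarith [c2]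
    by_contra hcon
    push_neg at hcon
    -- every short word has few hits
    have hB : ∀ x : List A, x.length ≤ Fintype.card Q + L + 1 - ρ → hitc δ R S x ≤ m := by
      intro x hx
      by_contra hxx
      push_neg at hxx
      have h1 := hcon x hxx
      have h2 : ((Fintype.card Q + L + 1 - ρ : ℕ) : ℝ)
          = (Fintype.card Q : ℝ) + L + 1 - ρ := by
        have : ρ ≤ Fintype.card Q + L + 1 := by omega
        push_cast [Nat.cast_sub this]; ring
      have h3 : (x.length : ℝ) ≤ ((Fintype.card Q + L + 1 - ρ : ℕ) : ℝ) := by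
        exact_mod_cast hx
      rw [h2] at h3
      linarith
    set τ := Fintype.card Q + 1 - ρ with hτ
    have hτL : ∀ y : List A, ∀ w ∈ W, y.length ≤ τ → (y ++ w).length ≤ Fintype.card Q + L + 1 - ρ := by
      intro y w hw hy
      rw [List.length_append]
      have := hL w hw
      omega
    have htight : ∀ y : List A, y.length ≤ τ → ∀ w ∈ W, hitc δ R S (y ++ w) = m := by
      intro y hy
      apply all_eq_of_sum W _ m
      · intro w hw; exact hB _ (hτL y w hw hy)
      · rw [sum_hitc δ hW S y, hRk, hm, hk]
    have hlamtok : ∀ y : List A, y.length ≤ τ → Λ (tok δ R y) = fun _ : ↥W => (m:ℝ) := by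
      intro y hy
      funext w
      rw [hΛ, lam_tok δ W R S y w, htight y hy w.1 w.2]
    have hket : ∀ s : ℕ, s ≤ τ → Dspace δ R s ≤ LinearMap.ker Λ := by
      intro s hs
      rw [Dspace, span_le]
      rintro v ⟨y, hy, rfl⟩
      simp only [SetLike.mem_coe, LinearMap.mem_ker, map_sub]
      rw [hlamtok y (le_trans hy hs), hlamtok [] (by simp)]
      exact sub_self _
    -- a word collapsing all tokens
    obtain ⟨w0, hw0⟩ : W.Nonempty := by
      rw [← Finset.card_pos, hk]; omega
    have hstrict : ∀ s, s < τ → Dspace δ R s < Dspace δ R (s+1) := by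
      intro s hs
      refine lt_of_le_of_ne (Dspace_mono δ R (Nat.le_succ s)) ?_
      intro heq
      have hstab : Dspace δ R (s+1) ≤ Dspace δ R s := le_of_eq heq.symm
      have hmem := Dspace_all δ R hstab ystar
      have hker := hket s (le_of_lt hs) hmem
      rw [LinearMap.mem_ker, map_sub, sub_eq_zero] at hker
      have h0 : Λ (tok δ R []) = fun _ : ↥W => (m:ℝ) := hlamtok [] (by simp)
      have h1 : tok δ R ystar = (R.card : ℕ) • Pi.single qs (1:ℝ) := by
        rw [tok]
        rw [Finset.sum_congr rfl (fun r hr => by rw [hstar r hr])]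
        rw [Finset.sum_const]
      have h2 : Λ (tok δ R ystar) ⟨w0, hw0⟩ = (k : ℝ) * (if run δ qs w0 ∈ S then (1:ℝ) else 0) := by
        rw [h1, map_nsmul]
        have h3 := lam_single δ W S qs
        rw [Pi.smul_apply, hΛ, h3, hRk]
        simp [nsmul_eq_mul]
      rw [hker, h0] at h2
      simp only at h2
      by_cases h : run δ qs w0 ∈ S
      · rw [if_pos h, mul_one] at h2
        have : (m:ℕ) = k := by exact_mod_cast h2
        omega
      · rw [if_neg h, mul_zero] at h2
        have : (m:ℕ) = 0 := by exact_mod_cast h2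
        omega
    have hgrow : ∀ s, s ≤ τ → s ≤ finrank ℝ (Dspace δ R s) := by
      intro s
      induction s with
      | zero => intro _; exact Nat.zero_le _
      | succ s ih =>
          intro hs
          have h1 := ih (by omega)
          have h2 := Submodule.finrank_lt_finrank_of_lt (hstrict s (by omega))
          omega
    have hfin : τ ≤ finrank ℝ (LinearMap.ker Λ) :=
      le_trans (hgrow τ le_rfl) (Submodule.finrank_mono (hket τ le_rfl))
    omega


/-- per-level length budget. -/
noncomputable def Fterm (nQ L k i : ℕ) : ℝ :=
  (nQ:ℝ) + (L:ℝ) + 1 - (k:ℝ) * max (1/(i:ℝ)) (1/((k:ℝ)-(i:ℝ)))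

lemma Fterm_nonneg {nQ L k i : ℕ} (hkn : k ≤ nQ) (hi1 : 1 ≤ i) (hik : i < k) :
    0 ≤ Fterm nQ L k i := by
  have h1 : (1:ℝ) ≤ (i:ℝ) := by exact_mod_cast hi1
  have h2 : (1:ℝ) ≤ (k:ℝ) - (i:ℝ) := by
    have : (i:ℝ) + 1 ≤ (k:ℝ) := by exact_mod_cast hik
    linarith
  have hmax1 : max (1/(i:ℝ)) (1/((k:ℝ)-(i:ℝ))) ≤ 1 := by
    apply max_le
    · rw [div_le_one (by linarith)]; linarith
    · rw [div_le_one (by linarith)]; linarith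
  have hk : (k:ℝ) ≤ (nQ:ℝ) := by exact_mod_cast hkn
  have : (k:ℝ) * max (1/(i:ℝ)) (1/((k:ℝ)-(i:ℝ))) ≤ (k:ℝ) := by
    nlinarith [Nat.cast_nonneg (α := ℝ) k]
  rw [Fterm]
  have hL : (0:ℝ) ≤ (L:ℝ) := Nat.cast_nonneg L
  linarith

lemma hitc_nil (δ : Q → A → Q) (R S : Finset Q) :
    hitc δ R S [] = (S ∩ R).card := by
  rw [hitc]
  congr 1
  ext r
  rw [Finset.mem_filter, Finset.mem_inter, and_comm]; rfl

lemma chain (δ : Q → A → Q) {W : Finset (List A)} {R : Finset Q} (hW : IsIndependent δ W R)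
    {k : ℕ} (hk : W.card = k)
    {L : ℕ} (hL : ∀ w ∈ W, w.length ≤ L)
    {ystar : List A} {qs : Q} (hstar : ∀ r ∈ R, run δ r ystar = qs) :
    ∀ (d : ℕ) (S : Finset Q), 1 ≤ (S ∩ R).card → k ≤ (S ∩ R).card + d →
    ∃ y : List A, hitc δ R S y = k ∧
      (y.length : ℝ) ≤ ∑ i ∈ Finset.Ico (S ∩ R).card k, Fterm (Fintype.card Q) L k i := by
  have hRk : R.card = k := by rw [← hW.1, hk]
  have hkn : k ≤ Fintype.card Q := by
    rw [← hRk, ← Finset.card_univ]; exact Finset.card_le_univ R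
  intro d
  induction d with
  | zero =>
      intro S h1 h2
      have hle : (S ∩ R).card ≤ k := by
        rw [← hRk]; exact Finset.card_le_card Finset.inter_subset_right
      have heq : (S ∩ R).card = k := by omega
      refine ⟨[], by rw [hitc_nil, heq], ?_⟩
      rw [heq]
      simp
  | succ d ih =>
      intro S h1 h2
      by_cases hck : k ≤ (S ∩ R).card
      · have hle : (S ∩ R).card ≤ k := by
          rw [← hRk]; exact Finset.card_le_card Finset.inter_subset_right
        have heq : (S ∩ R).card = k := by omega
        refine ⟨[], by rw [hitc_nil, heq], ?_⟩
        rw [heq]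
        simp
      · push_neg at hck
        obtain ⟨x, hx1, hx2⟩ := step δ hW hk S rfl h1 hck hL hstar
        set S' : Finset Q := Finset.univ.filter (fun q => run δ q x ∈ S) with hS'def
        have hS'R : S' ∩ R = R.filter (fun r => run δ r x ∈ S) := by
          ext q
          simp [hS'def, Finset.mem_inter, Finset.mem_filter, and_comm]
        have hS'card : (S' ∩ R).card = hitc δ R S x := by rw [hS'R, hitc]
        obtain ⟨y', hy1, hy2⟩ := ih S' (by omega) (by omega)
        have hall : ∀ r ∈ R, run δ r y' ∈ S' := by
          have hsub : R.filter (fun r => run δ r y' ∈ S') = R := by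
            apply Finset.eq_of_subset_of_card_le (Finset.filter_subset _ _)
            rw [← hitc, hy1, hRk]
          intro r hr
          have : r ∈ R.filter (fun r => run δ r y' ∈ S') := by rw [hsub]; exact hr
          exact (Finset.mem_filter.1 this).2
        refine ⟨y' ++ x, ?_, ?_⟩
        · rw [hitc]
          have : R.filter (fun r => run δ r (y' ++ x) ∈ S) = R := by
            apply Finset.filter_true_of_mem
            intro r hr
            rw [run_append]
            have := hall r hr
            rw [hS'def, Finset.mem_filter] at this
            exact this.2
          rw [this, hRk]
        · rw [List.length_append]
          push_cast
          have hsplit : ∑ i ∈ Finset.Ico (S ∩ R).card k, Fterm (Fintype.card Q) L k i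
              = Fterm (Fintype.card Q) L k (S ∩ R).card
                + ∑ i ∈ Finset.Ico ((S ∩ R).card + 1) k, Fterm (Fintype.card Q) L k i :=
            Finset.sum_eq_sum_Ico_succ_bot hck _
          have hsub2 : ∑ i ∈ Finset.Ico (S' ∩ R).card k, Fterm (Fintype.card Q) L k i
              ≤ ∑ i ∈ Finset.Ico ((S ∩ R).card + 1) k, Fterm (Fintype.card Q) L k i := by
            apply Finset.sum_le_sum_of_subset_of_nonneg
            · apply Finset.Ico_subset_Ico_left
              omega
            · intro i hi _
              rw [Finset.mem_Ico] at hi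
              exact Fterm_nonneg hkn (by omega) hi.2
          have hx2' : (x.length : ℝ) ≤ Fterm (Fintype.card Q) L k (S ∩ R).card := hx2
          linarith



noncomputable def Hr (j : ℕ) : ℝ := ∑ i ∈ Finset.Ico 1 (j+1), (1:ℝ)/(i:ℝ)

lemma log_le_Hr (j : ℕ) : Real.log ((j:ℝ)+1) ≤ Hr j := by
  have h1 := log_add_one_le_harmonic j
  have h2 : ((harmonic j : ℚ) : ℝ) = Hr j := by
    rw [harmonic, Hr, Finset.sum_Ico_eq_sum_range]
    push_cast
    refine Finset.sum_congr rfl fun i _ => ?_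
    rw [one_div]
    congr 1
    push_cast
    ring
  rw [← h2]
  have h3 : ((j:ℝ)+1) = ((j+1 : ℕ) : ℝ) := by push_cast; ring
  rw [h3]
  exact h1

lemma Hr_succ (a : ℕ) (ha : 1 ≤ a) : Hr a = Hr (a-1) + 1/(a:ℝ) := by
  have h : a - 1 + 1 = a := by omega
  rw [Hr, Hr, h, ← Finset.sum_Ico_succ_top (by omega) (fun i => (1:ℝ)/(i:ℝ))]

lemma arith_sum (k : ℕ) (hk : 1 ≤ k) :
    2 * Real.log (((k:ℝ)+1)/2)
      ≤ ∑ i ∈ Finset.Ico 1 k, max (1/(i:ℝ)) (1/((k:ℝ)-(i:ℝ))) := by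
  set a := k / 2 with ha
  have hb : k - k/2 = (k-1)/2 + 1 := by omega
  -- lower bound the sum by Hr (k/2) + Hr ((k-1)/2)
  have hsplit : ∑ i ∈ Finset.Ico 1 (a+1), max (1/(i:ℝ)) (1/((k:ℝ)-(i:ℝ)))
      + ∑ i ∈ Finset.Ico (a+1) k, max (1/(i:ℝ)) (1/((k:ℝ)-(i:ℝ)))
      = ∑ i ∈ Finset.Ico 1 k, max (1/(i:ℝ)) (1/((k:ℝ)-(i:ℝ))) :=
    Finset.sum_Ico_consecutive _ (by omega) (by omega)
  have hlow1 : Hr a ≤ ∑ i ∈ Finset.Ico 1 (a+1), max (1/(i:ℝ)) (1/((k:ℝ)-(i:ℝ))) := by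
    apply Finset.sum_le_sum
    intro i _
    exact le_max_left _ _
  have hlow2 : Hr ((k-1)/2) ≤ ∑ i ∈ Finset.Ico (a+1) k, max (1/(i:ℝ)) (1/((k:ℝ)-(i:ℝ))) := by
    have hre : ∑ i ∈ Finset.Ico (a+1) k, (1:ℝ)/((k:ℝ)-(i:ℝ)) = Hr ((k-1)/2) := by
      rw [Hr, ← hb]
      apply Finset.sum_nbij' (fun i => k - i) (fun j => k - j)
      · intro i hi; rw [Finset.mem_Ico] at hi ⊢; omega
      · intro j hj; rw [Finset.mem_Ico] at hj ⊢; omega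
      · intro i hi; rw [Finset.mem_Ico] at hi; omega
      · intro j hj; rw [Finset.mem_Ico] at hj; omega
      · intro i hi
        rw [Finset.mem_Ico] at hi
        congr 1
        rw [Nat.cast_sub (by omega)]
    rw [← hre]
    apply Finset.sum_le_sum
    intro i _
    exact le_max_right _ _
  have hmain : Hr a + Hr ((k-1)/2) ≥ 2 * Real.log (((k:ℝ)+1)/2) := by
    rcases Nat.even_or_odd k with he | ho
    · -- k = 2a, a ≥ 1
      obtain ⟨c, hc⟩ := he
      have hca : a = c := by omega
      have hc1 : 1 ≤ c := by omega
      have hkb : (k-1)/2 = c - 1 := by omega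
      rw [hca, hkb]
      have h1 : Hr c = Hr (c-1) + 1/(c:ℝ) := Hr_succ c hc1
      have h2 : Real.log ((c:ℝ)) ≤ Hr (c-1) := by
        have := log_le_Hr (c-1)
        have h3 : ((c-1:ℕ):ℝ) + 1 = (c:ℝ) := by
          rw [Nat.cast_sub hc1]; push_cast; ring
        rwa [h3] at this
      have hcpos : (0:ℝ) < (c:ℝ) := by exact_mod_cast hc1
      have h4 : Real.log (((k:ℝ)+1)/2) ≤ Real.log (c:ℝ) + (1/2) * (1/(c:ℝ)) := by
        have hkc : ((k:ℝ)+1)/2 = (c:ℝ) + 1/2 := by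
          have h7 : (k:ℝ) = (c:ℝ) + (c:ℝ) := by exact_mod_cast hc
          rw [h7]; ring
        rw [hkc]
        have h5 : Real.log (((c:ℝ)+1/2)/(c:ℝ)) ≤ ((c:ℝ)+1/2)/(c:ℝ) - 1 := by
          apply Real.log_le_sub_one_of_pos
          positivity
        rw [Real.log_div (by positivity) (by positivity)] at h5
        have h6 : ((c:ℝ)+1/2)/(c:ℝ) - 1 = (1/2) * (1/(c:ℝ)) := by
          field_simp
          ring
        rw [h6] at h5
        linarith
      rw [h1]
      linarith
    · -- k = 2c+1
      obtain ⟨c, hc⟩ := ho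
      have hca : a = c := by omega
      have hkb : (k-1)/2 = c := by omega
      rw [hca, hkb]
      have h2 : Real.log ((c:ℝ)+1) ≤ Hr c := log_le_Hr c
      have hkc : ((k:ℝ)+1)/2 = (c:ℝ) + 1 := by
        have h7 : (k:ℝ) = 2*(c:ℝ)+1 := by exact_mod_cast hc
        rw [h7]; ring
      rw [hkc]
      linarith
  linarith


end Stmt9


open Stmt9 Finset Submodule Module

/-- Any synchronizing `n`-state automaton with an independent set `W` of `k` words
has a reset word of length `≤ (k − 1)(n + L_W + 1) − 2k·ln((k+1)/2) + ℓ_W`. -/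
theorem stmt_9 {Q A : Type*} [Fintype Q] [DecidableEq Q] [Fintype A]
    (δ : Q → A → Q) (W : Finset (List A)) (R : Finset Q) (k : ℕ)
    (hW : IsIndependent δ W R) (hk : W.card = k)
    (L : ℕ) (hLub : ∀ w ∈ W, w.length ≤ L) (hLmem : ∃ w ∈ W, w.length = L)
    (l : ℕ) (hlb : ∀ w ∈ W, l ≤ w.length) (hlmem : ∃ w ∈ W, w.length = l)
    (hsync : ∃ u : List A,
      ((Finset.univ : Finset Q).image (fun q => run δ q u)).card = 1) :
    ∃ u : List A,
      ((Finset.univ : Finset Q).image (fun q => run δ q u)).card = 1 ∧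
      (u.length : ℝ) ≤ ((k : ℝ) - 1) * ((Fintype.card Q : ℝ) + (L : ℝ) + 1)
        - 2 * (k : ℝ) * Real.log (((k : ℝ) + 1) / 2) + (l : ℝ) := by
  classical
  obtain ⟨v0, hv0⟩ := hsync
  obtain ⟨wl, hwl, hwll⟩ := hlmem
  have hkpos : 1 ≤ k := by
    rw [← hk]
    exact Finset.card_pos.2 ⟨wl, hwl⟩
  have hRk : R.card = k := by rw [← hW.1, hk]
  have hkn : k ≤ Fintype.card Q := by
    rw [← hRk, ← Finset.card_univ]; exact Finset.card_le_univ R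
  obtain ⟨p0, hp0⟩ := Finset.card_eq_one.1 hv0
  have hall0 : ∀ q : Q, run δ q v0 = p0 := by
    intro q
    have h1 : run δ q v0 ∈ (Finset.univ : Finset Q).image (fun q => run δ q v0) :=
      Finset.mem_image_of_mem _ (Finset.mem_univ q)
    rw [hp0, Finset.mem_singleton] at h1
    exact h1
  set qs := run δ p0 wl with hqs
  have hstar : ∀ r ∈ R, run δ r (v0 ++ wl) = qs := by
    intro r _
    rw [run_append, hall0]
  have hqsR : qs ∈ R := run_mem_R δ hW hwl p0
  have hS0 : (({qs} : Finset Q) ∩ R).card = 1 := by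
    rw [Finset.singleton_inter_of_mem hqsR, Finset.card_singleton]
  obtain ⟨y, hy1, hy2⟩ := chain δ hW hk hLub hstar (k-1) {qs} (by rw [hS0]) (by omega)
  rw [hS0] at hy2
  have hally : ∀ r ∈ R, run δ r y = qs := by
    have hsub : R.filter (fun r => run δ r y ∈ ({qs} : Finset Q)) = R := by
      apply Finset.eq_of_subset_of_card_le (Finset.filter_subset _ _)
      rw [← hitc, hy1, hRk]
    intro r hr
    have : r ∈ R.filter (fun r => run δ r y ∈ ({qs} : Finset Q)) := by rw [hsub]; exact hr
    have := (Finset.mem_filter.1 this).2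
    rwa [Finset.mem_singleton] at this
  refine ⟨wl ++ y, ?_, ?_⟩
  · have himg : (Finset.univ : Finset Q).image (fun q => run δ q (wl ++ y)) = {qs} := by
      apply Finset.eq_singleton_iff_unique_mem.2
      constructor
      · refine Finset.mem_image.2 ⟨qs, Finset.mem_univ _, ?_⟩
        rw [run_append]
        exact hally _ (run_mem_R δ hW hwl qs)
      · intro x hx
        obtain ⟨q, _, rfl⟩ := Finset.mem_image.1 hx
        rw [run_append]
        exact hally _ (run_mem_R δ hW hwl q)
    rw [himg, Finset.card_singleton]
  · have hsum : ∑ i ∈ Finset.Ico 1 k, Fterm (Fintype.card Q) L k i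
        = ((k:ℝ)-1) * ((Fintype.card Q : ℝ) + (L:ℝ) + 1)
          - (k:ℝ) * ∑ i ∈ Finset.Ico 1 k, max (1/(i:ℝ)) (1/((k:ℝ)-(i:ℝ))) := by
      have hcard : (Finset.Ico 1 k).card = k - 1 := by
        rw [Nat.card_Ico]
      have h1 : ∀ i ∈ Finset.Ico 1 k, Fterm (Fintype.card Q) L k i
          = ((Fintype.card Q : ℝ) + (L:ℝ) + 1) - (k:ℝ) * max (1/(i:ℝ)) (1/((k:ℝ)-(i:ℝ))) := by
        intro i _
        rw [Fterm]
      have hc2 : ((k - 1 : ℕ) : ℝ) = (k:ℝ) - 1 := by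
        rw [Nat.cast_sub hkpos]; push_cast; ring
      rw [Finset.sum_congr rfl h1, Finset.sum_sub_distrib,
        Finset.sum_const, hcard, nsmul_eq_mul, hc2, Finset.mul_sum]
    have harith := arith_sum k hkpos
    have hlen : ((wl ++ y).length : ℝ) = (l:ℝ) + (y.length : ℝ) := by
      rw [List.length_append]
      push_cast
      rw [hwll]
    rw [hlen]
    have hknn : (0:ℝ) ≤ (k:ℝ) := Nat.cast_nonneg k
    have hmul := mul_le_mul_of_nonneg_left harith hknn
    have hy2' := hy2
    rw [hsum] at hy2'
    linarith
end

section
/- For all integers n and k with 1 ≤ k ≤ n − 1, one has 2(n − 1)·ln(n) − 2k·ln(k + 1) ≤ (2n − 1 + 2·ln 2)·(n − k − 1). -/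
/-- For all integers `n, k` with `1 ≤ k ≤ n − 1`,
`2(n − 1)·ln n − 2k·ln(k + 1) ≤ (2n − 1 + 2·ln 2)·(n − k − 1)`. -/
theorem stmt_12 (n k : ℕ) (hk : 1 ≤ k) (hkn : k < n) :
    2 * ((n : ℝ) - 1) * Real.log (n : ℝ) - 2 * (k : ℝ) * Real.log ((k : ℝ) + 1) ≤
      (2 * (n : ℝ) - 1 + 2 * Real.log 2) * ((n : ℝ) - (k : ℝ) - 1) := by
  set a : ℝ := (k : ℝ) with ha
  set N : ℝ := (n : ℝ) with hN
  have ha1 : (1 : ℝ) ≤ a := by rw [ha]; exact_mod_cast hk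
  have haN : a + 1 ≤ N := by
    have : (k : ℝ) + 1 ≤ (n : ℝ) := by exact_mod_cast Nat.succ_le_of_lt hkn
    simpa using this
  have hapos : (0 : ℝ) < a + 1 := by linarith
  have hNpos : (0 : ℝ) < N := by linarith
  set L : ℝ := Real.log N with hL
  set M : ℝ := Real.log (a + 1) with hM
  -- log(N/(a+1)) ≤ N/(a+1) - 1
  have h1 : L - M ≤ N / (a + 1) - 1 := by
    have := Real.log_le_sub_one_of_pos (div_pos hNpos hapos)
    rwa [Real.log_div (ne_of_gt hNpos) (ne_of_gt hapos)] at this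
  have hLM : (a + 1) * (L - M) ≤ N - a - 1 := by
    have := mul_le_mul_of_nonneg_left h1 (le_of_lt hapos)
    have heq : (a + 1) * (N / (a + 1) - 1) = N - a - 1 := by
      field_simp; ring
    linarith [heq ▸ this]
  have hLMnn : 0 ≤ L - M := by
    have := Real.log_le_log hapos haN
    linarith
  -- M ≤ N/2 + log 2
  have hMle : M ≤ N / 2 + Real.log 2 := by
    have h2 : Real.log ((a + 1) / 2) ≤ (a + 1) / 2 - 1 :=
      Real.log_le_sub_one_of_pos (by linarith)
    rw [Real.log_div (ne_of_gt hapos) two_ne_zero] at h2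
    have : M - Real.log 2 ≤ (a + 1) / 2 - 1 := h2
    linarith
  have hNa1 : 0 ≤ N - a - 1 := by linarith
  have hN1 : 0 ≤ N - 1 := by linarith
  nlinarith [mul_nonneg (by linarith : (0:ℝ) ≤ a - 1) hLMnn,
    mul_nonneg hN1 (by nlinarith [mul_nonneg (by linarith : (0:ℝ) ≤ a - 1) hLMnn] : 0 ≤ (N - a - 1) - 2 * (L - M)),
    mul_nonneg hNa1 (by linarith : 0 ≤ N / 2 + Real.log 2 - M)]
end

section
/- Let 𝒜 = ⟨Q, A, δ⟩ be an n-state automaton with an independent set W of k words with range R, let L_W be the maximal length of the words of W, and let M be the maximal cardinality of a reducible subset of R. Then for every integer t with 1 ≤ t ≤ ⌈k/M⌉ there exist t pairwise distinct states q_1, …, q_t ∈ R and a word v ∈ A* such that Card({q_i} v^{-1} ∩ R) = M for each i = 1, …, t, and |v| ≤ t(M − 1)(L_W + n + 1) − t·k·ln(M). -/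
namespace Stmt13
set_option linter.unusedSectionVars false

open Finset

variable {Q α : Type*} [Fintype Q] [DecidableEq Q]

/-- fiber of the word `v` over the state `c`, within `R` -/
def fib (δ : Q → α → Q) (R : Finset Q) (v : List α) (c : Q) : Finset Q :=
  R.filter fun p => run δ p v = c

theorem run_append (δ : Q → α → Q) (p : Q) (u v : List α) :
    run δ p (u ++ v) = run δ (run δ p u) v :=
  List.foldl_append ..

theorem run_concat (δ : Q → α → Q) (p : Q) (y : List α) (a : α) :
    run δ p (y ++ [a]) = δ (run δ p y) a := by
  rw [run_append]; rfl

section Basic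

variable (δ : Q → α → Q) {W : Finset (List α)} {R : Finset Q}

theorem mem_R_of_W (hW : IsIndependent δ W R) {w : List α} (hw : w ∈ W) (s : Q) :
    run δ s w ∈ R := by
  rw [← hW.2 s]; exact mem_image_of_mem _ hw

theorem injOn_W (hW : IsIndependent δ W R) (s : Q) :
    Set.InjOn (fun w => run δ s w) W := by
  apply Finset.injOn_of_card_image_eq
  rw [hW.2 s, hW.1]

/-- Fact 1 : for every state `s`, the number of words of `W` sending `s` into
`F ⊆ R` is exactly `F.card`. -/
theorem fact1 (hW : IsIndependent δ W R) (s : Q) {F : Finset Q} (hF : F ⊆ R) :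
    (W.filter fun w => run δ s w ∈ F).card = F.card := by
  classical
  have h1 : ((W.filter fun w => run δ s w ∈ F).image (fun w => run δ s w)).card
      = (W.filter fun w => run δ s w ∈ F).card :=
    Finset.card_image_of_injOn ((injOn_W δ hW s).mono (by
      intro x hx; exact Finset.mem_coe.mpr (Finset.mem_of_mem_filter x hx)))
  rw [← h1, ← Finset.filter_image (f := fun w => run δ s w) (p := fun q => q ∈ F), hW.2 s,
    Finset.filter_mem_eq_inter, Finset.inter_eq_right.mpr hF]

variable (R) in
theorem cap (hMub : ∀ K ⊆ R, Reducible δ K → K.card ≤ M) (v : List α) (c : Q) :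
    (fib δ R v c).card ≤ M := by
  rcases Finset.eq_empty_or_nonempty (fib δ R v c) with h | h
  · simp [h]
  · refine hMub _ (Finset.filter_subset _ _) ⟨v, c, ?_⟩
    obtain ⟨p₀, hp₀⟩ := h
    apply Finset.ext
    intro q
    simp only [Finset.mem_image, Finset.mem_singleton]
    constructor
    · rintro ⟨p, hp, rfl⟩
      exact (Finset.mem_filter.mp hp).2
    · rintro rfl
      exact ⟨p₀, hp₀, (Finset.mem_filter.mp hp₀).2⟩

/-- translation : fibers of `y ++ (w ++ v)` are counted by membership of the
`(y ++ w)`-image in the fiber of `v`. -/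
theorem transl (hW : IsIndependent δ W R) {w : List α} (hw : w ∈ W) (y v : List α) (c : Q) :
    fib δ R (y ++ (w ++ v)) c = R.filter fun p => run δ p (y ++ w) ∈ fib δ R v c := by
  unfold fib
  apply Finset.filter_congr
  intro p _
  have h1 : run δ p (y ++ (w ++ v)) = run δ (run δ p (y ++ w)) v := by
    rw [run_append, run_append, run_append]
  have h2 : run δ p (y ++ w) ∈ R := by
    rw [run_append]; exact mem_R_of_W δ hW hw _
  simp [h1, h2]

theorem card_filter_nat (s : Finset Q) (p : Q → Prop) [DecidablePred p] :
    ((s.filter p).card : ℚ) = ∑ x ∈ s, if p x then (1 : ℚ) else 0 := by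
  rw [Finset.card_filter]
  push_cast
  rfl

/-- the key counting identity : for any `y`, summing fiber counts over `w ∈ W`
gives `W.card * m`. -/
theorem sum1 (hW : IsIndependent δ W R) (y v : List α) (c : Q) :
    ∑ w ∈ W, (R.filter fun p => run δ p (y ++ w) ∈ fib δ R v c).card
      = W.card * (fib δ R v c).card := by
  classical
  have hstep : ∀ w ∈ W, (R.filter fun p => run δ p (y ++ w) ∈ fib δ R v c).card
      = ∑ p ∈ R, if run δ (run δ p y) w ∈ fib δ R v c then 1 else 0 := by
    intro w _
    rw [Finset.card_filter]
    apply Finset.sum_congr rfl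
    intro p _
    rw [run_append]
  rw [Finset.sum_congr rfl hstep, Finset.sum_comm]
  have hinner : ∀ p ∈ R, (∑ w ∈ W, if run δ (run δ p y) w ∈ fib δ R v c then 1 else 0)
      = (fib δ R v c).card := by
    intro p _
    rw [← Finset.card_filter]
    exact fact1 δ hW _ (Finset.filter_subset _ _)
  rw [Finset.sum_congr rfl hinner, Finset.sum_const, smul_eq_mul, hW.1]

theorem all_eq_of_sum_eq {β : Type*} {s : Finset β} {f : β → ℕ} {M : ℕ}
    (hle : ∀ i ∈ s, f i ≤ M) (hsum : ∑ i ∈ s, f i = s.card * M) :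
    ∀ i ∈ s, f i = M := by
  by_contra h
  push_neg at h
  obtain ⟨i₀, hi₀, hne⟩ := h
  have hlt : ∑ i ∈ s, f i < ∑ _i ∈ s, M :=
    Finset.sum_lt_sum hle ⟨i₀, hi₀, lt_of_le_of_ne (hle i₀ hi₀) hne⟩
  rw [Finset.sum_const, smul_eq_mul] at hlt
  omega

/-- complete fibers are preserved by prepending any `y ++ w` with `w ∈ W`. -/
theorem pin (hW : IsIndependent δ W R)
    (hMub : ∀ K ⊆ R, Reducible δ K → K.card ≤ M)
    {v : List α} {d : Q} (hd : (fib δ R v d).card = M)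
    (y : List α) {w : List α} (hw : w ∈ W) :
    (fib δ R (y ++ (w ++ v)) d).card = M := by
  classical
  have hsum := sum1 δ hW y v d
  rw [hd] at hsum
  have hle : ∀ w' ∈ W, (R.filter fun p => run δ p (y ++ w') ∈ fib δ R v d).card ≤ M := by
    intro w' hw'
    rw [← transl δ hW hw' y v d]
    exact cap δ R hMub _ _
  have := all_eq_of_sum_eq (s := W)
    (f := fun w' => (R.filter fun p => run δ p (y ++ w') ∈ fib δ R v d).card) hle hsum w hw
  rw [transl δ hW hw y v d]
  exact this

end Basic

end Stmt13

section Chain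

open Module

theorem chain_escape {V : Type*} [AddCommGroup V] [Module ℚ V] [FiniteDimensional ℚ V]
    {α : Type*} (ρ : List α → V) (Ma : α → V →ₗ[ℚ] V)
    (hrec : ∀ (y : List α) (a : α), ρ (y ++ [a]) = Ma a (ρ y))
    (T : Submodule ℚ V) (h0 : ρ [] ≠ 0) {y₀ : List α} (hy₀ : ρ y₀ ∉ T) :
    ∃ y, y.length ≤ Module.finrank ℚ T ∧ ρ y ∉ T := by
  classical
  have hP : ∃ j, ∃ y : List α, y.length ≤ j ∧ ρ y ∉ T := ⟨y₀.length, y₀, le_rfl, hy₀⟩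
  obtain ⟨y, hylen, hy⟩ := Nat.find_spec hP
  refine ⟨y, hylen.trans ?_, hy⟩
  set ℓ := Nat.find hP with hℓdef
  by_contra hcon
  push_neg at hcon
  have hshort : ∀ z : List α, z.length < ℓ → ρ z ∈ T := by
    intro z hz
    by_contra h
    exact Nat.find_min hP hz ⟨z, le_rfl, h⟩
  set Sp : ℕ → Submodule ℚ V := fun j => Submodule.span ℚ (ρ '' {z | z.length ≤ j}) with hSp
  have hmono : ∀ j, Sp j ≤ Sp (j + 1) :=
    fun j => Submodule.span_mono (Set.image_mono (fun z hz => le_trans hz (Nat.le_succ j)))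
  have hstab : ∀ j, Sp j = Sp (j + 1) → ∀ z : List α, ρ z ∈ Sp j := by
    intro j hj z
    have hmap : ∀ a : α, Submodule.map (Ma a) (Sp j) ≤ Sp j := by
      intro a
      rw [hSp]
      simp only
      rw [Submodule.map_span]
      apply Submodule.span_le.mpr
      rintro x ⟨_, ⟨z', hz', rfl⟩, rfl⟩
      simp only [Set.mem_setOf_eq] at hz'
      rw [← hrec]
      have : ρ (z' ++ [a]) ∈ Sp (j + 1) :=
        Submodule.subset_span ⟨z' ++ [a], by simp; omega, rfl⟩
      rw [← hj] at this
      exact this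
    induction z using List.reverseRecOn with
    | nil => exact Submodule.subset_span ⟨[], by simp, rfl⟩
    | append_singleton z a ih =>
        rw [hrec]
        exact hmap a (Submodule.mem_map_of_mem ih)
  have hstrict : ∀ j, j < ℓ → Sp j < Sp (j + 1) := by
    intro j hj
    refine lt_of_le_of_ne (hmono j) (fun heq => ?_)
    have hsub : Sp j ≤ T := Submodule.span_le.mpr (by
      rintro x ⟨z, hz, rfl⟩
      simp only [Set.mem_setOf_eq] at hz
      exact hshort z (lt_of_le_of_lt hz hj))
    exact hy (hsub (hstab j heq y))
  have hdim : ∀ j, j < ℓ → j + 1 ≤ Module.finrank ℚ (Sp j) := by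
    intro j
    induction j with
    | zero =>
        intro _
        have h1 : Submodule.span ℚ {ρ []} ≤ Sp 0 := Submodule.span_le.mpr (by
          rintro x hx
          rw [Set.mem_singleton_iff] at hx
          subst hx
          exact Submodule.subset_span ⟨[], by simp, rfl⟩)
        calc 1 = Module.finrank ℚ (Submodule.span ℚ {ρ []}) := (finrank_span_singleton h0).symm
        _ ≤ _ := Submodule.finrank_mono h1
    | succ j ih =>
        intro hj
        have h1 : j < ℓ := Nat.lt_of_succ_lt hj
        have h2 := Submodule.finrank_lt_finrank_of_lt (hstrict j h1)
        have h3 := ih h1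
        omega
  have hℓpos : 1 ≤ ℓ := by omega
  have h2 := hdim (ℓ - 1) (by omega)
  have hsub : Sp (ℓ - 1) ≤ T := Submodule.span_le.mpr (by
    rintro x ⟨z, hz, rfl⟩
    simp only [Set.mem_setOf_eq] at hz
    exact hshort z (by omega))
  have h3 := Submodule.finrank_mono hsub
  omega

end Chain

namespace Stmt13
set_option linter.unusedSectionVars false

open Finset Module

variable {Q α : Type*} [Fintype Q] [DecidableEq Q]

theorem cast_card_filter {β : Type*} (s : Finset β) (p : β → Prop) [DecidablePred p] :
    ((s.filter p).card : ℚ) = ∑ x ∈ s, if p x then (1 : ℚ) else 0 := by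
  rw [Finset.card_filter]
  push_cast
  rfl

/-- the row vector of fiber counts of the word `y`. -/
noncomputable def rho (δ : Q → α → Q) (R : Finset Q) (y : List α) : Q → ℚ :=
  fun s => ((fib δ R y s).card : ℚ)

/-- the transition operator on row vectors. -/
noncomputable def transL (δ : Q → α → Q) (a : α) : (Q → ℚ) →ₗ[ℚ] (Q → ℚ) where
  toFun x := fun s => ∑ s' : Q, if δ s' a = s then x s' else 0
  map_add' x y := by
    funext s
    simp only [Pi.add_apply]
    rw [← Finset.sum_add_distrib]
    apply Finset.sum_congr rfl
    intro s' _
    split <;> simp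
  map_smul' c x := by
    funext s
    simp only [Pi.smul_apply, smul_eq_mul, RingHom.id_apply]
    rw [Finset.mul_sum]
    apply Finset.sum_congr rfl
    intro s' _
    split <;> simp

/-- the basic "transport" identity for weighted sums over fibers. -/
theorem sum_fib_mul (δ : Q → α → Q) (R : Finset Q) (y : List α) (g : Q → ℚ) :
    ∑ s' : Q, ((fib δ R y s').card : ℚ) * g s' = ∑ p ∈ R, g (run δ p y) := by
  classical
  have h1 : ∀ s' : Q, ∑ p ∈ R.filter (fun p => run δ p y = s'), g (run δ p y)
      = ((fib δ R y s').card : ℚ) * g s' := by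
    intro s'
    rw [Finset.sum_congr rfl (fun p hp => by rw [(Finset.mem_filter.mp hp).2])]
    rw [Finset.sum_const, nsmul_eq_mul]
    rfl
  calc ∑ s' : Q, ((fib δ R y s').card : ℚ) * g s'
      = ∑ s' : Q, ∑ p ∈ R.filter (fun p => run δ p y = s'), g (run δ p y) :=
        Finset.sum_congr rfl (fun s' _ => (h1 s').symm)
    _ = ∑ p ∈ R, g (run δ p y) :=
        Finset.sum_fiberwise_of_maps_to (fun p _ => Finset.mem_univ _) _

theorem rho_concat (δ : Q → α → Q) (R : Finset Q) :
    ∀ (y : List α) (a : α), rho δ R (y ++ [a]) = transL δ a (rho δ R y) := by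
  intro y a
  funext s
  show ((fib δ R (y ++ [a]) s).card : ℚ)
      = ∑ s' : Q, if δ s' a = s then ((fib δ R y s').card : ℚ) else 0
  have hR : ∀ s' : Q, (if δ s' a = s then ((fib δ R y s').card : ℚ) else 0)
      = ((fib δ R y s').card : ℚ) * (if δ s' a = s then (1:ℚ) else 0) := by
    intro s'; split <;> simp
  rw [Finset.sum_congr rfl (fun s' _ => hR s'),
    sum_fib_mul δ R y (fun s' => if δ s' a = s then (1:ℚ) else 0)]
  unfold fib
  rw [cast_card_filter]
  apply Finset.sum_congr rfl
  intro p _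
  rw [run_concat]

/-- standard pairing. -/
def dotp (x u : Q → ℚ) : ℚ := ∑ s : Q, x s * u s

/-- pairing with a fixed right argument, as a linear map. -/
def dotL (u : Q → ℚ) : (Q → ℚ) →ₗ[ℚ] ℚ where
  toFun x := dotp x u
  map_add' x y := by simp [dotp, add_mul, Finset.sum_add_distrib]
  map_smul' c x := by simp [dotp, Finset.mul_sum, mul_assoc]

@[simp] theorem dotL_apply (u x : Q → ℚ) : dotL u x = dotp x u := rfl

/-- pairing with a fixed left argument, as a linear map. -/
def dotR (x : Q → ℚ) : (Q → ℚ) →ₗ[ℚ] ℚ where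
  toFun u := dotp x u
  map_add' u v := by simp [dotp, mul_add, Finset.sum_add_distrib]
  map_smul' c u := by
    simp only [dotp, smul_eq_mul, RingHom.id_apply, Finset.mul_sum]
    apply Finset.sum_congr rfl
    intros
    simp only [Pi.smul_apply, smul_eq_mul]
    ring

@[simp] theorem dotR_apply (x u : Q → ℚ) : dotR x u = dotp x u := rfl

theorem dotp_self_eq_zero {x : Q → ℚ} (h : dotp x x = 0) : x = 0 := by
  have hall := (Finset.sum_eq_zero_iff_of_nonneg
    (fun s _ => mul_self_nonneg (x s))).mp h
  funext s
  exact mul_self_eq_zero.mp (hall s (Finset.mem_univ s))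

theorem dotp_rho (δ : Q → α → Q) (R : Finset Q) (y : List α) (g : Q → ℚ) :
    dotp (rho δ R y) g = ∑ p ∈ R, g (run δ p y) :=
  sum_fib_mul δ R y g

end Stmt13

namespace Stmt13
set_option linter.unusedSectionVars false
set_option maxHeartbeats 1000000

open Finset Module

variable {Q α : Type*} [Fintype Q] [DecidableEq Q]

theorem escape (δ : Q → α → Q) {W : Finset (List α)} {R : Finset Q} {M : ℕ}
    (hW : IsIndependent δ W R)
    (hMub : ∀ K ⊆ R, Reducible δ K → K.card ≤ M)
    (hMmem : ∃ K ⊆ R, Reducible δ K ∧ K.card = M)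
    {v : List α} {c : Q}
    (h1 : 1 ≤ (fib δ R v c).card) (hlt : (fib δ R v c).card < M) :
    ∃ y w, w ∈ W ∧
      ((y.length : ℝ) ≤ (Fintype.card Q : ℝ) + 1 - (W.card : ℝ) / ((fib δ R v c).card : ℝ)) ∧
      (fib δ R v c).card + 1 ≤ (fib δ R (y ++ (w ++ v)) c).card := by
  classical
  set F := fib δ R v c with hFdef
  set m := F.card with hmdef
  set k := W.card with hkdef
  set n := Fintype.card Q with hndef
  have hFR : F ⊆ R := Finset.filter_subset _ _
  have hknat : R.card = k := (hW.1).symm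
  have hm1 : 1 ≤ m := h1
  have hk1 : 1 ≤ k := le_trans hm1 (hknat ▸ Finset.card_le_card hFR)
  have hkn : k ≤ n := hknat ▸ Finset.card_le_univ R
  have hm0R : (0:ℝ) < (m:ℝ) := by exact_mod_cast hm1
  -- counting dichotomy
  have hdich : ∀ y : List α, (∃ w ∈ W, (R.filter fun p => run δ p (y ++ w) ∈ F).card ≠ m) →
      ∃ w ∈ W, m + 1 ≤ (R.filter fun p => run δ p (y ++ w) ∈ F).card := by
    rintro y ⟨w₁, hw₁, hne⟩
    by_contra hcon
    push_neg at hcon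
    have hle : ∀ w ∈ W, (R.filter fun p => run δ p (y ++ w) ∈ F).card ≤ m := by
      intro w hw; have := hcon w hw; omega
    have hlt2 : ∑ w ∈ W, (R.filter fun p => run δ p (y ++ w) ∈ F).card < ∑ _w ∈ W, m :=
      Finset.sum_lt_sum hle ⟨w₁, hw₁, lt_of_le_of_ne (hle w₁ hw₁) hne⟩
    rw [sum1 δ hW y v c, Finset.sum_const, smul_eq_mul] at hlt2
    have hmm : (fib δ R v c).card = m := rfl
    rw [hmm] at hlt2
    omega
  -- final packaging
  have hfinish : ∀ y : List α,
      ((y.length : ℝ) ≤ (n : ℝ) + 1 - (k : ℝ) / (m : ℝ)) →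
      (∃ w ∈ W, (R.filter fun p => run δ p (y ++ w) ∈ F).card ≠ m) →
      ∃ y' w, w ∈ W ∧
        ((y'.length : ℝ) ≤ (n : ℝ) + 1 - (k : ℝ) / (m : ℝ)) ∧
        m + 1 ≤ (fib δ R (y' ++ (w ++ v)) c).card := by
    intro y hlen hne
    obtain ⟨w, hw, hcnt⟩ := hdich y hne
    refine ⟨y, w, hw, hlen, ?_⟩
    rw [transl δ hW hw y v c]
    exact hcnt
  -- K-trick : existence of a non-plateau word
  obtain ⟨K, hKR, ⟨Z, qK, hZ⟩, hKcard⟩ := hMmem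
  have hrunZ : ∀ p ∈ K, run δ p Z = qK := by
    intro p hp
    have h := Finset.mem_image_of_mem (fun p => run δ p Z) hp
    rw [hZ] at h
    exact Finset.mem_singleton.mp h
  have hqKw : ∃ w ∈ W, run δ qK w ∈ F := by
    have hf := fact1 δ hW qK hFR
    have hpos : 0 < (W.filter fun w => run δ qK w ∈ F).card := by omega
    obtain ⟨w, hw⟩ := Finset.card_pos.mp hpos
    exact ⟨w, Finset.mem_of_mem_filter w hw, (Finset.mem_filter.mp hw).2⟩
  obtain ⟨w₀, hw₀, hw₀F⟩ := hqKw
  have hbig : M ≤ (R.filter fun p => run δ p (Z ++ w₀) ∈ F).card := by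
    rw [← hKcard]
    apply Finset.card_le_card
    intro p hp
    refine Finset.mem_filter.mpr ⟨hKR hp, ?_⟩
    rw [run_append, hrunZ p hp]
    exact hw₀F
  have hZne : ∃ w ∈ W, (R.filter fun p => run δ p (Z ++ w) ∈ F).card ≠ m :=
    ⟨w₀, hw₀, by omega⟩
  -- case : the empty steering word already works
  by_cases hε : ∃ w ∈ W, (R.filter fun p => run δ p ([] ++ w) ∈ F).card ≠ m
  · refine hfinish [] ?_ hε
    have hdm : (k:ℝ)/(m:ℝ) ≤ (n:ℝ) := by
      have h2 : (k:ℝ)/(m:ℝ) ≤ (k:ℝ) := by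
        apply div_le_self (by positivity)
        exact_mod_cast hm1
      have h3 : (k:ℝ) ≤ (n:ℝ) := by exact_mod_cast hkn
      linarith
    simp only [List.length_nil, Nat.cast_zero]
    linarith
  -- main case : ε is balanced; linear algebra
  push_neg at hε
  have hplat : ∀ w ∈ W, (R.filter fun p => run δ p w ∈ F).card = m := by
    intro w hw
    have := hε w hw
    simpa using this
  -- vectors
  set vw : List α → Q → ℚ := fun w s => if run δ s w ∈ F then (1:ℚ) else 0 with hvwdef
  set uw : List α → Q → ℚ := fun w s => vw w s - (m : ℚ)/(k : ℚ) with huwdef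
  set T : Submodule ℚ (Q → ℚ) := ⨅ w ∈ W, LinearMap.ker (dotL (uw w)) with hTdef
  have hmemT : ∀ x, x ∈ T ↔ ∀ w ∈ W, dotp x (uw w) = 0 := by
    intro x
    rw [hTdef]
    simp only [Submodule.mem_iInf, LinearMap.mem_ker, dotL_apply]
  -- pairing computations
  have hpairv : ∀ (y : List α) (w : List α), dotp (rho δ R y) (vw w)
      = ((R.filter fun p => run δ p (y ++ w) ∈ F).card : ℚ) := by
    intro y w
    rw [dotp_rho, cast_card_filter]
    apply Finset.sum_congr rfl
    intro p _
    rw [run_append]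
  have hpair1 : ∀ y : List α, dotp (rho δ R y) (fun _ => (1:ℚ)) = (k : ℚ) := by
    intro y
    rw [dotp_rho]
    rw [Finset.sum_const, nsmul_eq_mul, mul_one, hknat]
  have hpairu : ∀ (y : List α) (w : List α), dotp (rho δ R y) (uw w)
      = ((R.filter fun p => run δ p (y ++ w) ∈ F).card : ℚ) - (m : ℚ) := by
    intro y w
    have hsplit : dotp (rho δ R y) (uw w)
        = dotp (rho δ R y) (vw w) - ((m:ℚ)/(k:ℚ)) * dotp (rho δ R y) (fun _ => (1:ℚ)) := by
      simp only [dotp, huwdef, mul_sub]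
      rw [Finset.sum_sub_distrib, Finset.mul_sum]
      congr 1
      apply Finset.sum_congr rfl
      intros; ring
    rw [hsplit, hpairv, hpair1]
    have hkne : (k:ℚ) ≠ 0 := by positivity
    field_simp
  have hrhoT : ∀ y : List α, rho δ R y ∈ T ↔
      ∀ w ∈ W, (R.filter fun p => run δ p (y ++ w) ∈ F).card = m := by
    intro y
    rw [hmemT]
    constructor
    · intro h w hw
      have := h w hw
      rw [hpairu] at this
      have : ((R.filter fun p => run δ p (y ++ w) ∈ F).card : ℚ) = (m:ℚ) := by linarith
      exact_mod_cast this
    · intro h w hw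
      rw [hpairu, h w hw]
      ring
  have hy₀T : rho δ R Z ∉ T := by
    rw [hrhoT]
    push_neg
    obtain ⟨w, hw, hne⟩ := hZne
    exact ⟨w, hw, hne⟩
  have h0 : rho δ R [] ≠ 0 := by
    obtain ⟨p₀, hp₀⟩ := Finset.card_pos.mp (lt_of_lt_of_le Nat.zero_lt_one hm1)
    have hp₀R : p₀ ∈ R := hFR hp₀
    intro hzero
    have h01 : rho δ R [] p₀ = 0 := by rw [hzero]; rfl
    have h02 : fib δ R [] p₀ = {p₀} := by
      unfold fib
      have : (R.filter fun p => run δ p [] = p₀) = R.filter fun p => p = p₀ := rfl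
      rw [this, Finset.filter_eq', if_pos hp₀R]
    rw [rho, h02] at h01
    simp at h01
  -- rank bound via covering
  set vwSet : Set (Q → ℚ) := vw '' (W : Set (List α)) with hvwSet
  obtain ⟨tset, htsub, htspan, htind⟩ := exists_linearIndependent ℚ vwSet
  have htfin : tset.Finite :=
    Set.Finite.subset (Set.Finite.image _ (W.finite_toSet)) htsub
  haveI := htfin.fintype
  have hrank : tset.toFinset.card = finrank ℚ (Submodule.span ℚ vwSet) := by
    rw [← htspan]
    exact (finrank_span_set_eq_card htind).symm
  have hcover : ∀ p ∈ R, ∃ u ∈ tset, u p ≠ 0 := by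
    intro p hp
    by_contra hno
    push_neg at hno
    have hsmem : (∑ w ∈ W, vw w) ∈ Submodule.span ℚ tset := by
      rw [htspan]
      exact Submodule.sum_mem _ (fun w hw => Submodule.subset_span ⟨w, hw, rfl⟩)
    have hker : Submodule.span ℚ tset ≤ LinearMap.ker (LinearMap.proj (R := ℚ) (φ := fun _ : Q => ℚ) p) := by
      apply Submodule.span_le.mpr
      intro u hu
      rw [SetLike.mem_coe, LinearMap.mem_ker]
      exact hno u hu
    have hzero : (∑ w ∈ W, vw w) p = 0 := hker hsmem
    have hval : (∑ w ∈ W, vw w) p = ((W.filter fun w => run δ p w ∈ F).card : ℚ) := by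
      rw [Finset.sum_apply, cast_card_filter]
    rw [hval, fact1 δ hW p hFR] at hzero
    have : (0:ℚ) < (m:ℚ) := by exact_mod_cast hm1
    rw [hzero] at this
    exact lt_irrefl 0 this
  have hRsub : R ⊆ htfin.toFinset.biUnion (fun u => R.filter fun s' => u s' ≠ 0) := by
    intro p hp
    obtain ⟨u, hu, hup⟩ := hcover p hp
    exact Finset.mem_biUnion.mpr ⟨u, htfin.mem_toFinset.mpr hu, Finset.mem_filter.mpr ⟨hp, hup⟩⟩
  have hcard2 : ∀ u ∈ htfin.toFinset, (R.filter fun s' => u s' ≠ 0).card = m := by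
    intro u hu
    have hu' := htsub (htfin.mem_toFinset.mp hu)
    obtain ⟨w, hwW, rfl⟩ := hu'
    have heq : (R.filter fun s' => vw w s' ≠ 0) = R.filter fun s' => run δ s' w ∈ F := by
      apply Finset.filter_congr
      intro s' _
      by_cases h : run δ s' w ∈ F <;> simp [hvwdef, h]
    rw [heq]
    exact hplat w (Finset.mem_coe.mp hwW)
  have hcovcard : k ≤ htfin.toFinset.card * m := by
    calc k = R.card := hknat.symm
      _ ≤ (htfin.toFinset.biUnion (fun u => R.filter fun s' => u s' ≠ 0)).card :=
          Finset.card_le_card hRsub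
      _ ≤ ∑ u ∈ htfin.toFinset, (R.filter fun s' => u s' ≠ 0).card := Finset.card_biUnion_le
      _ = ∑ _u ∈ htfin.toFinset, m := Finset.sum_congr rfl hcard2
      _ = htfin.toFinset.card * m := by rw [Finset.sum_const, smul_eq_mul]
  have htoF : htfin.toFinset.card = tset.toFinset.card := by
    congr 1
    ext u
    rw [Set.Finite.mem_toFinset, Set.mem_toFinset]
  have hcov : k ≤ finrank ℚ (Submodule.span ℚ vwSet) * m := by
    rw [← hrank, ← htoF]; exact hcovcard
  -- disjointness and dimension bounds
  set U : Submodule ℚ (Q → ℚ) := Submodule.span ℚ (uw '' (W : Set (List α))) with hUdef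
  have hdisj : T ⊓ U = ⊥ := by
    rw [Submodule.eq_bot_iff]
    rintro x ⟨hxT, hxU⟩
    have hker : Submodule.span ℚ (uw '' (W : Set (List α))) ≤ LinearMap.ker (dotR x) := by
      apply Submodule.span_le.mpr
      rintro u ⟨w, hw, rfl⟩
      rw [SetLike.mem_coe, LinearMap.mem_ker, dotR_apply]
      exact (hmemT x).mp hxT w (Finset.mem_coe.mp hw)
    have hxker : x ∈ LinearMap.ker (dotR x) := hker hxU
    rw [LinearMap.mem_ker, dotR_apply] at hxker
    exact dotp_self_eq_zero hxker
  have hone : (fun _ : Q => (1:ℚ)) ≠ 0 := by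
    obtain ⟨p₀, hp₀⟩ := Finset.card_pos.mp (lt_of_lt_of_le Nat.zero_lt_one hm1)
    intro h
    exact one_ne_zero (congrFun h p₀)
  have hTU : finrank ℚ T + finrank ℚ U ≤ n := by
    have heq := Submodule.finrank_sup_add_finrank_inf_eq T U
    rw [hdisj, finrank_bot] at heq
    have h2 : finrank ℚ ↥(T ⊔ U) ≤ finrank ℚ (Q → ℚ) := Submodule.finrank_le _
    rw [Module.finrank_fintype_fun_eq_card] at h2
    omega
  have hUV : finrank ℚ (Submodule.span ℚ vwSet) ≤ finrank ℚ U + 1 := by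
    set S1 : Submodule ℚ (Q → ℚ) := Submodule.span ℚ {fun _ => (1:ℚ)} with hS1
    have hle : Submodule.span ℚ vwSet ≤ U ⊔ S1 := by
      apply Submodule.span_le.mpr
      rintro x ⟨w, hw, rfl⟩
      have hsplit : vw w = uw w + ((m:ℚ)/(k:ℚ)) • (fun _ => (1:ℚ)) := by
        funext s
        simp only [huwdef, Pi.add_apply, Pi.smul_apply, smul_eq_mul, mul_one]
        ring
      rw [SetLike.mem_coe, hsplit]
      exact Submodule.add_mem _
        (Submodule.mem_sup_left (Submodule.subset_span ⟨w, hw, rfl⟩))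
        (Submodule.mem_sup_right (Submodule.smul_mem _ _ (Submodule.mem_span_singleton_self _)))
    have h2 := Submodule.finrank_mono hle
    have h3 := Submodule.finrank_sup_add_finrank_inf_eq U S1
    have h4 : finrank ℚ S1 = 1 := finrank_span_singleton hone
    omega
  -- chain
  obtain ⟨y, hylen, hyT⟩ := chain_escape (rho δ R) (transL δ) (rho_concat δ R) T h0 hy₀T
  have hyne : ∃ w ∈ W, (R.filter fun p => run δ p (y ++ w) ∈ F).card ≠ m := by
    by_contra hcon
    push_neg at hcon
    exact hyT ((hrhoT y).mpr hcon)
  refine hfinish y ?_ hyne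
  -- length arithmetic
  have hc1 : (k:ℝ) ≤ (finrank ℚ (Submodule.span ℚ vwSet) : ℝ) * (m:ℝ) := by exact_mod_cast hcov
  have hc2 : (finrank ℚ (Submodule.span ℚ vwSet) : ℝ) ≤ (finrank ℚ U : ℝ) + 1 := by
    exact_mod_cast hUV
  have hc3 : (finrank ℚ T : ℝ) + (finrank ℚ U : ℝ) ≤ (n:ℝ) := by exact_mod_cast hTU
  have hc4 : (y.length : ℝ) ≤ (finrank ℚ T : ℝ) := by exact_mod_cast hylen
  have hc5 : (k:ℝ)/(m:ℝ) ≤ (finrank ℚ (Submodule.span ℚ vwSet) : ℝ) :=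
    (div_le_iff₀ hm0R).mpr hc1
  linarith

end Stmt13

namespace Stmt13
set_option linter.unusedSectionVars false
set_option maxHeartbeats 1000000

open Finset Module

variable {Q α : Type*} [Fintype Q] [DecidableEq Q]

/-- length budget for growing a fiber up to size `m`. -/
noncomputable def gsum (L n k m : ℕ) : ℝ :=
  ∑ l ∈ Finset.Ico 1 m, ((L : ℝ) + (n : ℝ) + 1 - (k : ℝ) / (l : ℝ))

theorem gsum_term_nonneg {L n k l : ℕ} (hkn : k ≤ n) (hl : 1 ≤ l) :
    (0:ℝ) ≤ (L : ℝ) + (n : ℝ) + 1 - (k : ℝ)/(l : ℝ)  := by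
  have h1 : (k:ℝ)/(l:ℝ) ≤ (k:ℝ) := div_le_self (by positivity) (by exact_mod_cast hl)
  have h2 : (k:ℝ) ≤ (n:ℝ) := by exact_mod_cast hkn
  linarith

theorem gsum_nonneg {L n k m : ℕ} (hkn : k ≤ n) : 0 ≤ gsum L n k m :=
  Finset.sum_nonneg fun l hl => gsum_term_nonneg hkn (Finset.mem_Ico.mp hl).1

theorem gsum_gap {L n k : ℕ} (hkn : k ≤ n) {m m' : ℕ} (h1 : 1 ≤ m) (h : m < m') :
    (L:ℝ) + (n:ℝ) + 1 - (k:ℝ)/(m:ℝ) ≤ gsum L n k m' - gsum L n k m := by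
  have hsplit : gsum L n k m + ∑ l ∈ Finset.Ico m m', ((L : ℝ) + (n : ℝ) + 1 - (k : ℝ)/(l : ℝ))
      = gsum L n k m' := by
    unfold gsum
    rw [Finset.sum_Ico_consecutive _ h1 (le_of_lt h)]
  have hterm : (L:ℝ) + (n:ℝ) + 1 - (k:ℝ)/(m:ℝ)
      ≤ ∑ l ∈ Finset.Ico m m', ((L : ℝ) + (n : ℝ) + 1 - (k : ℝ)/(l : ℝ)) := by
    apply Finset.single_le_sum (f := fun l : ℕ => (L : ℝ) + (n : ℝ) + 1 - (k : ℝ)/(l : ℝ))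
      (fun l hl => gsum_term_nonneg hkn (le_trans h1 (Finset.mem_Ico.mp hl).1))
      (Finset.mem_Ico.mpr ⟨le_refl m, h⟩)
  linarith

theorem harmonic_ge_log : ∀ m : ℕ, 1 ≤ m →
    Real.log (m : ℝ) ≤ ∑ l ∈ Finset.Ico 1 m, 1/(l:ℝ) := by
  intro m
  induction m with
  | zero => omega
  | succ m ih =>
      intro _
      by_cases hm : m = 0
      · subst hm; simp
      · have hm1 : 1 ≤ m := Nat.one_le_iff_ne_zero.mpr hm
        have hih := ih hm1
        rw [Finset.sum_Ico_succ_top hm1]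
        have hm0 : (0:ℝ) < (m:ℝ) := by exact_mod_cast hm1
        have h1 : Real.log ((m:ℝ)+1) - Real.log (m:ℝ) = Real.log (((m:ℝ)+1)/(m:ℝ)) :=
          (Real.log_div (by positivity) (ne_of_gt hm0)).symm
        have h2 : Real.log (((m:ℝ)+1)/(m:ℝ)) ≤ ((m:ℝ)+1)/(m:ℝ) - 1 :=
          Real.log_le_sub_one_of_pos (by positivity)
        have h3 : ((m:ℝ)+1)/(m:ℝ) - 1 = 1/(m:ℝ) := by field_simp; ring
        have : Real.log ((m:ℝ)+1) ≤ Real.log (m:ℝ) + 1/(m:ℝ) := by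
          rw [h3] at h2; linarith
        push_cast
        linarith

theorem gsum_le {L n k M : ℕ} (hM : 1 ≤ M) :
    gsum L n k M ≤ ((M:ℝ) - 1) * ((L:ℝ) + (n:ℝ) + 1) - (k:ℝ) * Real.log (M:ℝ) := by
  unfold gsum
  rw [Finset.sum_sub_distrib]
  have h1 : ∑ _l ∈ Finset.Ico 1 M, ((L:ℝ) + (n:ℝ) + 1) = ((M:ℝ) - 1) * ((L:ℝ)+(n:ℝ)+1) := by
    rw [Finset.sum_const, Nat.card_Ico, nsmul_eq_mul]
    congr 1
    push_cast [Nat.cast_sub hM]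
    ring
  have h2 : ∑ l ∈ Finset.Ico 1 M, (k:ℝ)/(l:ℝ) = (k:ℝ) * ∑ l ∈ Finset.Ico 1 M, 1/(l:ℝ) := by
    rw [Finset.mul_sum]
    apply Finset.sum_congr rfl
    intros; ring
  have h3 := harmonic_ge_log M hM
  have h4 : (k:ℝ) * Real.log (M:ℝ) ≤ (k:ℝ) * ∑ l ∈ Finset.Ico 1 M, 1/(l:ℝ) :=
    mul_le_mul_of_nonneg_left h3 (by positivity)
  rw [h1, h2]
  linarith

/-- one growth step. -/
theorem step (δ : Q → α → Q) {W : Finset (List α)} {R : Finset Q} {M L : ℕ}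
    (hW : IsIndependent δ W R)
    (hMub : ∀ K ⊆ R, Reducible δ K → K.card ≤ M)
    (hMmem : ∃ K ⊆ R, Reducible δ K ∧ K.card = M)
    (hLub : ∀ w ∈ W, w.length ≤ L)
    {v : List α} {c : Q}
    (h1 : 1 ≤ (fib δ R v c).card) (hlt : (fib δ R v c).card < M) :
    ∃ v', ((v'.length:ℝ) ≤ (v.length:ℝ) +
        ((L:ℝ) + (Fintype.card Q : ℝ) + 1 - (W.card:ℝ)/((fib δ R v c).card:ℝ)))
      ∧ (fib δ R v c).card + 1 ≤ (fib δ R v' c).card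
      ∧ (∀ d, (fib δ R v d).card = M → (fib δ R v' d).card = M)
      ∧ (((∀ p, run δ p v ∈ R) ∨ v = []) → (∀ p, run δ p v' ∈ R)) := by
  obtain ⟨y, w, hw, hylen, hcnt⟩ := escape δ hW hMub hMmem h1 hlt
  refine ⟨y ++ (w ++ v), ?_, hcnt, ?_, ?_⟩
  · have hlw : (w.length : ℝ) ≤ (L : ℝ) := by exact_mod_cast hLub w hw
    have : ((y ++ (w ++ v)).length : ℝ) = (y.length : ℝ) + (w.length : ℝ) + (v.length : ℝ) := by
      simp [List.length_append]
      push_cast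
      ring
    rw [this]
    linarith
  · intro d hd
    exact pin δ hW hMub hd y hw
  · rintro (hv | rfl)
    · intro p
      rw [run_append, run_append]
      exact hv _
    · intro p
      have : y ++ (w ++ ([] : List α)) = y ++ w := by simp
      rw [this, run_append]
      exact mem_R_of_W δ hW hw _

/-- growing one fiber all the way to `M`. -/
theorem grow (δ : Q → α → Q) {W : Finset (List α)} {R : Finset Q} {M L : ℕ}
    (hW : IsIndependent δ W R)
    (hMub : ∀ K ⊆ R, Reducible δ K → K.card ≤ M)
    (hMmem : ∃ K ⊆ R, Reducible δ K ∧ K.card = M)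
    (hLub : ∀ w ∈ W, w.length ≤ L)
    (hkn : W.card ≤ Fintype.card Q) :
    ∀ (j : ℕ) (v : List α) (c : Q), 1 ≤ (fib δ R v c).card → M ≤ (fib δ R v c).card + j →
    ∃ v', (fib δ R v' c).card = M ∧
      (∀ d, (fib δ R v d).card = M → (fib δ R v' d).card = M) ∧
      ((v'.length : ℝ) ≤ (v.length : ℝ) +
        (gsum L (Fintype.card Q) W.card M - gsum L (Fintype.card Q) W.card (fib δ R v c).card)) ∧
      (((∀ p, run δ p v ∈ R) ∨ v = []) → ((∀ p, run δ p v' ∈ R) ∨ v' = v)) := by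
  intro j
  induction j with
  | zero =>
      intro v c hc1 hcM
      have hceq : (fib δ R v c).card = M :=
        le_antisymm (cap δ R hMub v c) (by omega)
      refine ⟨v, hceq, fun d hd => hd, ?_, fun _ => Or.inr rfl⟩
      rw [hceq, sub_self, add_zero]
  | succ j ih =>
      intro v c hc1 hcM
      by_cases hceq : (fib δ R v c).card = M
      · refine ⟨v, hceq, fun d hd => hd, ?_, fun _ => Or.inr rfl⟩
        rw [hceq, sub_self, add_zero]
      · have hlt : (fib δ R v c).card < M := lt_of_le_of_ne (cap δ R hMub v c) hceq
        obtain ⟨v₁, hlen₁, hgrow₁, hpres₁, hprop₁⟩ := step δ hW hMub hMmem hLub hc1 hlt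
        have hc1' : 1 ≤ (fib δ R v₁ c).card := by omega
        have hcM' : M ≤ (fib δ R v₁ c).card + j := by omega
        obtain ⟨v', hM', hpres', hlen', hprop'⟩ := ih v₁ c hc1' hcM'
        refine ⟨v', hM', fun d hd => hpres' d (hpres₁ d hd), ?_, ?_⟩
        · have hgap := gsum_gap (L := L) hkn hc1 (lt_of_lt_of_le (Nat.lt_succ_self _) hgrow₁)
          have hmono2 : gsum L (Fintype.card Q) W.card M
              - gsum L (Fintype.card Q) W.card (fib δ R v₁ c).card
              + (gsum L (Fintype.card Q) W.card (fib δ R v₁ c).card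
                - gsum L (Fintype.card Q) W.card (fib δ R v c).card)
              = gsum L (Fintype.card Q) W.card M
              - gsum L (Fintype.card Q) W.card (fib δ R v c).card := by ring
          linarith
        · intro hpv
          have hp₁ : ∀ p, run δ p v₁ ∈ R := hprop₁ hpv
          rcases hprop' (Or.inl hp₁) with h | h
          · exact Or.inl h
          · exact Or.inl (h ▸ hp₁)

/-- the main induction : building `i` disjoint complete fibers. -/
theorem phases (δ : Q → α → Q) {W : Finset (List α)} {R : Finset Q} {M L t : ℕ}
    (hW : IsIndependent δ W R)
    (hMub : ∀ K ⊆ R, Reducible δ K → K.card ≤ M)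
    (hMmem : ∃ K ⊆ R, Reducible δ K ∧ K.card = M)
    (hLub : ∀ w ∈ W, w.length ≤ L)
    (hkn : W.card ≤ Fintype.card Q) (hM1 : 1 ≤ M)
    (htim : ∀ v : List α, t ≤ (R.image fun p => run δ p v).card) :
    ∀ i, i ≤ t → ∃ (v : List α) (C : Finset Q), C ⊆ R ∧ C.card = i ∧
      (∀ c ∈ C, (fib δ R v c).card = M) ∧
      ((v.length : ℝ) ≤ (i : ℝ) * gsum L (Fintype.card Q) W.card M) ∧
      ((∀ p, run δ p v ∈ R) ∨ v = []) := by
  intro i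
  induction i with
  | zero =>
      intro _
      exact ⟨[], ∅, Finset.empty_subset _, Finset.card_empty, by simp, by simp, Or.inr rfl⟩
  | succ i ih =>
      intro hit
      obtain ⟨v, C, hCR, hCcard, hCfib, hlen, hprop⟩ := ih (by omega)
      set Spts := R.image (fun p => run δ p v) with hSpts
      have hCS : C ⊆ Spts := by
        intro c hc
        have hpos : 0 < (fib δ R v c).card := by rw [hCfib c hc]; omega
        obtain ⟨p, hp⟩ := Finset.card_pos.mp hpos
        have hp' := Finset.mem_filter.mp hp
        exact Finset.mem_image.mpr ⟨p, hp'.1, hp'.2⟩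
      have hnotsub : ¬ Spts ⊆ C := by
        intro hsub
        have h1 : Spts.card ≤ i := by
          rw [← hCcard]
          exact Finset.card_le_card hsub
        have h2 : t ≤ Spts.card := by
          rw [hSpts]
          exact htim v
        omega
      obtain ⟨c, hcS, hcC⟩ := Finset.not_subset.mp hnotsub
      obtain ⟨p, hpR, hpc⟩ := Finset.mem_image.mp hcS
      have hcR : c ∈ R := by
        rcases hprop with h | h
        · rw [← hpc]; exact h p
        · rw [← hpc, h]; exact hpR
      have hfib1 : 1 ≤ (fib δ R v c).card := by
        apply Finset.card_pos.mpr
        exact ⟨p, Finset.mem_filter.mpr ⟨hpR, hpc⟩⟩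
      obtain ⟨v', hM', hpres', hlen', hprop'⟩ :=
        grow δ hW hMub hMmem hLub hkn M v c hfib1 (Nat.le_add_left M _)
      refine ⟨v', insert c C, ?_, ?_, ?_, ?_, ?_⟩
      · exact Finset.insert_subset hcR hCR
      · rw [Finset.card_insert_of_notMem hcC, hCcard]
      · intro c' hc'
        rcases Finset.mem_insert.mp hc' with rfl | hc'
        · exact hM'
        · exact hpres' c' (hCfib c' hc')
      · have hg0 : 0 ≤ gsum L (Fintype.card Q) W.card (fib δ R v c).card := gsum_nonneg hkn
        have hgM : 0 ≤ gsum L (Fintype.card Q) W.card M := gsum_nonneg hkn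
        push_cast
        linarith
      · rcases hprop' hprop with h | h
        · exact Or.inl h
        · rw [h]; exact hprop

end Stmt13

set_option maxHeartbeats 1000000 in
/-- For every `1 ≤ t ≤ ⌈k/M⌉` there exist `t` pairwise distinct states
`q_1, …, q_t ∈ R` and a word `v` with `Card({q_i} v^{-1} ∩ R) = M` for each `i`
and `|v| ≤ t(M − 1)(L_W + n + 1) − t·k·ln M`. -/
theorem stmt_13 {Q A : Type*} [Fintype Q] [DecidableEq Q] [Fintype A]
    (δ : Q → A → Q) (W : Finset (List A)) (R : Finset Q) (k : ℕ)
    (hW : IsIndependent δ W R) (hk : W.card = k)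
    (L : ℕ) (hLub : ∀ w ∈ W, w.length ≤ L) (hLmem : ∃ w ∈ W, w.length = L)
    (M : ℕ)
    (hMub : ∀ K ⊆ R, Reducible δ K → K.card ≤ M)
    (hMmem : ∃ K ⊆ R, Reducible δ K ∧ K.card = M)
    (t : ℕ) (ht1 : 1 ≤ t) (ht2 : (t : ℚ) ≤ ⌈(k : ℚ) / (M : ℚ)⌉) :
    ∃ q : Fin t → Q, Function.Injective q ∧ (∀ i, q i ∈ R) ∧
      ∃ v : List A,
        (∀ i, (R.filter (fun p => run δ p v = q i)).card = M) ∧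
        (v.length : ℝ) ≤ (t : ℝ) * ((M : ℝ) - 1) * ((L : ℝ) + (Fintype.card Q : ℝ) + 1)
          - (t : ℝ) * (k : ℝ) * Real.log (M : ℝ) := by
  classical
  subst hk
  have hM1 : 1 ≤ M := by
    obtain ⟨K0, hK0R, ⟨v0, q0, himg⟩, hK0card⟩ := hMmem
    have hne : K0.Nonempty := by
      by_contra h
      rw [Finset.not_nonempty_iff_eq_empty] at h
      subst h
      simp only [Finset.image_empty] at himg
      exact Finset.singleton_ne_empty q0 himg.symm
    rw [← hK0card]
    exact Finset.card_pos.mpr hne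
  have hkR : R.card = W.card := hW.1.symm
  have hkn : W.card ≤ Fintype.card Q := by
    rw [← hkR]
    exact Finset.card_le_univ R
  have hMposQ : (0:ℚ) < (M:ℚ) := by exact_mod_cast hM1
  have htim : ∀ v : List A, t ≤ (R.image fun p => run δ p v).card := by
    intro v
    have hsum : R.card
        = ∑ b ∈ R.image (fun p => run δ p v), (R.filter fun p => run δ p v = b).card :=
      Finset.card_eq_sum_card_fiberwise (fun p hp => Finset.mem_image_of_mem _ hp)
    have hble : R.card ≤ (R.image fun p => run δ p v).card * M := by
      rw [hsum]
      calc ∑ b ∈ R.image (fun p => run δ p v), (R.filter fun p => run δ p v = b).card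
          ≤ ∑ _b ∈ R.image (fun p => run δ p v), M :=
            Finset.sum_le_sum (fun b _ => Stmt13.cap δ R hMub v b)
        _ = (R.image fun p => run δ p v).card * M := by rw [Finset.sum_const, smul_eq_mul]
    rw [hkR] at hble
    have h1 : ((W.card:ℚ)/(M:ℚ)) ≤ ((R.image fun p => run δ p v).card : ℚ) := by
      rw [div_le_iff₀ hMposQ]
      exact_mod_cast hble
    have h2 : ((⌈(W.card:ℚ)/(M:ℚ)⌉ : ℤ) : ℚ) ≤ ((R.image fun p => run δ p v).card : ℚ) := by
      exact_mod_cast Int.ceil_le.mpr (by exact_mod_cast h1 :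
        ((W.card:ℚ)/(M:ℚ)) ≤ (((R.image fun p => run δ p v).card : ℤ) : ℚ))
    have h3 : (t:ℚ) ≤ ((R.image fun p => run δ p v).card : ℚ) := le_trans ht2 h2
    exact_mod_cast h3
  obtain ⟨v, C, hCR, hCcard, hCfib, hlen, _hprop⟩ :=
    Stmt13.phases δ hW hMub hMmem hLub hkn hM1 htim t le_rfl
  have hQC : Fintype.card ↥C = t := by rw [Fintype.card_coe, hCcard]
  let e := Fintype.equivFinOfCardEq hQC
  refine ⟨fun i => ((e.symm i : C) : Q), ?_, ?_, v, ?_, ?_⟩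
  · intro i j hij
    exact e.symm.injective (Subtype.ext hij)
  · intro i
    exact hCR (e.symm i).2
  · intro i
    exact hCfib _ (e.symm i).2
  · have hgle := Stmt13.gsum_le (L := L) (n := Fintype.card Q) (k := W.card) hM1
    have ht0 : (0:ℝ) ≤ (t:ℝ) := by positivity
    calc (v.length : ℝ)
        ≤ (t:ℝ) * Stmt13.gsum L (Fintype.card Q) W.card M := hlen
      _ ≤ (t:ℝ) * (((M:ℝ) - 1) * ((L:ℝ) + (Fintype.card Q : ℝ) + 1)
            - (W.card:ℝ) * Real.log (M:ℝ)) := mul_le_mul_of_nonneg_left hgle ht0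
      _ = (t : ℝ) * ((M : ℝ) - 1) * ((L : ℝ) + (Fintype.card Q : ℝ) + 1)
            - (t : ℝ) * (W.card : ℝ) * Real.log (M : ℝ) := by ring
end
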